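/- arXiv:1404.6786 — 11 statements merged into one kernel-verified Lean document; each statement's English description precedes it below -/
import Mathlib

section
/- Let M_s be an exact median of the seller's value v_s. Then the expected welfare of the fixed-price mechanism with trade price M_s (the Median Mechanism) is at least half the optimal welfare: E[W_{M_s}] ≥ (1/2)·E[max(v_s, v_b)]. -/
open MeasureTheory ProbabilityTheory

/-- The Median Mechanism for bilateral trade is a 2-approximation to the optimal
expected welfare: posting the seller's median `Ms` as trade price yields expected
welfare at least half of `E[max(v_s, v_b)]`. -/
theorem median_mechanism_two_approximation
    {Ω : Type*} [MeasurableSpace Ω] (μ : Measure Ω) [IsProbabilityMeasure μ]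
    (vs vb : Ω → ℝ) (Ms : ℝ)
    (hmeas_s : Measurable vs) (hmeas_b : Measurable vb)
    (hindep : IndepFun vs vb μ)
    (hs_nonneg : ∀ ω, 0 ≤ vs ω) (hb_nonneg : ∀ ω, 0 ≤ vb ω)
    (hs_int : Integrable vs μ) (hb_int : Integrable vb μ)
    (hmed_le : μ {ω | vs ω ≤ Ms} = 1 / 2)
    (hmed_ge : μ {ω | Ms ≤ vs ω} = 1 / 2) :
    (1 / 2) * ∫ ω, max (vs ω) (vb ω) ∂μ
      ≤ ∫ ω, (if vs ω ≤ Ms ∧ Ms ≤ vb ω then vb ω else vs ω) ∂μ := by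
  classical
  -- the median of a nonnegative random variable is nonnegative
  have hMs : 0 ≤ Ms := by
    by_contra h
    push_neg at h
    have huniv : {ω | Ms ≤ vs ω} = Set.univ := by
      ext ω; simp [le_trans h.le (hs_nonneg ω)]
    rw [huniv, measure_univ] at hmed_ge
    have := congrArg ENNReal.toReal hmed_ge
    norm_num [ENNReal.toReal_div] at this
  -- the auxiliary real-valued functions
  set f1 : ℝ → ℝ := fun x => if Ms < x then x else 0 with hf1def
  set f2 : ℝ → ℝ := fun x => if x ≤ Ms then x else 0 with hf2def
  set fi : ℝ → ℝ := fun x => if x ≤ Ms then 1 else 0 with hfidef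
  set g2 : ℝ → ℝ := fun y => if Ms ≤ y then y else 0 with hg2def
  set g3 : ℝ → ℝ := fun y => if Ms ≤ y then 0 else y with hg3def
  set gi : ℝ → ℝ := fun y => if Ms ≤ y then 1 else 0 with hgidef
  set gc : ℝ → ℝ := fun y => if Ms ≤ y then 0 else 1 with hgcdef
  have mf1 : Measurable f1 := Measurable.ite measurableSet_Ioi measurable_id measurable_const
  have mf2 : Measurable f2 := Measurable.ite measurableSet_Iic measurable_id measurable_const
  have mfi : Measurable fi := Measurable.ite measurableSet_Iic measurable_const measurable_const
  have mg2 : Measurable g2 := Measurable.ite measurableSet_Ici measurable_id measurable_const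
  have mg3 : Measurable g3 := Measurable.ite measurableSet_Ici measurable_const measurable_id
  have mgi : Measurable gi := Measurable.ite measurableSet_Ici measurable_const measurable_const
  have mgc : Measurable gc := Measurable.ite measurableSet_Ici measurable_const measurable_const
  -- integrability of compositions
  have comp_s : ∀ f : ℝ → ℝ, Measurable f → (∀ x, |f x| ≤ |x|) →
      Integrable (fun ω => f (vs ω)) μ := fun f hf hb =>
    hs_int.mono (hf.comp hmeas_s).aestronglyMeasurable
      (Filter.Eventually.of_forall fun ω => by simpa [Real.norm_eq_abs] using hb (vs ω))
  have comp_b : ∀ g : ℝ → ℝ, Measurable g → (∀ y, |g y| ≤ |y|) →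
      Integrable (fun ω => g (vb ω)) μ := fun g hg hb =>
    hb_int.mono (hg.comp hmeas_b).aestronglyMeasurable
      (Filter.Eventually.of_forall fun ω => by simpa [Real.norm_eq_abs] using hb (vb ω))
  have comp_b1 : ∀ g : ℝ → ℝ, Measurable g → (∀ y, |g y| ≤ 1) →
      Integrable (fun ω => g (vb ω)) μ := fun g hg hb =>
    (integrable_const (1 : ℝ)).mono (hg.comp hmeas_b).aestronglyMeasurable
      (Filter.Eventually.of_forall fun ω => by simpa [Real.norm_eq_abs] using hb (vb ω))
  have comp_s1 : ∀ f : ℝ → ℝ, Measurable f → (∀ x, |f x| ≤ 1) →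
      Integrable (fun ω => f (vs ω)) μ := fun f hf hb =>
    (integrable_const (1 : ℝ)).mono (hf.comp hmeas_s).aestronglyMeasurable
      (Filter.Eventually.of_forall fun ω => by simpa [Real.norm_eq_abs] using hb (vs ω))
  have habs : ∀ x : ℝ, ∀ a b : ℝ, (|if a ≤ b then x else 0| ≤ |x|) := by
    intro x a b; split <;> simp
  have if1 : Integrable (fun ω => f1 (vs ω)) μ := by
    refine comp_s f1 mf1 fun x => ?_; simp only [hf1def]; split <;> simp
  have if2 : Integrable (fun ω => f2 (vs ω)) μ := by
    refine comp_s f2 mf2 fun x => ?_; simp only [hf2def]; split <;> simp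
  have ifi : Integrable (fun ω => fi (vs ω)) μ := by
    refine comp_s1 fi mfi fun x => ?_; simp only [hfidef]; split <;> simp
  have ifg : Integrable (fun ω => gi (vs ω)) μ := by
    refine comp_s1 gi mgi fun x => ?_; simp only [hgidef]; split <;> simp
  have ig2 : Integrable (fun ω => g2 (vb ω)) μ := by
    refine comp_b g2 mg2 fun y => ?_; simp only [hg2def]; split <;> simp
  have ig3 : Integrable (fun ω => g3 (vb ω)) μ := by
    refine comp_b g3 mg3 fun y => ?_; simp only [hg3def]; split <;> simp
  have igi : Integrable (fun ω => gi (vb ω)) μ := by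
    refine comp_b1 gi mgi fun y => ?_; simp only [hgidef]; split <;> simp
  have igc : Integrable (fun ω => gc (vb ω)) μ := by
    refine comp_b1 gc mgc fun y => ?_; simp only [hgcdef]; split <;> simp
  -- products are integrable
  have prodInt : ∀ (f g : ℝ → ℝ), Measurable f → Measurable g →
      Integrable (fun ω => f (vs ω)) μ → Integrable (fun ω => g (vb ω)) μ →
      Integrable (fun ω => f (vs ω) * g (vb ω)) μ := fun f g hf hg hfint hgint =>
    (hindep.comp hf hg).integrable_mul hfint hgint
  -- independence: product integrals factor
  have prodEq : ∀ (f g : ℝ → ℝ), Measurable f → Measurable g →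
      (∫ ω, f (vs ω) * g (vb ω) ∂μ) = (∫ ω, f (vs ω) ∂μ) * ∫ ω, g (vb ω) ∂μ :=
    fun f g hf hg => (hindep.comp hf hg).integral_fun_mul_eq_mul_integral
      ((hf.comp hmeas_s)).aestronglyMeasurable ((hg.comp hmeas_b)).aestronglyMeasurable
  -- the basic scalar quantities
  set S : ℝ := ∫ ω, vs ω ∂μ with hS
  set S1 : ℝ := ∫ ω, f2 (vs ω) ∂μ with hS1
  set S2 : ℝ := ∫ ω, f1 (vs ω) ∂μ with hS2
  set Bhi : ℝ := ∫ ω, g2 (vb ω) ∂μ with hBhi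
  set Blo : ℝ := ∫ ω, g3 (vb ω) ∂μ with hBlo
  set q : ℝ := (μ {ω | Ms ≤ vb ω}).toReal with hq
  -- indicator integrals
  have hBmeas : MeasurableSet {ω | Ms ≤ vb ω} := hmeas_b measurableSet_Ici
  have hAmeas : MeasurableSet {ω | vs ω ≤ Ms} := hmeas_s measurableSet_Iic
  have int_gi : ∫ ω, gi (vb ω) ∂μ = q := by
    have : (fun ω => gi (vb ω)) = Set.indicator {ω | Ms ≤ vb ω} (fun _ => (1 : ℝ)) := by
      ext ω; simp [hgidef, Set.indicator_apply, Set.mem_setOf_eq]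
    rw [this, integral_indicator hBmeas]
    simp [hq, measureReal_def]
  have int_fi : ∫ ω, fi (vs ω) ∂μ = 1 / 2 := by
    have : (fun ω => fi (vs ω)) = Set.indicator {ω | vs ω ≤ Ms} (fun _ => (1 : ℝ)) := by
      ext ω; simp [hfidef, Set.indicator_apply, Set.mem_setOf_eq]
    rw [this, integral_indicator hAmeas, setIntegral_const, measureReal_def, hmed_le, smul_eq_mul, mul_one]
    norm_num [ENNReal.toReal_div]
  have int_fg : ∫ ω, gi (vs ω) ∂μ = 1 / 2 := by
    have : (fun ω => gi (vs ω)) = Set.indicator {ω | Ms ≤ vs ω} (fun _ => (1 : ℝ)) := by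
      ext ω; simp [hgidef, Set.indicator_apply, Set.mem_setOf_eq]
    have hA2 : MeasurableSet {ω | Ms ≤ vs ω} := hmeas_s measurableSet_Ici
    rw [this, integral_indicator hA2, setIntegral_const, measureReal_def, hmed_ge,
      smul_eq_mul, mul_one]
    norm_num [ENNReal.toReal_div]
  have int_gc : ∫ ω, gc (vb ω) ∂μ = 1 - q := by
    have heq : (fun ω => gc (vb ω)) = fun ω => 1 - gi (vb ω) := by
      ext ω; simp only [hgcdef, hgidef]; split <;> norm_num
    rw [heq, integral_sub (integrable_const 1) igi, int_gi]
    simp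
  have hq0 : 0 ≤ q := ENNReal.toReal_nonneg
  have hq1 : q ≤ 1 := by
    rw [hq]
    calc (μ {ω | Ms ≤ vb ω}).toReal ≤ (μ Set.univ).toReal :=
          ENNReal.toReal_mono (measure_ne_top _ _) (measure_mono (Set.subset_univ _))
      _ = 1 := by simp
  -- nonnegativity of the pieces
  have hS1nn : 0 ≤ S1 := integral_nonneg fun ω => by
    simp only [hf2def]; split; exacts [hs_nonneg ω, le_rfl]
  have hS2nn : 0 ≤ S2 := integral_nonneg fun ω => by
    simp only [hf1def]; split; exacts [hs_nonneg ω, le_rfl]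
  have hBlonn : 0 ≤ Blo := integral_nonneg fun ω => by
    simp only [hg3def]; split; exacts [le_rfl, hb_nonneg ω]
  -- S = S1 + S2
  have hSsplit : S = S1 + S2 := by
    rw [hS, hS1, hS2, ← integral_add if2 if1]
    refine integral_congr_ae (Filter.Eventually.of_forall fun ω => ?_)
    simp only [hf1def, hf2def]
    rcases le_or_gt (vs ω) Ms with h | h
    · rw [if_pos h, if_neg (not_lt.2 h)]; ring
    · rw [if_neg (not_le.2 h), if_pos h]; ring
  -- S ≥ Ms / 2
  have hSge : Ms / 2 ≤ S := by
    have hle : ∀ ω, Ms * gi (vs ω) ≤ vs ω := by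
      intro ω; simp only [hgidef]; split
      · simpa using ‹Ms ≤ vs ω›
      · simpa using hs_nonneg ω
    have := integral_mono (ifg.const_mul Ms) hs_int hle
    rwa [integral_const_mul, int_fg, mul_one_div] at this
  -- Blo ≤ Ms * (1 - q)
  have hBloLe : Blo ≤ Ms * (1 - q) := by
    have hle : ∀ ω, g3 (vb ω) ≤ Ms * gc (vb ω) := by
      intro ω; simp only [hg3def, hgcdef]; split
      · simp
      · simpa using le_of_lt (not_le.1 ‹¬ Ms ≤ vb ω›)
    have := integral_mono ig3 (igc.const_mul Ms) hle
    rwa [integral_const_mul, int_gc] at this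
  -- the welfare integral
  have hW : (∫ ω, (if vs ω ≤ Ms ∧ Ms ≤ vb ω then vb ω else vs ω) ∂μ)
      = S - S1 * q + (1 / 2) * Bhi := by
    have hptwise : ∀ ω, (if vs ω ≤ Ms ∧ Ms ≤ vb ω then vb ω else vs ω)
        = vs ω - f2 (vs ω) * gi (vb ω) + fi (vs ω) * g2 (vb ω) := by
      intro ω
      simp only [hf2def, hgidef, hfidef, hg2def]
      by_cases h1 : vs ω ≤ Ms <;> by_cases h2 : Ms ≤ vb ω <;>
        simp [h1, h2]
    rw [integral_congr_ae (Filter.Eventually.of_forall hptwise)]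
    have i1 : Integrable (fun ω => vs ω - f2 (vs ω) * gi (vb ω)) μ :=
      hs_int.sub (prodInt f2 gi mf2 mgi if2 igi)
    rw [integral_add i1 (prodInt fi g2 mfi mg2 ifi ig2),
      integral_sub hs_int (prodInt f2 gi mf2 mgi if2 igi),
      prodEq f2 gi mf2 mgi, prodEq fi g2 mfi mg2, int_gi, int_fi]
  -- the pointwise upper bound on the max
  have hmax : ∀ ω, max (vs ω) (vb ω)
      ≤ f1 (vs ω) * gi (vb ω) + g2 (vb ω) + vs ω * gc (vb ω) + fi (vs ω) * g3 (vb ω) := by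
    intro ω
    simp only [hf1def, hgidef, hg2def, hgcdef, hfidef, hg3def]
    by_cases h2 : Ms ≤ vb ω
    · simp only [if_pos h2, mul_one, mul_zero, add_zero, zero_add]
      by_cases h1 : Ms < vs ω
      · rw [if_pos h1]
        rw [max_le_iff]
        constructor
        · linarith [hb_nonneg ω]
        · linarith [le_of_lt h1, hMs]
      · rw [if_neg h1]
        rw [max_le_iff]
        push_neg at h1
        constructor
        · linarith
        · linarith [hs_nonneg ω]
    · simp only [if_neg h2, mul_zero, mul_one, zero_add, add_zero]
      push_neg at h2
      by_cases h1 : vs ω ≤ Ms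
      · rw [if_pos h1, one_mul, max_le_iff]
        constructor
        · linarith [hb_nonneg ω]
        · linarith [hs_nonneg ω]
      · rw [if_neg h1, zero_mul, add_zero, max_le_iff]
        push_neg at h1
        exact ⟨le_rfl, by linarith⟩
  -- integrate the pointwise bound
  have hmax_int : Integrable (fun ω => max (vs ω) (vb ω)) μ := hs_int.sup hb_int
  have ivgc : Integrable (fun ω => vs ω * gc (vb ω)) μ :=
    prodInt (fun x => x) gc measurable_id mgc hs_int igc
  have evgc : ∫ ω, vs ω * gc (vb ω) ∂μ = S * (1 - q) := by
    have h := prodEq (fun x => x) gc measurable_id mgc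
    rw [int_gc] at h
    rw [hS]
    exact h
  have hrhs_int : Integrable (fun ω =>
      f1 (vs ω) * gi (vb ω) + g2 (vb ω) + vs ω * gc (vb ω) + fi (vs ω) * g3 (vb ω)) μ :=
    (((prodInt f1 gi mf1 mgi if1 igi).add ig2).add ivgc).add (prodInt fi g3 mfi mg3 ifi ig3)
  have hmaxle : (∫ ω, max (vs ω) (vb ω) ∂μ) ≤ S2 * q + Bhi + S * (1 - q) + (1 / 2) * Blo := by
    have h1 := integral_mono hmax_int hrhs_int hmax
    have i1 : Integrable (fun ω => f1 (vs ω) * gi (vb ω) + g2 (vb ω)) μ :=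
      (prodInt f1 gi mf1 mgi if1 igi).add ig2
    have i2 : Integrable (fun ω => f1 (vs ω) * gi (vb ω) + g2 (vb ω) + vs ω * gc (vb ω)) μ :=
      i1.add ivgc
    rw [integral_add i2 (prodInt fi g3 mfi mg3 ifi ig3),
      integral_add i1 ivgc,
      integral_add (prodInt f1 gi mf1 mgi if1 igi) ig2,
      prodEq f1 gi mf1 mgi, evgc,
      prodEq fi g3 mfi mg3, int_gi, int_fi] at h1
    rw [hS2, hBhi, hBlo]
    linarith [h1]
  -- put everything together
  rw [hW]
  have key : (1 / 2 : ℝ) * (S2 * q + Bhi + S * (1 - q) + (1 / 2) * Blo)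
      ≤ S - S1 * q + (1 / 2) * Bhi := by
    nlinarith [mul_nonneg hS2nn hq0, mul_nonneg (mul_nonneg hS2nn hq0) (sub_nonneg.2 hq1),
      mul_nonneg hS1nn hq0, mul_nonneg hS1nn (sub_nonneg.2 hq1),
      mul_le_mul_of_nonneg_right hSge (sub_nonneg.2 hq1)]
  calc (1 / 2 : ℝ) * ∫ ω, max (vs ω) (vb ω) ∂μ
      ≤ (1 / 2) * (S2 * q + Bhi + S * (1 - q) + (1 / 2) * Blo) := by linarith
    _ ≤ S - S1 * q + (1 / 2) * Bhi := key
end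

section
/- Let M_s be an exact median of the seller's value v_s, and let T1 be the event {v_b < M_s} (type-1 instances). Then the contribution of type-1 instances to the welfare of the Median Mechanism is at least half their contribution to the optimal welfare: E[W_{M_s}·1_{T1}] ≥ (1/2)·E[max(v_s, v_b)·1_{T1}]. -/
open MeasureTheory ProbabilityTheory

/-- Type-1 instances of bilateral trade are those with `v_b < Ms`. The contribution of
type-1 instances to the expected welfare of the Median Mechanism (trade price equal to
the seller's median `Ms`) is at least half of their contribution to the optimal
expected welfare. -/
theorem median_mechanism_type_one_instances
    {Ω : Type*} [MeasurableSpace Ω] (μ : Measure Ω) [IsProbabilityMeasure μ]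
    (vs vb : Ω → ℝ) (Ms : ℝ)
    (hmeas_s : Measurable vs) (hmeas_b : Measurable vb)
    (hindep : IndepFun vs vb μ)
    (hs_nonneg : ∀ ω, 0 ≤ vs ω) (hb_nonneg : ∀ ω, 0 ≤ vb ω)
    (hs_int : Integrable vs μ) (hb_int : Integrable vb μ)
    (hmed_le : μ {ω | vs ω ≤ Ms} = 1 / 2)
    (hmed_ge : μ {ω | Ms ≤ vs ω} = 1 / 2) :
    (1 / 2) * ∫ ω in {ω | vb ω < Ms}, max (vs ω) (vb ω) ∂μ
      ≤ ∫ ω in {ω | vb ω < Ms}, (if vs ω ≤ Ms ∧ Ms ≤ vb ω then vb ω else vs ω) ∂μ := by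
  set T1 : Set Ω := {ω | vb ω < Ms} with hT1
  have hT1m : MeasurableSet T1 := hmeas_b measurableSet_Iio
  have hSltm : MeasurableSet {ω | vs ω < Ms} := hmeas_s measurableSet_Iio
  have hSgem : MeasurableSet {ω | Ms ≤ vs ω} := hmeas_s measurableSet_Ici
  -- Ms ≥ 0
  have hMs0 : 0 ≤ Ms := by
    by_contra h
    push_neg at h
    have : {ω | vs ω ≤ Ms} = (∅ : Set Ω) := by
      ext ω; simp only [Set.mem_setOf_eq, Set.mem_empty_iff_false, iff_false]
      exact fun hle => absurd (le_trans (hs_nonneg ω) hle) (not_le.mpr h)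
    rw [this, measure_empty] at hmed_le
    exact ENNReal.ofNat_ne_top (by rwa [eq_comm, one_div, ENNReal.inv_eq_zero] at hmed_le)
  -- μ {vs < Ms} = 1/2
  have hlt : μ {ω | vs ω < Ms} = 1 / 2 := by
    have hc : {ω | vs ω < Ms} = {ω | Ms ≤ vs ω}ᶜ := by ext ω; simp [not_le]
    rw [hc, measure_compl hSgem (measure_ne_top μ _), hmed_ge, measure_univ]
    rw [one_div, ENNReal.one_sub_inv_two]
  -- independence of the events
  have hμlt : μ ({ω | vs ω < Ms} ∩ T1) = μ T1 * (1 / 2) := by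
    have := hindep.measure_inter_preimage_eq_mul (Set.Iio Ms) (Set.Iio Ms)
      measurableSet_Iio measurableSet_Iio
    have h2 : vs ⁻¹' Set.Iio Ms ∩ vb ⁻¹' Set.Iio Ms = {ω | vs ω < Ms} ∩ T1 := rfl
    rw [h2] at this
    rw [this, show vs ⁻¹' Set.Iio Ms = {ω | vs ω < Ms} from rfl,
      show vb ⁻¹' Set.Iio Ms = T1 from rfl, hlt, mul_comm]
  have hμge : μ ({ω | Ms ≤ vs ω} ∩ T1) = μ T1 * (1 / 2) := by
    have := hindep.measure_inter_preimage_eq_mul (Set.Ici Ms) (Set.Iio Ms)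
      measurableSet_Ici measurableSet_Iio
    have h2 : vs ⁻¹' Set.Ici Ms ∩ vb ⁻¹' Set.Iio Ms = {ω | Ms ≤ vs ω} ∩ T1 := rfl
    rw [h2] at this
    rw [this, show vs ⁻¹' Set.Ici Ms = {ω | Ms ≤ vs ω} from rfl,
      show vb ⁻¹' Set.Iio Ms = T1 from rfl, hmed_ge, mul_comm]
  -- RHS equals ∫_{T1} vs
  have hRHS : ∫ ω in T1, (if vs ω ≤ Ms ∧ Ms ≤ vb ω then vb ω else vs ω) ∂μ
      = ∫ ω in T1, vs ω ∂μ := by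
    refine setIntegral_congr_fun hT1m fun ω hω => ?_
    have : ¬ (Ms ≤ vb ω) := not_le.mpr hω
    simp [this]
  rw [hRHS]
  -- auxiliary integrabilities
  have hind_int : Integrable ({ω | vs ω < Ms}.indicator fun _ => Ms) μ :=
    (integrable_const Ms).indicator hSltm
  have hmax_int : Integrable (fun ω => max (vs ω) (vb ω)) μ := hs_int.sup hb_int
  -- ∫_{T1} max ≤ ∫_{T1} (vs + Ms·1_{vs<Ms})
  have hstep1 : ∫ ω in T1, max (vs ω) (vb ω) ∂μ
      ≤ ∫ ω in T1, (vs ω + ({ω | vs ω < Ms}.indicator fun _ => Ms) ω) ∂μ := by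
    refine setIntegral_mono_on hmax_int.integrableOn
      (hs_int.add hind_int).integrableOn hT1m fun ω hω => ?_
    have hωb : vb ω < Ms := hω
    rcases le_or_gt Ms (vs ω) with h | h
    · have hi : ({ω | vs ω < Ms}.indicator fun _ => Ms) ω = 0 :=
        Set.indicator_of_notMem (by simpa [not_lt] using h) _
      rw [hi, add_zero]
      exact max_le le_rfl (le_trans (le_of_lt hωb) h)
    · have hi : ({ω | vs ω < Ms}.indicator fun _ => Ms) ω = Ms :=
        Set.indicator_of_mem (show ω ∈ {ω | vs ω < Ms} from h) _
      rw [hi]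
      exact max_le (by linarith [hs_nonneg ω]) (by linarith [hs_nonneg ω, le_of_lt hωb])
  -- split the integral
  have hstep2 : ∫ ω in T1, (vs ω + ({ω | vs ω < Ms}.indicator fun _ => Ms) ω) ∂μ
      = ∫ ω in T1, vs ω ∂μ + Ms * (μ T1 * (1 / 2)).toReal := by
    rw [integral_add hs_int.integrableOn hind_int.integrableOn]
    congr 1
    rw [setIntegral_indicator hSltm, setIntegral_const]
    rw [Set.inter_comm, measureReal_def, hμlt]
    rw [smul_eq_mul, mul_comm]
  -- lower bound for ∫_{T1} vs
  have hstep3 : Ms * (μ T1 * (1 / 2)).toReal ≤ ∫ ω in T1, vs ω ∂μ := by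
    have h1 : Ms * (μ T1 * (1 / 2)).toReal ≤ ∫ ω in {ω | Ms ≤ vs ω} ∩ T1, vs ω ∂μ := by
      have := setIntegral_mono_on (integrable_const Ms).integrableOn
        hs_int.integrableOn (hSgem.inter hT1m)
        (fun ω hω => (hω.1 : Ms ≤ vs ω))
      rw [setIntegral_const, measureReal_def, hμge, smul_eq_mul, mul_comm] at this
      exact this
    have h2 : ∫ ω in {ω | Ms ≤ vs ω} ∩ T1, vs ω ∂μ ≤ ∫ ω in T1, vs ω ∂μ := by
      refine setIntegral_mono_set hs_int.integrableOn
        (Filter.Eventually.of_forall fun ω => hs_nonneg ω)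
        (HasSubset.Subset.eventuallyLE Set.inter_subset_right)
    linarith
  linarith
end

section
/- Let M_s be an exact median of the seller's value v_s, and let T2 be the event {v_b ≥ M_s} (type-2 instances). Then the contribution of type-2 instances to the welfare of the Median Mechanism is at least half their contribution to the optimal welfare: E[W_{M_s}·1_{T2}] ≥ (1/2)·E[max(v_s, v_b)·1_{T2}]. -/
open MeasureTheory ProbabilityTheory

/-- Type-1 instances of bilateral trade are those with `v_b ≥ Ms`. The contribution of
type-2 instances to the expected welfare of the Median Mechanism (trade price equal to
the seller's median `Ms`) is at least half of their contribution to the optimal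
expected welfare. -/
theorem median_mechanism_type_two_instances
    {Ω : Type*} [MeasurableSpace Ω] (μ : Measure Ω) [IsProbabilityMeasure μ]
    (vs vb : Ω → ℝ) (Ms : ℝ)
    (hmeas_s : Measurable vs) (hmeas_b : Measurable vb)
    (hindep : IndepFun vs vb μ)
    (hs_nonneg : ∀ ω, 0 ≤ vs ω) (hb_nonneg : ∀ ω, 0 ≤ vb ω)
    (hs_int : Integrable vs μ) (hb_int : Integrable vb μ)
    (hmed_le : μ {ω | vs ω ≤ Ms} = 1 / 2)
    (hmed_ge : μ {ω | Ms ≤ vs ω} = 1 / 2) :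
    (1 / 2) * ∫ ω in {ω | Ms ≤ vb ω}, max (vs ω) (vb ω) ∂μ
      ≤ ∫ ω in {ω | Ms ≤ vb ω}, (if vs ω ≤ Ms ∧ Ms ≤ vb ω then vb ω else vs ω) ∂μ := by
  set A : Set Ω := {ω | Ms ≤ vb ω} with hAdef
  have hA : MeasurableSet A := measurableSet_le measurable_const hmeas_b
  set φ : ℝ → ℝ := fun x => if x ≤ Ms then (1:ℝ) else 0 with hφdef
  set ψ : ℝ → ℝ := fun x => if Ms ≤ x then x else 0 with hψdef
  have hφm : Measurable φ :=
    Measurable.ite (measurableSet_le measurable_id measurable_const)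
      measurable_const measurable_const
  have hψm : Measurable ψ :=
    Measurable.ite (measurableSet_le measurable_const measurable_id)
      measurable_id measurable_const
  set f : Ω → ℝ := φ ∘ vs with hfdef
  set g : Ω → ℝ := ψ ∘ vb with hgdef
  set h : Ω → ℝ := fun ω => if vs ω ≤ Ms then 0 else vs ω with hhdef
  have hfm : Measurable f := hφm.comp hmeas_s
  have hgm : Measurable g := hψm.comp hmeas_b
  have hhm : Measurable h :=
    Measurable.ite (measurableSet_le hmeas_s measurable_const)
      measurable_const hmeas_s
  have hf_int : Integrable f μ := by
    refine (integrable_const (1:ℝ)).mono' hfm.aestronglyMeasurable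
      (Filter.Eventually.of_forall fun ω => ?_)
    simp only [hfdef, Function.comp, hφdef]
    split <;> simp
  have hg_int : Integrable g μ := by
    refine hb_int.mono hgm.aestronglyMeasurable
      (Filter.Eventually.of_forall fun ω => ?_)
    simp only [hgdef, Function.comp, hψdef, Real.norm_eq_abs]
    split <;> simp [abs_nonneg]
  have hh_int : Integrable h μ := by
    refine hs_int.mono hhm.aestronglyMeasurable
      (Filter.Eventually.of_forall fun ω => ?_)
    simp only [hhdef, Real.norm_eq_abs]
    split <;> simp [abs_nonneg]
  have hfg : IndepFun f g μ := hindep.comp hφm hψm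
  -- ∫ f = 1/2
  have hf_eq : ∫ ω, f ω ∂μ = 1 / 2 := by
    have : f = Set.indicator {ω | vs ω ≤ Ms} (fun _ => (1:ℝ)) := by
      ext ω
      simp [hfdef, Function.comp, hφdef, Set.indicator_apply, Set.mem_setOf_eq]
    rw [this, integral_indicator_const (1:ℝ) (measurableSet_le hmeas_s measurable_const),
      measureReal_def, hmed_le]
    simp [ENNReal.toReal_div]
  have hmul : ∫ ω, f ω * g ω ∂μ = (1 / 2) * ∫ ω, g ω ∂μ := by
    have h2 := hfg.integral_fun_mul_eq_mul_integral hf_int.aestronglyMeasurable hg_int.aestronglyMeasurable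
    rw [hf_eq] at h2
    exact h2
  -- set-integral identities
  have hb_eq : ∫ ω in A, vb ω ∂μ = ∫ ω, g ω ∂μ := by
    have he : A.indicator vb = g := by
      ext ω
      simp [Set.indicator_apply, hAdef, Set.mem_setOf_eq, hgdef, Function.comp, hψdef]
    rw [← integral_indicator hA, he]
  have hprod_eq : ∫ ω in A, (if vs ω ≤ Ms then vb ω else 0) ∂μ = ∫ ω, f ω * g ω ∂μ := by
    have he : A.indicator (fun ω => if vs ω ≤ Ms then vb ω else 0)
        = fun ω => f ω * g ω := by
      ext ω
      by_cases hω : Ms ≤ vb ω <;>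
        simp [Set.indicator_apply, hAdef, Set.mem_setOf_eq, hω, hfdef, hgdef,
          Function.comp, hφdef, hψdef] <;> split <;> simp
    rw [← integral_indicator hA, he]
  -- welfare on A
  have hW_eq : ∫ ω in A, (if vs ω ≤ Ms ∧ Ms ≤ vb ω then vb ω else vs ω) ∂μ
      = ∫ ω in A, ((if vs ω ≤ Ms then vb ω else 0) + h ω) ∂μ := by
    refine setIntegral_congr_fun hA fun ω hω => ?_
    have hωA : Ms ≤ vb ω := hω
    by_cases hvs : vs ω ≤ Ms <;> simp [hvs, hωA, hhdef]
  have hsplit : ∫ ω in A, ((if vs ω ≤ Ms then vb ω else 0) + h ω) ∂μ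
      = ∫ ω in A, (if vs ω ≤ Ms then vb ω else 0) ∂μ + ∫ ω in A, h ω ∂μ := by
    refine integral_add ?_ (hh_int.restrict)
    refine Integrable.restrict ?_
    refine hb_int.mono ((Measurable.ite (measurableSet_le hmeas_s measurable_const)
      hmeas_b measurable_const).aestronglyMeasurable)
      (Filter.Eventually.of_forall fun ω => ?_)
    simp only [Real.norm_eq_abs]
    split <;> simp [abs_nonneg]
  -- pointwise bound for max on A
  have hmax_le : ∫ ω in A, max (vs ω) (vb ω) ∂μ
      ≤ ∫ ω in A, (vb ω + h ω) ∂μ := by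
    refine setIntegral_mono_on ((hs_int.sup hb_int).restrict) ?_ hA fun ω hω => ?_
    · exact (hb_int.add hh_int).restrict
    · have hωA : Ms ≤ vb ω := hω
      by_cases hvs : vs ω ≤ Ms
      · simp only [hhdef, hvs, if_pos, add_zero]
        exact max_le (hvs.trans hωA) le_rfl
      · simp only [hhdef, hvs, if_neg, not_false_iff]
        exact max_le (le_add_of_nonneg_left (hb_nonneg ω))
          (le_add_of_nonneg_right (hs_nonneg ω))
  have hadd : ∫ ω in A, (vb ω + h ω) ∂μ = ∫ ω in A, vb ω ∂μ + ∫ ω in A, h ω ∂μ :=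
    integral_add (hb_int.restrict) (hh_int.restrict)
  have hh_nonneg : 0 ≤ ∫ ω in A, h ω ∂μ := by
    refine integral_nonneg fun ω => ?_
    simp only [hhdef]
    split
    · exact le_rfl
    · exact hs_nonneg ω
  calc (1 / 2) * ∫ ω in A, max (vs ω) (vb ω) ∂μ
      ≤ (1 / 2) * ∫ ω in A, (vb ω + h ω) ∂μ := by linarith [hmax_le]
    _ = (1 / 2) * ∫ ω in A, vb ω ∂μ + (1 / 2) * ∫ ω in A, h ω ∂μ := by
        rw [hadd]; ring
    _ ≤ (1 / 2) * ∫ ω in A, vb ω ∂μ + ∫ ω in A, h ω ∂μ := by linarith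
    _ = ∫ ω in A, (if vs ω ≤ Ms then vb ω else 0) ∂μ + ∫ ω in A, h ω ∂μ := by
        rw [hprod_eq, hmul, hb_eq]
    _ = ∫ ω in A, (if vs ω ≤ Ms ∧ Ms ≤ vb ω then vb ω else vs ω) ∂μ := by
        rw [hW_eq, hsplit]
end

section
/- No approximation ratio better than 2 is achievable by a trade price depending only on the seller's distribution: for every γ < 2 there exists a probability distribution for the seller's value v_s (an equal mixture of the uniform distributions on (0,ε) and on (1,1+ε) for sufficiently small ε > 0) such that for every trade price p ∈ ℝ there exists a constant c ≥ 0 so that, taking the buyer's value to be deterministically v_b = c, γ·E[W_p] ≤ E[max(v_s, c)]. -/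
open MeasureTheory ProbabilityTheory
open scoped ENNReal

/-- The uniform probability distribution on the open interval `(a, b)`. -/
noncomputable def unifIoo (a b : ℝ) : Measure ℝ :=
  (ENNReal.ofReal (b - a))⁻¹ • (volume.restrict (Set.Ioo a b))

/-- The seller's distribution: an equal mixture of the uniform distributions on
`(0, ε)` and on `(1, 1 + ε)`. -/
noncomputable def sellerMix (ε : ℝ) : Measure ℝ :=
  (1 / 2 : ℝ≥0∞) • unifIoo 0 ε + (1 / 2 : ℝ≥0∞) • unifIoo 1 (1 + ε)

lemma integral_unifIoo {a b : ℝ} (hab : a < b) (f : ℝ → ℝ) :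
    ∫ x, f x ∂(unifIoo a b) = (b - a)⁻¹ * ∫ x in Set.Ioo a b, f x := by
  rw [unifIoo, integral_smul_measure, ENNReal.toReal_inv,
    ENNReal.toReal_ofReal (by linarith)]
  rfl

lemma integrable_unifIoo {a b : ℝ} (hab : a < b) {f : ℝ → ℝ}
    (h : IntegrableOn f (Set.Ioo a b) volume) : Integrable f (unifIoo a b) :=
  h.smul_measure (by
    rw [Ne, ENNReal.inv_eq_top, ENNReal.ofReal_eq_zero]; push_neg; linarith)

lemma integral_sellerMix {ε : ℝ} {f : ℝ → ℝ}
    (h1 : Integrable f (unifIoo 0 ε)) (h2 : Integrable f (unifIoo 1 (1 + ε))) :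
    ∫ x, f x ∂sellerMix ε
      = (∫ x, f x ∂unifIoo 0 ε + ∫ x, f x ∂unifIoo 1 (1 + ε)) / 2 := by
  rw [sellerMix, integral_add_measure (h1.smul_measure (by norm_num))
      (h2.smul_measure (by norm_num)), integral_smul_measure, integral_smul_measure]
  norm_num
  ring

lemma setIntegral_Ioo_id {a b : ℝ} (hab : a ≤ b) :
    ∫ x in Set.Ioo a b, x = (b ^ 2 - a ^ 2) / 2 := by
  rw [← integral_Ioc_eq_integral_Ioo, ← intervalIntegral.integral_of_le hab,
    integral_id]

lemma setIntegral_Ioo_const {a b : ℝ} (hab : a ≤ b) (c : ℝ) :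
    ∫ _ in Set.Ioo a b, c = (b - a) * c := by
  rw [setIntegral_const, measureReal_def, Real.volume_Ioo, ENNReal.toReal_ofReal (by linarith),
    smul_eq_mul]

lemma integrableOn_ite_Ioo {a b p c : ℝ} :
    IntegrableOn (fun x => if x ≤ p then c else x) (Set.Ioo a b) volume := by
  apply Measure.integrableOn_of_bounded (M := max |c| (max |a| |b|))
    measure_Ioo_lt_top.ne
  · exact (Measurable.ite measurableSet_Iic measurable_const
      measurable_id).aestronglyMeasurable
  · filter_upwards [ae_restrict_mem measurableSet_Ioo] with x hx
    rw [Real.norm_eq_abs]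
    split
    · exact le_max_left _ _
    · exact le_trans (abs_le_max_abs_abs hx.1.le hx.2.le) (le_max_right _ _)

/-- No fixed-price mechanism whose trade price depends only on the seller's
distribution achieves an approximation ratio better than 2: for every `γ < 2` there is
a seller distribution (an equal mixture of uniform distributions on `(0, ε)` and
`(1, 1 + ε)` for sufficiently small `ε > 0`) such that for every trade price `p` there
is a deterministic buyer value `c ≥ 0` for which the expected welfare of the
fixed-price mechanism with price `p` is at most a `1/γ` fraction of the optimal
expected welfare. -/
theorem no_better_than_two_from_seller_distribution_only :
    ∀ γ : ℝ, γ < 2 →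
      ∃ ε : ℝ, 0 < ε ∧
        ∀ p : ℝ, ∃ c : ℝ, 0 ≤ c ∧
          γ * ∫ x, (if x ≤ p ∧ p ≤ c then c else x) ∂(sellerMix ε)
            ≤ ∫ x, max x c ∂(sellerMix ε) := by
  intro γ hγ
  obtain ⟨γ', hγ1, hγ2, hγγ'⟩ : ∃ γ', 1 ≤ γ' ∧ γ' < 2 ∧ γ ≤ γ' :=
    ⟨max γ 1, le_max_right _ _, max_lt hγ one_lt_two, le_max_left _ _⟩
  have h2γ : (0:ℝ) < 2 - γ' := by linarith
  obtain ⟨ε, hε, hε1, hε2⟩ : ∃ ε : ℝ, 0 < ε ∧ ε ≤ 1 ∧ ε ≤ (2 - γ') / 2 :=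
    ⟨min 1 ((2 - γ') / 2), lt_min one_pos (by linarith), min_le_left _ _,
      min_le_right _ _⟩
  have hε' : (1 : ℝ) < 1 + ε := by linarith
  refine ⟨ε, hε, fun p => ?_⟩
  by_cases hp : p ≤ 1
  · -- price is low; take a huge buyer value
    obtain ⟨c, hc2, hkey⟩ : ∃ c : ℝ, 2 ≤ c ∧ (2 - γ') * c = 3 + 2 * (2 - γ') := by
      refine ⟨3 / (2 - γ') + 2, ?_, by field_simp⟩
      have : (0:ℝ) ≤ 3 / (2 - γ') := div_nonneg (by norm_num) h2γ.le
      linarith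
    have hc0 : (0 : ℝ) ≤ c := by linarith
    have hpc : p ≤ c := by linarith
    refine ⟨c, hc0, ?_⟩
    have hiff : ∀ x : ℝ, (if x ≤ p ∧ p ≤ c then c else x) = if x ≤ p then c else x := by
      intro x; simp [hpc]
    simp_rw [hiff]
    -- integrability
    have hf1 : Integrable (fun x => if x ≤ p then c else x) (unifIoo 0 ε) :=
      integrable_unifIoo hε integrableOn_ite_Ioo
    have hf2 : Integrable (fun x => if x ≤ p then c else x) (unifIoo 1 (1 + ε)) :=
      integrable_unifIoo hε' integrableOn_ite_Ioo
    have hg1 : Integrable (fun x => max x c) (unifIoo 0 ε) :=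
      integrable_unifIoo hε
        (((continuous_id.max continuous_const).integrableOn_Icc).mono_set
          Set.Ioo_subset_Icc_self)
    have hg2 : Integrable (fun x => max x c) (unifIoo 1 (1 + ε)) :=
      integrable_unifIoo hε'
        (((continuous_id.max continuous_const).integrableOn_Icc).mono_set
          Set.Ioo_subset_Icc_self)
    rw [integral_sellerMix hf1 hf2, integral_sellerMix hg1 hg2,
      integral_unifIoo hε, integral_unifIoo hε, integral_unifIoo hε', integral_unifIoo hε']
    -- the low part of the welfare integral
    have hlow_le : ∫ x in Set.Ioo 0 ε, (if x ≤ p then c else x) ≤ ε * c := by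
      have hmono := setIntegral_mono_on (μ := volume) (s := Set.Ioo 0 ε)
        (f := fun x => if x ≤ p then c else x) (g := fun _ => c)
        integrableOn_ite_Ioo (integrableOn_const measure_Ioo_lt_top.ne)
        measurableSet_Ioo (fun x hx => by
          split
          · exact le_refl c
          · exact le_trans hx.2.le (by linarith))
      calc ∫ x in Set.Ioo 0 ε, (if x ≤ p then c else x) ≤ ∫ _ in Set.Ioo 0 ε, c := hmono
        _ = ε * c := by rw [setIntegral_Ioo_const hε.le]; ring
    have hlow_nonneg : 0 ≤ ∫ x in Set.Ioo 0 ε, (if x ≤ p then c else x) := by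
      apply setIntegral_nonneg measurableSet_Ioo
      intro x hx
      split
      · exact hc0
      · exact hx.1.le
    -- the high part: no trade there
    have hhigh : ∫ x in Set.Ioo 1 (1 + ε), (if x ≤ p then c else x)
        = ((1 + ε) ^ 2 - 1 ^ 2) / 2 := by
      rw [setIntegral_congr_fun measurableSet_Ioo
        (fun x hx => if_neg (fun h => absurd (le_trans h hp) (not_le.2 hx.1)))]
      exact setIntegral_Ioo_id hε'.le
    -- optimal welfare is c on both parts
    have hmax1 : ∫ x in Set.Ioo 0 ε, max x c = ε * c := by
      rw [setIntegral_congr_fun measurableSet_Ioo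
        (fun x hx => max_eq_right (by have := hx.2; linarith)),
        setIntegral_Ioo_const hε.le]
      ring
    have hmax2 : ∫ x in Set.Ioo 1 (1 + ε), max x c = ε * c := by
      rw [setIntegral_congr_fun measurableSet_Ioo
        (fun x hx => max_eq_right (by have := hx.2; linarith)),
        setIntegral_Ioo_const hε'.le]
      ring
    rw [hhigh, hmax1, hmax2]
    have hinv : ε⁻¹ * (ε * c) = c := by field_simp
    have hinv2 : ((1:ℝ) + ε - 1)⁻¹ * (ε * c) = c := by
      rw [show (1:ℝ) + ε - 1 = ε by ring]; field_simp
    have hinv3 : ((1:ℝ) + ε - 1)⁻¹ * (((1 + ε) ^ 2 - 1 ^ 2) / 2) = 1 + ε / 2 := by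
      rw [show (1:ℝ) + ε - 1 = ε by ring]
      field_simp
      ring
    rw [show ε - 0 = ε by ring, hinv, hinv2, hinv3]
    have htle : ε⁻¹ * ∫ x in Set.Ioo 0 ε, (if x ≤ p then c else x) ≤ c := by
      calc ε⁻¹ * ∫ x in Set.Ioo 0 ε, (if x ≤ p then c else x) ≤ ε⁻¹ * (ε * c) :=
            mul_le_mul_of_nonneg_left hlow_le (by positivity)
        _ = c := hinv
    have ht0 : 0 ≤ ε⁻¹ * ∫ x in Set.Ioo 0 ε, (if x ≤ p then c else x) :=
      mul_nonneg (by positivity) hlow_nonneg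
    generalize ε⁻¹ * ∫ x in Set.Ioo 0 ε, (if x ≤ p then c else x) = t at htle ht0 ⊢
    have hW0 : 0 ≤ (t + (1 + ε / 2)) / 2 := by linarith
    rcases le_or_gt γ 0 with h0 | h0
    · have := mul_nonpos_of_nonpos_of_nonneg h0 hW0
      calc γ * ((t + (1 + ε / 2)) / 2) ≤ 0 := this
        _ ≤ (c + c) / 2 := by linarith
    · have h1 : γ * ((t + (1 + ε / 2)) / 2) ≤ γ' * ((t + (1 + ε / 2)) / 2) :=
        mul_le_mul_of_nonneg_right hγγ' hW0
      have h2 : γ' * ((t + (1 + ε / 2)) / 2) ≤ (c + c) / 2 := by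
        nlinarith [mul_le_mul_of_nonneg_left htle (by linarith : (0:ℝ) ≤ γ'),
          mul_le_mul_of_nonneg_left hε1 (by linarith : (0:ℝ) ≤ γ')]
      linarith
  · -- price is high; take buyer value 1, so no trade happens
    push_neg at hp
    refine ⟨1, zero_le_one, ?_⟩
    have hiff : ∀ x : ℝ, (if x ≤ p ∧ p ≤ (1:ℝ) then (1:ℝ) else x) = x := by
      intro x; rw [if_neg]; exact fun h => absurd h.2 (not_le.2 hp)
    simp_rw [hiff]
    have hid : IntegrableOn (fun x : ℝ => x) (Set.Ioo 0 ε) volume :=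
      (continuous_id.integrableOn_Icc).mono_set Set.Ioo_subset_Icc_self
    have hid2 : IntegrableOn (fun x : ℝ => x) (Set.Ioo 1 (1 + ε)) volume :=
      (continuous_id.integrableOn_Icc).mono_set Set.Ioo_subset_Icc_self
    have hf1 : Integrable (fun x : ℝ => x) (unifIoo 0 ε) := integrable_unifIoo hε hid
    have hf2 : Integrable (fun x : ℝ => x) (unifIoo 1 (1 + ε)) := integrable_unifIoo hε' hid2
    have hg1 : Integrable (fun x => max x 1) (unifIoo 0 ε) :=
      integrable_unifIoo hε
        (((continuous_id.max continuous_const).integrableOn_Icc).mono_set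
          Set.Ioo_subset_Icc_self)
    have hg2 : Integrable (fun x => max x 1) (unifIoo 1 (1 + ε)) :=
      integrable_unifIoo hε'
        (((continuous_id.max continuous_const).integrableOn_Icc).mono_set
          Set.Ioo_subset_Icc_self)
    rw [integral_sellerMix hf1 hf2, integral_sellerMix hg1 hg2,
      integral_unifIoo hε, integral_unifIoo hε, integral_unifIoo hε', integral_unifIoo hε']
    have e1 : ∫ x in Set.Ioo 0 ε, x = (ε ^ 2 - 0 ^ 2) / 2 := setIntegral_Ioo_id hε.le
    have e2 : ∫ x in Set.Ioo 1 (1 + ε), x = ((1 + ε) ^ 2 - 1 ^ 2) / 2 :=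
      setIntegral_Ioo_id hε'.le
    have e3 : ∫ x in Set.Ioo 0 ε, max x 1 = ε * 1 := by
      rw [setIntegral_congr_fun measurableSet_Ioo
        (fun x hx => max_eq_right (by have := hx.2; linarith)),
        setIntegral_Ioo_const hε.le]
      ring
    have e4 : ∫ x in Set.Ioo 1 (1 + ε), max x 1 = ((1 + ε) ^ 2 - 1 ^ 2) / 2 := by
      rw [setIntegral_congr_fun measurableSet_Ioo
        (fun x hx => max_eq_left (by have := hx.1; linarith))]
      exact setIntegral_Ioo_id hε'.le
    rw [e1, e2, e3, e4]
    have hεne : ε ≠ 0 := hε.ne'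
    have r1 : (ε - 0)⁻¹ * ((ε ^ 2 - 0 ^ 2) / 2) = ε / 2 := by
      rw [show ε - 0 = ε by ring]; field_simp; ring
    have r2 : ((1:ℝ) + ε - 1)⁻¹ * (((1 + ε) ^ 2 - 1 ^ 2) / 2) = 1 + ε / 2 := by
      rw [show (1:ℝ) + ε - 1 = ε by ring]; field_simp; ring
    have r3 : (ε - 0)⁻¹ * (ε * 1) = 1 := by
      rw [show ε - 0 = ε by ring]; field_simp
    rw [r1, r2, r3]
    have hWnn : (0:ℝ) ≤ (ε / 2 + (1 + ε / 2)) / 2 := by linarith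
    have h1 : γ * ((ε / 2 + (1 + ε / 2)) / 2) ≤ γ' * ((ε / 2 + (1 + ε / 2)) / 2) :=
      mul_le_mul_of_nonneg_right hγγ' hWnn
    have h2 : γ' * ((ε / 2 + (1 + ε / 2)) / 2) ≤ (1 + (1 + ε / 2)) / 2 := by
      nlinarith [mul_le_mul_of_nonneg_left hε2 (by linarith : (0:ℝ) ≤ γ' - 1/2)]
    linarith
end

section
/- Suppose v_s has an exact median M_s and v_b has an exact median M_b. Then there exists a trade price p ∈ ℝ such that E[W_p] ≥ (28/55)·E[max(v_s, v_b)]; that is, some fixed-price mechanism achieves a 55/28-approximation to the optimal welfare. -/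
set_option maxHeartbeats 1000000
set_option linter.unusedSectionVars false
set_option linter.unusedVariables false

open MeasureTheory ProbabilityTheory Set

lemma caseB_core (a m u g Mb Om : ℝ)
    (hu0 : 0 ≤ u) (hum : 2*u ≤ m) (hma : m ≤ a + u)
    (hMb0 : 0 ≤ Mb) (hMbm : Mb ≤ m)
    (hg0 : 0 ≤ g) (hg2 : 2*g ≤ 1) (ha0 : 0 ≤ a)
    (k25 : Om < 25*a) (h0 : a < 28/55*Om)
    (S1 : a + g*u - Om/55 < m/2)
    (S2 : a + 2*(g*u) - u/2 - Om/55 < Mb/2)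
    (S4 : Om < a + 4/3*(28/55*Om - a) + 4*a*g + u/2 + Mb/2)
    (S4b : Om < a + 4/3*(28/55*Om - a) + 4*a*g + g*u + m/2)
    (E4 : (u-(m-Mb)/2)*(Om-a-u/2) ≤ Mb*(28/55*Om-a)) : False := by
  nlinarith [mul_nonneg hg0 hu0, mul_nonneg hMb0 ha0,
    mul_nonneg (sub_nonneg.2 hMbm) ha0, sq_nonneg (u - Mb), sq_nonneg (m - 2*u),
    mul_nonneg hg0 ha0, sq_nonneg (Om/55 - a + u), mul_nonneg hu0 ha0,
    sq_nonneg (a - u), mul_nonneg (mul_nonneg hg0 hu0) ha0]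

lemma arith_main (a m u g bs Mb f bb sb Om F3 B3 B4 : ℝ)
    (hu0 : 0 ≤ u) (hum : 2*u ≤ m) (hma : m ≤ a + u)
    (hMb0 : 0 ≤ Mb) (hMbm : Mb ≤ m)
    (hg0 : 0 ≤ g) (hg2 : 2*g ≤ 1)
    (hf0 : 0 ≤ f) (hf2 : 2*f ≤ 1)
    (hfu : u ≤ (m - Mb)/2 + Mb*f)
    (hbb1 : bs + (m-Mb)*g ≤ bb) (hbb2 : bb ≤ bs + (m-Mb)/2)
    (hsb1 : u - (m-Mb)/2 ≤ sb) (hsb0 : 0 ≤ sb) (hsbu : sb ≤ u)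
    (hbs0 : 0 ≤ bs) (ha0 : 0 ≤ a)
    (hO1 : Om ≤ a + bs + g*u + m/2)
    (hO2 : Om ≤ a + bs + u/2 + Mb/2)
    (hO3 : Om ≤ a + bb + sb)
    (hOa : a ≤ Om)
    (hF30 : 0 ≤ F3) (hF31 : F3 ≤ 1) (hF3 : Om - 8*a ≤ F3*Om)
    (hB30 : 0 ≤ B3) (hB3 : 3/4*Om - a ≤ B3)
    (hB40 : 0 ≤ B4) (hB4 : bs - 4*a*g ≤ B4)
    (h0 : a < 28/55*Om)
    (h1 : a + bs/2 + g*u < 28/55*Om)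
    (h2 : a + f*bb + sb/2 < 28/55*Om)
    (h3 : a + F3*B3 < 28/55*Om)
    (h4 : a + 3/4*B4 < 28/55*Om) : False := by
  have hOm0 : 0 < Om := lt_of_le_of_lt ha0 (by linarith)
  have key3 : Om < 25*a := by
    nlinarith [mul_nonneg hF30 hB30, mul_le_mul_of_nonneg_right hF3 hB30,
      mul_le_mul_of_nonneg_left hB3 hF30, mul_nonneg (mul_nonneg hF30 hOm0.le) hB30,
      mul_pos hOm0 hOm0, sq_nonneg (Om - 8*a), mul_nonneg ha0 hOm0.le]
  have hgu : 0 ≤ g*u := mul_nonneg hg0 hu0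
  have S1 : a + g*u - Om/55 < m/2 := by linarith
  have S2 : a + 2*(g*u) - u/2 - Om/55 < Mb/2 := by linarith
  have hB4' : bs < 4/3*(28/55*Om - a) + 4*a*g := by linarith
  have S4 : Om < a + 4/3*(28/55*Om - a) + 4*a*g + u/2 + Mb/2 := by linarith
  have S4b : Om < a + 4/3*(28/55*Om - a) + 4*a*g + g*u + m/2 := by
    linarith only [hO1, hB4']
  rcases le_or_gt (2*u) (m - Mb) with hA | hB
  · -- case A : linear contradiction
    linarith only [S2, hA, hma, key3, hgu, ha0, hu0]
  · -- case B
    have hS0 : 0 ≤ u - (m-Mb)/2 := by linarith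
    have hbb0 : 0 ≤ bb := by nlinarith [mul_nonneg (sub_nonneg.2 hMbm) hg0]
    have hE2 : (u-(m-Mb)/2)*bb + Mb*(sb/2) ≤ Mb*(28/55*Om - a) := by
      have t1 : (u-(m-Mb)/2)*bb ≤ (Mb*f)*bb := by
        apply mul_le_mul_of_nonneg_right _ hbb0; linarith
      have t2 : Mb*(f*bb + sb/2) ≤ Mb*(28/55*Om - a) := by
        apply mul_le_mul_of_nonneg_left _ hMb0; linarith
      nlinarith [t1, t2]
    have E4 : (u-(m-Mb)/2)*(Om-a-u/2) ≤ Mb*(28/55*Om-a) := by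
      have t3 : (u-(m-Mb)/2)*(Om-a-u/2-Mb/2) ≤ (u-(m-Mb)/2)*bb := by
        apply mul_le_mul_of_nonneg_left _ hS0
        have : bs + (m-Mb)*g ≤ bb := hbb1
        nlinarith [mul_nonneg (sub_nonneg.2 hMbm) hg0]
      have t4 : Mb*(u-(m-Mb)/2) ≤ Mb*sb := mul_le_mul_of_nonneg_left hsb1 hMb0
      nlinarith [t3, t4, hE2]
    exact caseB_core a m u g Mb Om hu0 hum hma hMb0 hMbm hg0 hg2 ha0 key3 h0 S1 S2 S4 S4b E4


section helpers
variable {α : Type*} [MeasurableSpace α] {μ : Measure α} [IsProbabilityMeasure μ]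
variable {X Y : α → ℝ}

lemma ind_le_eq (q : ℝ) : (fun ω => if X ω ≤ q then (1:ℝ) else 0)
    = Set.indicator {ω | X ω ≤ q} (fun _ => (1:ℝ)) := by
  funext ω; by_cases h : X ω ≤ q <;> simp [Set.indicator_apply, h]

lemma ind_ge_eq (q : ℝ) : (fun ω => if q ≤ X ω then (1:ℝ) else 0)
    = Set.indicator {ω | q ≤ X ω} (fun _ => (1:ℝ)) := by
  funext ω; by_cases h : q ≤ X ω <;> simp [Set.indicator_apply, h]

lemma meas_set_le (hX : Measurable X) (q : ℝ) : MeasurableSet {ω | X ω ≤ q} :=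
  hX measurableSet_Iic

lemma meas_set_ge (hX : Measurable X) (q : ℝ) : MeasurableSet {ω | q ≤ X ω} :=
  hX measurableSet_Ici

lemma int_ind_le (hX : Measurable X) (q : ℝ) :
    ∫ ω, (if X ω ≤ q then (1:ℝ) else 0) ∂μ = (μ {ω | X ω ≤ q}).toReal := by
  rw [ind_le_eq q]
  have h1 : Set.indicator {ω | X ω ≤ q} (fun _ => (1:ℝ))
      = Set.indicator {ω | X ω ≤ q} (1 : α → ℝ) := rfl
  rw [h1, integral_indicator_one (meas_set_le hX q)]
  rfl

lemma int_ind_ge (hX : Measurable X) (q : ℝ) :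
    ∫ ω, (if q ≤ X ω then (1:ℝ) else 0) ∂μ = (μ {ω | q ≤ X ω}).toReal := by
  rw [ind_ge_eq q]
  have h1 : Set.indicator {ω | q ≤ X ω} (fun _ => (1:ℝ))
      = Set.indicator {ω | q ≤ X ω} (1 : α → ℝ) := rfl
  rw [h1, integral_indicator_one (meas_set_ge hX q)]
  rfl

lemma integ_ind_le (hX : Measurable X) (q : ℝ) :
    Integrable (fun ω => if X ω ≤ q then (1:ℝ) else 0) μ := by
  rw [ind_le_eq q]
  exact (integrable_const (1:ℝ)).indicator (meas_set_le hX q)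

lemma integ_ind_ge (hX : Measurable X) (q : ℝ) :
    Integrable (fun ω => if q ≤ X ω then (1:ℝ) else 0) μ := by
  rw [ind_ge_eq q]
  exact (integrable_const (1:ℝ)).indicator (meas_set_ge hX q)

lemma integ_bmax (hY : Integrable Y μ) (p : ℝ) :
    Integrable (fun ω => max (Y ω - p) 0) μ :=
  (hY.sub (integrable_const p)).pos_part

lemma integ_smax (hX : Integrable X μ) (p : ℝ) :
    Integrable (fun ω => max (p - X ω) 0) μ :=
  ((integrable_const p).sub hX).pos_part

lemma prob_toReal_nonneg (A : Set α) : 0 ≤ (μ A).toReal := ENNReal.toReal_nonneg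

lemma prob_toReal_le_one (A : Set α) : (μ A).toReal ≤ 1 := by
  have h := prob_le_one (μ := μ) (s := A)
  have := ENNReal.toReal_mono (by simp) h
  simpa using this

end helpers

section helpers2
variable {α : Type*} [MeasurableSpace α] {μ : Measure α} [IsProbabilityMeasure μ]
variable {vs vb : α → ℝ}

lemma indep_mul_eq (hindep : IndepFun vs vb μ) {φ ψ : ℝ → ℝ}
    (hφ : Measurable φ) (hψ : Measurable ψ)
    (h1 : Integrable (fun ω => φ (vs ω)) μ) (h2 : Integrable (fun ω => ψ (vb ω)) μ) :
    ∫ ω, φ (vs ω) * ψ (vb ω) ∂μ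
      = (∫ ω, φ (vs ω) ∂μ) * ∫ ω, ψ (vb ω) ∂μ :=
  (hindep.comp hφ hψ).integral_fun_mul_eq_mul_integral h1.aestronglyMeasurable h2.aestronglyMeasurable

lemma indep_mul_integ (hindep : IndepFun vs vb μ) {φ ψ : ℝ → ℝ}
    (hφ : Measurable φ) (hψ : Measurable ψ)
    (h1 : Integrable (fun ω => φ (vs ω)) μ) (h2 : Integrable (fun ω => ψ (vb ω)) μ) :
    Integrable (fun ω => φ (vs ω) * ψ (vb ω)) μ :=
  (hindep.comp hφ hψ).integrable_mul h1 h2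

lemma measurable_ind_le (q : ℝ) : Measurable (fun x : ℝ => if x ≤ q then (1:ℝ) else 0) := by
  have : (fun x : ℝ => if x ≤ q then (1:ℝ) else 0) = (Iic q).indicator (fun _ => 1) := by
    funext x; by_cases h : x ≤ q <;> simp [Set.indicator_apply, h]
  rw [this]; exact measurable_const.indicator measurableSet_Iic

lemma measurable_ind_ge (q : ℝ) : Measurable (fun x : ℝ => if q ≤ x then (1:ℝ) else 0) := by
  have : (fun x : ℝ => if q ≤ x then (1:ℝ) else 0) = (Ici q).indicator (fun _ => 1) := by
    funext x; by_cases h : q ≤ x <;> simp [Set.indicator_apply, h]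
  rw [this]; exact measurable_const.indicator measurableSet_Ici

lemma measurable_bmax (p : ℝ) : Measurable (fun x : ℝ => max (x - p) 0) :=
  (measurable_id.sub measurable_const).max measurable_const

lemma measurable_smax (p : ℝ) : Measurable (fun x : ℝ => max (p - x) 0) :=
  (measurable_const.sub measurable_id).max measurable_const

/-- The fixed-price welfare identity. -/
lemma welfare_eq (hms : Measurable vs) (hmb : Measurable vb)
    (hindep : IndepFun vs vb μ)
    (hs_int : Integrable vs μ) (hb_int : Integrable vb μ) (p : ℝ) :
    ∫ ω, (if vs ω ≤ p ∧ p ≤ vb ω then vb ω else vs ω) ∂μ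
      = (∫ ω, vs ω ∂μ)
        + (μ {ω | vs ω ≤ p}).toReal * (∫ ω, max (vb ω - p) 0 ∂μ)
        + (∫ ω, max (p - vs ω) 0 ∂μ) * (μ {ω | p ≤ vb ω}).toReal := by
  have hpt : (fun ω => if vs ω ≤ p ∧ p ≤ vb ω then vb ω else vs ω)
      = fun ω => vs ω + (if vs ω ≤ p then (1:ℝ) else 0) * max (vb ω - p) 0
          + max (p - vs ω) 0 * (if p ≤ vb ω then (1:ℝ) else 0) := by
    funext ω
    rcases le_or_gt (vs ω) p with h1 | h1
    · rcases le_or_gt p (vb ω) with h2 | h2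
      · rw [if_pos ⟨h1, h2⟩, if_pos h1, if_pos h2,
          max_eq_left (by linarith : (0:ℝ) ≤ vb ω - p),
          max_eq_left (by linarith : (0:ℝ) ≤ p - vs ω)]
        ring
      · rw [if_neg (fun hc => absurd hc.2 (not_le.2 h2)), if_pos h1, if_neg (not_le.2 h2),
          max_eq_right (by linarith : vb ω - p ≤ (0:ℝ))]
        ring
    · rw [if_neg (fun hc => absurd hc.1 (not_le.2 h1)), if_neg (not_le.2 h1),
        max_eq_right (by linarith : p - vs ω ≤ (0:ℝ))]
      ring
  have i1 : Integrable (fun ω => (if vs ω ≤ p then (1:ℝ) else 0) * max (vb ω - p) 0) μ :=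
    indep_mul_integ hindep (measurable_ind_le p) (measurable_bmax p)
      (integ_ind_le hms p) (integ_bmax hb_int p)
  have i2 : Integrable (fun ω => max (p - vs ω) 0 * (if p ≤ vb ω then (1:ℝ) else 0)) μ :=
    indep_mul_integ hindep (measurable_smax p) (measurable_ind_ge p)
      (integ_smax hs_int p) (integ_ind_ge hmb p)
  have e1 : ∫ ω, (vs ω + (if vs ω ≤ p then (1:ℝ) else 0) * max (vb ω - p) 0)
        + max (p - vs ω) 0 * (if p ≤ vb ω then (1:ℝ) else 0) ∂μ
      = (∫ ω, vs ω + (if vs ω ≤ p then (1:ℝ) else 0) * max (vb ω - p) 0 ∂μ)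
        + ∫ ω, max (p - vs ω) 0 * (if p ≤ vb ω then (1:ℝ) else 0) ∂μ :=
    integral_add (hs_int.add i1) i2
  have e2 : ∫ ω, vs ω + (if vs ω ≤ p then (1:ℝ) else 0) * max (vb ω - p) 0 ∂μ
      = (∫ ω, vs ω ∂μ) + ∫ ω, (if vs ω ≤ p then (1:ℝ) else 0) * max (vb ω - p) 0 ∂μ :=
    integral_add hs_int i1
  rw [hpt, e1, e2,
    indep_mul_eq hindep (measurable_ind_le p) (measurable_bmax p)
      (integ_ind_le hms p) (integ_bmax hb_int p),
    indep_mul_eq hindep (measurable_smax p) (measurable_ind_ge p)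
      (integ_smax hs_int p) (integ_ind_ge hmb p),
    int_ind_le hms p, int_ind_ge hmb p]

end helpers2

section helpers3
variable {α : Type*} [MeasurableSpace α] {μ : Measure α} [IsProbabilityMeasure μ]
variable {vs vb : α → ℝ}

lemma integ_max (hs_int : Integrable vs μ) (hb_int : Integrable vb μ) :
    Integrable (fun ω => max (vs ω) (vb ω)) μ := hs_int.sup hb_int

/-- a ≤ Om -/
lemma a_le_Om (hs_int : Integrable vs μ) (hb_int : Integrable vb μ) :
    ∫ ω, vs ω ∂μ ≤ ∫ ω, max (vs ω) (vb ω) ∂μ :=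
  integral_mono hs_int (integ_max hs_int hb_int) (fun ω => le_max_left _ _)

/-- plain OPT bound: Om ≤ a + β(p) + σ(p) -/
lemma opt_plain (hs_int : Integrable vs μ) (hb_int : Integrable vb μ) (p : ℝ) :
    ∫ ω, max (vs ω) (vb ω) ∂μ
      ≤ (∫ ω, vs ω ∂μ) + (∫ ω, max (vb ω - p) 0 ∂μ) + ∫ ω, max (p - vs ω) 0 ∂μ := by
  have key : ∫ ω, max (vs ω) (vb ω) ∂μ
      ≤ ∫ ω, vs ω + max (vb ω - p) 0 + max (p - vs ω) 0 ∂μ := by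
    refine integral_mono (integ_max hs_int hb_int)
      ((hs_int.add (integ_bmax hb_int p)).add (integ_smax hs_int p)) (fun ω => ?_)
    rcases le_total (vs ω) (vb ω) with h | h
    · rw [max_eq_right h]
      have := le_max_left (vb ω - p) (0:ℝ); have := le_max_left (p - vs ω) (0:ℝ)
      have := le_max_right (vb ω - p) (0:ℝ); have := le_max_right (p - vs ω) (0:ℝ)
      linarith
    · rw [max_eq_left h]
      have := le_max_right (vb ω - p) (0:ℝ); have := le_max_right (p - vs ω) (0:ℝ)
      linarith
  have e1 : ∫ ω, (vs ω + max (vb ω - p) 0) + max (p - vs ω) 0 ∂μ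
      = (∫ ω, vs ω + max (vb ω - p) 0 ∂μ) + ∫ ω, max (p - vs ω) 0 ∂μ :=
    integral_add (hs_int.add (integ_bmax hb_int p)) (integ_smax hs_int p)
  have e2 : ∫ ω, vs ω + max (vb ω - p) 0 ∂μ
      = (∫ ω, vs ω ∂μ) + ∫ ω, max (vb ω - p) 0 ∂μ :=
    integral_add hs_int (integ_bmax hb_int p)
  calc ∫ ω, max (vs ω) (vb ω) ∂μ ≤ _ := key
    _ = _ := by rw [e1, e2]

/-- tail OPT bound: Om ≤ a + β(t) + t, for t ≥ 0 and nonneg values -/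
lemma opt_tail (hs_int : Integrable vs μ) (hb_int : Integrable vb μ)
    (hs0 : ∀ ω, 0 ≤ vs ω) (hb0 : ∀ ω, 0 ≤ vb ω) {t : ℝ} (ht : 0 ≤ t) :
    ∫ ω, max (vs ω) (vb ω) ∂μ
      ≤ (∫ ω, vs ω ∂μ) + (∫ ω, max (vb ω - t) 0 ∂μ) + t := by
  have key : ∫ ω, max (vs ω) (vb ω) ∂μ
      ≤ ∫ ω, vs ω + max (vb ω - t) 0 + t ∂μ := by
    refine integral_mono (integ_max hs_int hb_int)
      ((hs_int.add (integ_bmax hb_int t)).add (integrable_const t)) (fun ω => ?_)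
    rcases le_total (vs ω) (vb ω) with h | h
    · rw [max_eq_right h]
      have := le_max_left (vb ω - t) (0:ℝ); have := le_max_right (vb ω - t) (0:ℝ)
      have := hs0 ω; rcases le_total (vb ω) t with h2 | h2 <;> linarith
    · rw [max_eq_left h]
      have := le_max_right (vb ω - t) (0:ℝ); linarith
  have e1 : ∫ ω, (vs ω + max (vb ω - t) 0) + t ∂μ
      = (∫ ω, vs ω + max (vb ω - t) 0 ∂μ) + ∫ _ω, t ∂μ :=
    integral_add (hs_int.add (integ_bmax hb_int t)) (integrable_const t)
  have e2 : ∫ ω, vs ω + max (vb ω - t) 0 ∂μ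
      = (∫ ω, vs ω ∂μ) + ∫ ω, max (vb ω - t) 0 ∂μ :=
    integral_add hs_int (integ_bmax hb_int t)
  calc ∫ ω, max (vs ω) (vb ω) ∂μ ≤ _ := key
    _ = _ := by rw [e1, e2, integral_const]; simp

/-- Markov: t ≤ a + t * Fs(t), for t ≥ 0 and vs ≥ 0 -/
lemma markov_bound (hms : Measurable vs) (hs_int : Integrable vs μ)
    (hs0 : ∀ ω, 0 ≤ vs ω) {t : ℝ} (ht : 0 ≤ t) :
    t ≤ (∫ ω, vs ω ∂μ) + t * (μ {ω | vs ω ≤ t}).toReal := by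
  have key : ∫ ω, (t : ℝ) ∂μ ≤ ∫ ω, vs ω + (if vs ω ≤ t then (1:ℝ) else 0) * t ∂μ := by
    refine integral_mono (integrable_const t)
      (hs_int.add ((integ_ind_le hms t).mul_const t)) (fun ω => ?_)
    by_cases h : vs ω ≤ t
    · rw [if_pos h]; have := hs0 ω; linarith
    · rw [if_neg h]; push_neg at h; linarith
  rw [integral_const, integral_add hs_int ((integ_ind_le hms t).mul_const t),
    integral_mul_const, int_ind_le hms t] at key
  simpa [mul_comm] using key

/-- t-trick OPT bound -/
lemma opt_ttrick (hms : Measurable vs) (hmb : Measurable vb)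
    (hindep : IndepFun vs vb μ)
    (hs_int : Integrable vs μ) (hb_int : Integrable vb μ)
    (hs0 : ∀ ω, 0 ≤ vs ω) {p t : ℝ} (ht0 : 0 ≤ t) (htp : t ≤ p) :
    ∫ ω, max (vs ω) (vb ω) ∂μ
      ≤ (∫ ω, vs ω ∂μ) + (∫ ω, max (vb ω - p) 0 ∂μ)
        + (∫ ω, max (p - vs ω) 0 ∂μ) * (μ {ω | t ≤ vb ω}).toReal
        + (μ {ω | vs ω ≤ p}).toReal * t := by
  have i3 : Integrable (fun ω => max (p - vs ω) 0 * (if t ≤ vb ω then (1:ℝ) else 0)) μ :=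
    indep_mul_integ hindep (measurable_smax p) (measurable_ind_ge t)
      (integ_smax hs_int p) (integ_ind_ge hmb t)
  have i4 : Integrable (fun ω => (if vs ω ≤ p then (1:ℝ) else 0) * t) μ :=
    (integ_ind_le hms p).mul_const t
  have key : ∫ ω, max (vs ω) (vb ω) ∂μ
      ≤ ∫ ω, vs ω + max (vb ω - p) 0
          + max (p - vs ω) 0 * (if t ≤ vb ω then (1:ℝ) else 0)
          + (if vs ω ≤ p then (1:ℝ) else 0) * t ∂μ := by
    refine integral_mono (integ_max hs_int hb_int)
      (((hs_int.add (integ_bmax hb_int p)).add i3).add i4) (fun ω => ?_)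
    have Hb1 := le_max_left (vb ω - p) (0:ℝ); have Hb2 := le_max_right (vb ω - p) (0:ℝ)
    have Hs1 := le_max_left (p - vs ω) (0:ℝ); have Hs2 := le_max_right (p - vs ω) (0:ℝ)
    have hsω := hs0 ω
    rcases le_total (vs ω) (vb ω) with h | h
    · rw [max_eq_right h]
      by_cases h1 : t ≤ vb ω
      · rw [if_pos h1]
        by_cases h2 : vs ω ≤ p
        · rw [if_pos h2]; rcases le_total (vb ω) p with h3 | h3 <;> nlinarith
        · rw [if_neg h2]; push_neg at h2; nlinarith
      · push_neg at h1
        rw [if_neg (not_le.2 h1), if_pos (by linarith : vs ω ≤ p)]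
        nlinarith
    · rw [max_eq_left h]
      by_cases h1 : t ≤ vb ω <;> by_cases h2 : vs ω ≤ p <;>
        simp only [if_pos, if_neg, h1, h2, if_true, if_false] <;> nlinarith
  have e1 : ∫ ω, (vs ω + max (vb ω - p) 0
          + max (p - vs ω) 0 * (if t ≤ vb ω then (1:ℝ) else 0))
          + (if vs ω ≤ p then (1:ℝ) else 0) * t ∂μ
      = (∫ ω, vs ω + max (vb ω - p) 0
          + max (p - vs ω) 0 * (if t ≤ vb ω then (1:ℝ) else 0) ∂μ)
        + ∫ ω, (if vs ω ≤ p then (1:ℝ) else 0) * t ∂μ :=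
    integral_add ((hs_int.add (integ_bmax hb_int p)).add i3) i4
  have e2 : ∫ ω, (vs ω + max (vb ω - p) 0)
          + max (p - vs ω) 0 * (if t ≤ vb ω then (1:ℝ) else 0) ∂μ
      = (∫ ω, vs ω + max (vb ω - p) 0 ∂μ)
        + ∫ ω, max (p - vs ω) 0 * (if t ≤ vb ω then (1:ℝ) else 0) ∂μ :=
    integral_add (hs_int.add (integ_bmax hb_int p)) i3
  have e3 : ∫ ω, vs ω + max (vb ω - p) 0 ∂μ
      = (∫ ω, vs ω ∂μ) + ∫ ω, max (vb ω - p) 0 ∂μ :=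
    integral_add hs_int (integ_bmax hb_int p)
  calc ∫ ω, max (vs ω) (vb ω) ∂μ ≤ _ := key
    _ = _ := by
      rw [e1, e2, e3,
        indep_mul_eq hindep (measurable_smax p) (measurable_ind_ge t)
          (integ_smax hs_int p) (integ_ind_ge hmb t),
        int_ind_ge hmb t, integral_mul_const, int_ind_le hms p]

end helpers3

section helpers4
variable {α : Type*} [MeasurableSpace α] {μ : Measure α} [IsProbabilityMeasure μ]
variable {vs vb : α → ℝ}

/-- σ(m) ≤ (m-Mb)*Fs(m) + Mb*Fs(Mb), for 0 ≤ Mb ≤ m, vs ≥ 0 -/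
lemma sigma_split (hms : Measurable vs) (hs_int : Integrable vs μ)
    (hs0 : ∀ ω, 0 ≤ vs ω) {Mb m : ℝ} (h0 : 0 ≤ Mb) (h1 : Mb ≤ m) :
    ∫ ω, max (m - vs ω) 0 ∂μ
      ≤ (m - Mb) * (μ {ω | vs ω ≤ m}).toReal + Mb * (μ {ω | vs ω ≤ Mb}).toReal := by
  have key : ∫ ω, max (m - vs ω) 0 ∂μ
      ≤ ∫ ω, (if vs ω ≤ m then (1:ℝ) else 0) * (m - Mb)
          + (if vs ω ≤ Mb then (1:ℝ) else 0) * Mb ∂μ := by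
    refine integral_mono (integ_smax hs_int m)
      (((integ_ind_le hms m).mul_const _).add ((integ_ind_le hms Mb).mul_const _))
      (fun ω => ?_)
    have hsω := hs0 ω
    by_cases hA : vs ω ≤ m <;> by_cases hB : vs ω ≤ Mb <;>
      simp only [hA, hB, if_true, if_false, one_mul, zero_mul] <;>
      rcases max_cases (m - vs ω) (0:ℝ) with ⟨he, _⟩ | ⟨he, _⟩ <;> rw [he] <;> linarith
  have e1 : ∫ ω, (if vs ω ≤ m then (1:ℝ) else 0) * (m - Mb)
          + (if vs ω ≤ Mb then (1:ℝ) else 0) * Mb ∂μ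
      = (∫ ω, (if vs ω ≤ m then (1:ℝ) else 0) * (m - Mb) ∂μ)
        + ∫ ω, (if vs ω ≤ Mb then (1:ℝ) else 0) * Mb ∂μ :=
    integral_add ((integ_ind_le hms m).mul_const _) ((integ_ind_le hms Mb).mul_const _)
  rw [e1, integral_mul_const, integral_mul_const, int_ind_le hms m, int_ind_le hms Mb] at key
  calc ∫ ω, max (m - vs ω) 0 ∂μ ≤ _ := key
    _ = _ := by ring

/-- m ≤ a + σ(m) -/
lemma m_le_a_add_sigma (hs_int : Integrable vs μ) (m : ℝ) :
    m ≤ (∫ ω, vs ω ∂μ) + ∫ ω, max (m - vs ω) 0 ∂μ := by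
  have key : ∫ ω, (m : ℝ) ∂μ ≤ ∫ ω, vs ω + max (m - vs ω) 0 ∂μ := by
    refine integral_mono (integrable_const m) (hs_int.add (integ_smax hs_int m)) (fun ω => ?_)
    rcases max_cases (m - vs ω) (0:ℝ) with ⟨he, _⟩ | ⟨he, h2⟩ <;> rw [he] <;> linarith
  rw [integral_const, integral_add hs_int (integ_smax hs_int m)] at key
  simpa using key

/-- β(p) ≤ β(p') + (p'-p)*Gb(p) for p ≤ p' -/
lemma beta_lip_upper (hmb : Measurable vb) (hb_int : Integrable vb μ)
    {p p' : ℝ} (h : p ≤ p') :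
    ∫ ω, max (vb ω - p) 0 ∂μ
      ≤ (∫ ω, max (vb ω - p') 0 ∂μ) + (p' - p) * (μ {ω | p ≤ vb ω}).toReal := by
  have key : ∫ ω, max (vb ω - p) 0 ∂μ
      ≤ ∫ ω, max (vb ω - p') 0 + (if p ≤ vb ω then (1:ℝ) else 0) * (p' - p) ∂μ := by
    refine integral_mono (integ_bmax hb_int p)
      ((integ_bmax hb_int p').add ((integ_ind_ge hmb p).mul_const _)) (fun ω => ?_)
    by_cases hA : p ≤ vb ω <;>
      simp only [hA, if_true, if_false, one_mul, zero_mul] <;>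
      rcases max_cases (vb ω - p) (0:ℝ) with ⟨he, _⟩ | ⟨he, _⟩ <;> rw [he] <;>
      rcases max_cases (vb ω - p') (0:ℝ) with ⟨he2, _⟩ | ⟨he2, _⟩ <;> rw [he2] <;> linarith
  have e1 : ∫ ω, max (vb ω - p') 0 + (if p ≤ vb ω then (1:ℝ) else 0) * (p' - p) ∂μ
      = (∫ ω, max (vb ω - p') 0 ∂μ)
        + ∫ ω, (if p ≤ vb ω then (1:ℝ) else 0) * (p' - p) ∂μ :=
    integral_add (integ_bmax hb_int p') ((integ_ind_ge hmb p).mul_const _)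
  rw [e1, integral_mul_const, int_ind_ge hmb p] at key
  calc ∫ ω, max (vb ω - p) 0 ∂μ ≤ _ := key
    _ = _ := by ring

/-- β(p') + (p'-p)*Gb(p') ≤ β(p) for p ≤ p' -/
lemma beta_lip_lower (hmb : Measurable vb) (hb_int : Integrable vb μ)
    {p p' : ℝ} (h : p ≤ p') :
    (∫ ω, max (vb ω - p') 0 ∂μ) + (p' - p) * (μ {ω | p' ≤ vb ω}).toReal
      ≤ ∫ ω, max (vb ω - p) 0 ∂μ := by
  have key : ∫ ω, max (vb ω - p') 0 + (if p' ≤ vb ω then (1:ℝ) else 0) * (p' - p) ∂μ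
      ≤ ∫ ω, max (vb ω - p) 0 ∂μ := by
    refine integral_mono ((integ_bmax hb_int p').add ((integ_ind_ge hmb p').mul_const _))
      (integ_bmax hb_int p) (fun ω => ?_)
    by_cases hA : p' ≤ vb ω <;>
      simp only [hA, if_true, if_false, one_mul, zero_mul] <;>
      rcases max_cases (vb ω - p) (0:ℝ) with ⟨he, _⟩ | ⟨he, _⟩ <;> rw [he] <;>
      rcases max_cases (vb ω - p') (0:ℝ) with ⟨he2, _⟩ | ⟨he2, _⟩ <;> rw [he2] <;> linarith
  have e1 : ∫ ω, max (vb ω - p') 0 + (if p' ≤ vb ω then (1:ℝ) else 0) * (p' - p) ∂μ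
      = (∫ ω, max (vb ω - p') 0 ∂μ)
        + ∫ ω, (if p' ≤ vb ω then (1:ℝ) else 0) * (p' - p) ∂μ :=
    integral_add (integ_bmax hb_int p') ((integ_ind_ge hmb p').mul_const _)
  rw [e1, integral_mul_const, int_ind_ge hmb p'] at key
  calc _ = _ := by ring
    _ ≤ ∫ ω, max (vb ω - p) 0 ∂μ := key

/-- σ(p') ≤ σ(p) + (p'-p)*Fs(p') for p ≤ p' -/
lemma sigma_lip (hms : Measurable vs) (hs_int : Integrable vs μ)
    {p p' : ℝ} (h : p ≤ p') :
    ∫ ω, max (p' - vs ω) 0 ∂μ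
      ≤ (∫ ω, max (p - vs ω) 0 ∂μ) + (p' - p) * (μ {ω | vs ω ≤ p'}).toReal := by
  have key : ∫ ω, max (p' - vs ω) 0 ∂μ
      ≤ ∫ ω, max (p - vs ω) 0 + (if vs ω ≤ p' then (1:ℝ) else 0) * (p' - p) ∂μ := by
    refine integral_mono (integ_smax hs_int p')
      ((integ_smax hs_int p).add ((integ_ind_le hms p').mul_const _)) (fun ω => ?_)
    by_cases hA : vs ω ≤ p' <;>
      simp only [hA, if_true, if_false, one_mul, zero_mul] <;>
      rcases max_cases (p' - vs ω) (0:ℝ) with ⟨he, _⟩ | ⟨he, _⟩ <;> rw [he] <;>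
      rcases max_cases (p - vs ω) (0:ℝ) with ⟨he2, _⟩ | ⟨he2, _⟩ <;> rw [he2] <;> linarith
  have e1 : ∫ ω, max (p - vs ω) 0 + (if vs ω ≤ p' then (1:ℝ) else 0) * (p' - p) ∂μ
      = (∫ ω, max (p - vs ω) 0 ∂μ)
        + ∫ ω, (if vs ω ≤ p' then (1:ℝ) else 0) * (p' - p) ∂μ :=
    integral_add (integ_smax hs_int p) ((integ_ind_le hms p').mul_const _)
  rw [e1, integral_mul_const, int_ind_le hms p'] at key
  calc ∫ ω, max (p' - vs ω) 0 ∂μ ≤ _ := key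
    _ = _ := by ring

/-- σ monotone -/
lemma sigma_mono (hs_int : Integrable vs μ) {p p' : ℝ} (h : p ≤ p') :
    ∫ ω, max (p - vs ω) 0 ∂μ ≤ ∫ ω, max (p' - vs ω) 0 ∂μ := by
  refine integral_mono (integ_smax hs_int p) (integ_smax hs_int p') (fun ω => ?_)
  exact max_le_max (by linarith) le_rfl

end helpers4




/-- There is a trade price whose fixed-price mechanism achieves a `55/28`-approximation
to the optimal expected welfare in bilateral trade, when the seller's value has an
exact median `Ms` and the buyer's value has an exact median `Mb`. -/
theorem exists_price_fiftyfive_over_twentyeight_approximation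
    {Ω : Type*} [MeasurableSpace Ω] (μ : Measure Ω) [IsProbabilityMeasure μ]
    (vs vb : Ω → ℝ) (Ms Mb : ℝ)
    (hmeas_s : Measurable vs) (hmeas_b : Measurable vb)
    (hindep : IndepFun vs vb μ)
    (hs_nonneg : ∀ ω, 0 ≤ vs ω) (hb_nonneg : ∀ ω, 0 ≤ vb ω)
    (hs_int : Integrable vs μ) (hb_int : Integrable vb μ)
    (hmeds_le : μ {ω | vs ω ≤ Ms} = 1 / 2)
    (hmeds_ge : μ {ω | Ms ≤ vs ω} = 1 / 2)
    (hmedb_le : μ {ω | vb ω ≤ Mb} = 1 / 2)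
    (hmedb_ge : μ {ω | Mb ≤ vb ω} = 1 / 2) :
    ∃ p : ℝ,
      (28 / 55) * ∫ ω, max (vs ω) (vb ω) ∂μ
        ≤ ∫ ω, (if vs ω ≤ p ∧ p ≤ vb ω then vb ω else vs ω) ∂μ := by
  by_contra hcon
  push_neg at hcon
  -- abbreviations (as plain terms)
  have hW : ∀ p : ℝ, ∫ ω, (if vs ω ≤ p ∧ p ≤ vb ω then vb ω else vs ω) ∂μ
      = (∫ ω, vs ω ∂μ)
        + (μ {ω | vs ω ≤ p}).toReal * (∫ ω, max (vb ω - p) 0 ∂μ)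
        + (∫ ω, max (p - vs ω) 0 ∂μ) * (μ {ω | p ≤ vb ω}).toReal :=
    fun p => welfare_eq hmeas_s hmeas_b hindep hs_int hb_int p
  have ha0 : 0 ≤ ∫ ω, vs ω ∂μ := integral_nonneg hs_nonneg
  have hOa : (∫ ω, vs ω ∂μ) ≤ ∫ ω, max (vs ω) (vb ω) ∂μ := a_le_Om hs_int hb_int
  have hOm0 : 0 ≤ ∫ ω, max (vs ω) (vb ω) ∂μ := le_trans ha0 hOa
  -- medians are nonnegative
  have hMs0 : 0 ≤ Ms := by
    by_contra h
    push_neg at h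
    have he : {ω | vs ω ≤ Ms} = ∅ :=
      Set.eq_empty_iff_forall_notMem.2 (fun ω hh => by
        have := hs_nonneg ω; simp only [Set.mem_setOf_eq] at hh; linarith)
    rw [he, measure_empty] at hmeds_le
    simp at hmeds_le
    exact (ENNReal.inv_ne_zero.mpr ENNReal.ofNat_ne_top) hmeds_le.symm
  have hMb0 : 0 ≤ Mb := by
    by_contra h
    push_neg at h
    have he : {ω | vb ω ≤ Mb} = ∅ :=
      Set.eq_empty_iff_forall_notMem.2 (fun ω hh => by
        have := hb_nonneg ω; simp only [Set.mem_setOf_eq] at hh; linarith)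
    rw [he, measure_empty] at hmedb_le
    simp at hmedb_le
    exact (ENNReal.inv_ne_zero.mpr ENNReal.ofNat_ne_top) hmedb_le.symm
  -- toReal versions of the medians
  have htr : ((1:ENNReal)/2).toReal = (1/2 : ℝ) := by
    rw [ENNReal.toReal_div]; simp
  have hFm : (μ {ω | vs ω ≤ Ms}).toReal = (1/2 : ℝ) := by rw [hmeds_le, htr]
  have hGmb : (μ {ω | Mb ≤ vb ω}).toReal = (1/2 : ℝ) := by rw [hmedb_ge, htr]
  -- no-trade price: h0
  have h0 : (∫ ω, vs ω ∂μ) < 28/55 * ∫ ω, max (vs ω) (vb ω) ∂μ := by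
    have hc := hcon (-1)
    have he : (fun ω => if vs ω ≤ -1 ∧ -1 ≤ vb ω then vb ω else vs ω) = vs := by
      funext ω
      exact if_neg (fun hh => by have := hs_nonneg ω; linarith [hh.1])
    rw [he] at hc
    exact hc
  -- Markov price Om/8 : facts F3  B3
  have hF30 : 0 ≤ (μ {ω | vs ω ≤ (∫ ω, max (vs ω) (vb ω) ∂μ)/8}).toReal := ENNReal.toReal_nonneg
  have hF31 : (μ {ω | vs ω ≤ (∫ ω, max (vs ω) (vb ω) ∂μ)/8}).toReal ≤ 1 := prob_toReal_le_one _
  have hmk3 := markov_bound hmeas_s hs_int hs_nonneg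
    (t := (∫ ω, max (vs ω) (vb ω) ∂μ)/8) (by linarith)
  have hF3 : (∫ ω, max (vs ω) (vb ω) ∂μ) - 8*(∫ ω, vs ω ∂μ)
      ≤ (μ {ω | vs ω ≤ (∫ ω, max (vs ω) (vb ω) ∂μ)/8}).toReal * ∫ ω, max (vs ω) (vb ω) ∂μ := by
    nlinarith [hmk3]
  have hB30 : 0 ≤ ∫ ω, max (vb ω - (∫ ω, max (vs ω) (vb ω) ∂μ)/8) 0 ∂μ :=
    integral_nonneg (fun ω => le_max_right _ _)
  have htail := opt_tail hs_int hb_int hs_nonneg hb_nonneg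
    (t := (∫ ω, max (vs ω) (vb ω) ∂μ)/8) (by linarith)
  have hB3 : 3/4*(∫ ω, max (vs ω) (vb ω) ∂μ) - (∫ ω, vs ω ∂μ)
      ≤ ∫ ω, max (vb ω - (∫ ω, max (vs ω) (vb ω) ∂μ)/8) 0 ∂μ := by linarith
  have h3 : (∫ ω, vs ω ∂μ)
      + (μ {ω | vs ω ≤ (∫ ω, max (vs ω) (vb ω) ∂μ)/8}).toReal
        * (∫ ω, max (vb ω - (∫ ω, max (vs ω) (vb ω) ∂μ)/8) 0 ∂μ)
      < 28/55 * ∫ ω, max (vs ω) (vb ω) ∂μ := by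
    have hc := hcon ((∫ ω, max (vs ω) (vb ω) ∂μ)/8)
    rw [hW _] at hc
    have hnn : 0 ≤ (∫ ω, max ((∫ ω, max (vs ω) (vb ω) ∂μ)/8 - vs ω) 0 ∂μ)
        * (μ {ω | (∫ ω, max (vs ω) (vb ω) ∂μ)/8 ≤ vb ω}).toReal :=
      mul_nonneg (integral_nonneg (fun ω => le_max_right _ _)) ENNReal.toReal_nonneg
    linarith
  have key25 : (∫ ω, max (vs ω) (vb ω) ∂μ) < 25 * ∫ ω, vs ω ∂μ := by
    nlinarith [mul_nonneg hF30 hB30, mul_le_mul_of_nonneg_right hF3 hB30,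
      mul_le_mul_of_nonneg_left hB3 hF30, mul_nonneg (mul_nonneg hF30 hOm0) hB30,
      sq_nonneg ((∫ ω, max (vs ω) (vb ω) ∂μ) - 8*(∫ ω, vs ω ∂μ)),
      mul_nonneg ha0 hOm0]
  have hapos : 0 < ∫ ω, vs ω ∂μ := by linarith
  -- case split on the medians
  rcases le_or_gt Ms Mb with hI | hII
  · -- Case I : Ms ≤ Mb, use price Ms
    have hsub : μ {ω | Mb ≤ vb ω} ≤ μ {ω | Ms ≤ vb ω} :=
      measure_mono (fun ω h => le_trans hI h)
    have hg12 : (1/2 : ℝ) ≤ (μ {ω | Ms ≤ vb ω}).toReal := by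
      rw [← hGmb]; exact ENNReal.toReal_mono (measure_ne_top μ _) hsub
    have hu0 : 0 ≤ ∫ ω, max (Ms - vs ω) 0 ∂μ := integral_nonneg (fun ω => le_max_right _ _)
    have h1 := hcon Ms
    rw [hW Ms, hFm] at h1
    have hOp := opt_plain hs_int hb_int (p := Ms)
    have hprod : (∫ ω, max (Ms - vs ω) 0 ∂μ) * (1/2 : ℝ)
        ≤ (∫ ω, max (Ms - vs ω) 0 ∂μ) * (μ {ω | Ms ≤ vb ω}).toReal :=
      mul_le_mul_of_nonneg_left hg12 hu0
    linarith
  · -- Case II : Mb < Ms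
    have hu0 : 0 ≤ ∫ ω, max (Ms - vs ω) 0 ∂μ := integral_nonneg (fun ω => le_max_right _ _)
    have hbs0 : 0 ≤ ∫ ω, max (vb ω - Ms) 0 ∂μ := integral_nonneg (fun ω => le_max_right _ _)
    have hsb0 : 0 ≤ ∫ ω, max (Mb - vs ω) 0 ∂μ := integral_nonneg (fun ω => le_max_right _ _)
    have hsplit0 := sigma_split hmeas_s hs_int hs_nonneg (Mb := 0) (m := Ms) le_rfl hMs0
    rw [hFm] at hsplit0
    have hum : 2*(∫ ω, max (Ms - vs ω) 0 ∂μ) ≤ Ms := by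
      have hnn : 0 ≤ (0:ℝ) * (μ {ω | vs ω ≤ (0:ℝ)}).toReal := by
        simp
      nlinarith [hsplit0]
    have hma := m_le_a_add_sigma hs_int (μ := μ) (vs := vs) Ms
    have hg0 : 0 ≤ (μ {ω | Ms ≤ vb ω}).toReal := ENNReal.toReal_nonneg
    have hg2 : 2*(μ {ω | Ms ≤ vb ω}).toReal ≤ 1 := by
      have hsub : μ {ω | Ms ≤ vb ω} ≤ μ {ω | Mb ≤ vb ω} :=
        measure_mono (fun ω h => le_trans hII.le h)
      have := ENNReal.toReal_mono (measure_ne_top μ _) hsub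
      rw [hGmb] at this; linarith
    have hf0 : 0 ≤ (μ {ω | vs ω ≤ Mb}).toReal := ENNReal.toReal_nonneg
    have hf2 : 2*(μ {ω | vs ω ≤ Mb}).toReal ≤ 1 := by
      have hsub : μ {ω | vs ω ≤ Mb} ≤ μ {ω | vs ω ≤ Ms} :=
        measure_mono (fun ω h => le_trans h hII.le)
      have := ENNReal.toReal_mono (measure_ne_top μ _) hsub
      rw [hFm] at this; linarith
    have hfu : (∫ ω, max (Ms - vs ω) 0 ∂μ)
        ≤ (Ms - Mb)/2 + Mb*(μ {ω | vs ω ≤ Mb}).toReal := by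
      have := sigma_split hmeas_s hs_int hs_nonneg hMb0 hII.le
      rw [hFm] at this; linarith
    have hbb1 : (∫ ω, max (vb ω - Ms) 0 ∂μ)
          + (Ms-Mb)*(μ {ω | Ms ≤ vb ω}).toReal ≤ ∫ ω, max (vb ω - Mb) 0 ∂μ :=
      beta_lip_lower hmeas_b hb_int hII.le
    have hbb2 : (∫ ω, max (vb ω - Mb) 0 ∂μ)
        ≤ (∫ ω, max (vb ω - Ms) 0 ∂μ) + (Ms-Mb)/2 := by
      have := beta_lip_upper hmeas_b hb_int hII.le
      rw [hGmb] at this; linarith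
    have hsb1 : (∫ ω, max (Ms - vs ω) 0 ∂μ) - (Ms-Mb)/2 ≤ ∫ ω, max (Mb - vs ω) 0 ∂μ := by
      have := sigma_lip hmeas_s hs_int hII.le
      rw [hFm] at this; linarith
    have hsbu : (∫ ω, max (Mb - vs ω) 0 ∂μ) ≤ ∫ ω, max (Ms - vs ω) 0 ∂μ :=
      sigma_mono hs_int hII.le
    have hO1 : (∫ ω, max (vs ω) (vb ω) ∂μ)
        ≤ (∫ ω, vs ω ∂μ) + (∫ ω, max (vb ω - Ms) 0 ∂μ)
          + (μ {ω | Ms ≤ vb ω}).toReal * (∫ ω, max (Ms - vs ω) 0 ∂μ) + Ms/2 := by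
      have := opt_ttrick hmeas_s hmeas_b hindep hs_int hb_int hs_nonneg
        (p := Ms) (t := Ms) hMs0 le_rfl
      rw [hFm] at this
      nlinarith [this]
    have hO2 : (∫ ω, max (vs ω) (vb ω) ∂μ)
        ≤ (∫ ω, vs ω ∂μ) + (∫ ω, max (vb ω - Ms) 0 ∂μ)
          + (∫ ω, max (Ms - vs ω) 0 ∂μ)/2 + Mb/2 := by
      have := opt_ttrick hmeas_s hmeas_b hindep hs_int hb_int hs_nonneg
        (p := Ms) (t := Mb) hMb0 hII.le
      rw [hFm, hGmb] at this
      linarith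
    have hO3 : (∫ ω, max (vs ω) (vb ω) ∂μ)
        ≤ (∫ ω, vs ω ∂μ) + (∫ ω, max (vb ω - Mb) 0 ∂μ) + ∫ ω, max (Mb - vs ω) 0 ∂μ :=
      opt_plain hs_int hb_int (p := Mb)
    -- price Ms+4a : F4 ≥ 3/4
    have hB40 : 0 ≤ ∫ ω, max (vb ω - (Ms + 4*(∫ ω, vs ω ∂μ))) 0 ∂μ :=
      integral_nonneg (fun ω => le_max_right _ _)
    have hB4 : (∫ ω, max (vb ω - Ms) 0 ∂μ) - 4*(∫ ω, vs ω ∂μ)*(μ {ω | Ms ≤ vb ω}).toReal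
        ≤ ∫ ω, max (vb ω - (Ms + 4*(∫ ω, vs ω ∂μ))) 0 ∂μ := by
      have := beta_lip_upper hmeas_b hb_int
        (p := Ms) (p' := Ms + 4*(∫ ω, vs ω ∂μ)) (by linarith)
      rw [show Ms + 4*(∫ ω, vs ω ∂μ) - Ms = 4*(∫ ω, vs ω ∂μ) from by ring] at this
      nlinarith [this]
    have hF41 : (μ {ω | vs ω ≤ Ms + 4*(∫ ω, vs ω ∂μ)}).toReal ≤ 1 := prob_toReal_le_one _
    have hmk4 := markov_bound hmeas_s hs_int hs_nonneg
      (t := Ms + 4*(∫ ω, vs ω ∂μ)) (by linarith)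
    have hF4 : (3/4 : ℝ) ≤ (μ {ω | vs ω ≤ Ms + 4*(∫ ω, vs ω ∂μ)}).toReal := by
      nlinarith [hmk4, mul_nonneg hMs0 (sub_nonneg.2 hF41), hapos]
    -- candidate inequalities
    have h1 := hcon Ms
    rw [hW Ms, hFm] at h1
    have h2 := hcon Mb
    rw [hW Mb, hGmb] at h2
    have h4 : (∫ ω, vs ω ∂μ)
        + 3/4*(∫ ω, max (vb ω - (Ms + 4*(∫ ω, vs ω ∂μ))) 0 ∂μ)
        < 28/55 * ∫ ω, max (vs ω) (vb ω) ∂μ := by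
      have hc := hcon (Ms + 4*(∫ ω, vs ω ∂μ))
      rw [hW _] at hc
      have hnn : 0 ≤ (∫ ω, max ((Ms + 4*(∫ ω, vs ω ∂μ)) - vs ω) 0 ∂μ)
          * (μ {ω | Ms + 4*(∫ ω, vs ω ∂μ) ≤ vb ω}).toReal :=
        mul_nonneg (integral_nonneg (fun ω => le_max_right _ _)) ENNReal.toReal_nonneg
      nlinarith [hc, mul_le_mul_of_nonneg_right hF4 hB40]
    have A_fu : (∫ ω, max (Ms - vs ω) 0 ∂μ)
        ≤ (Ms - Mb)/2 + Mb*(μ {ω | vs ω ≤ Mb}).toReal := by linarith only [hfu]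
    have A_bb1 : (∫ ω, max (vb ω - Ms) 0 ∂μ)
          + (Ms-Mb)*(μ {ω | Ms ≤ vb ω}).toReal ≤ ∫ ω, max (vb ω - Mb) 0 ∂μ := by
      linarith only [hbb1]
    have A_bb2 : (∫ ω, max (vb ω - Mb) 0 ∂μ)
        ≤ (∫ ω, max (vb ω - Ms) 0 ∂μ) + (Ms-Mb)/2 := by linarith only [hbb2]
    have A_sb1 : (∫ ω, max (Ms - vs ω) 0 ∂μ) - (Ms-Mb)/2
        ≤ ∫ ω, max (Mb - vs ω) 0 ∂μ := by linarith only [hsb1]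
    have A_O1 : (∫ ω, max (vs ω) (vb ω) ∂μ)
        ≤ (∫ ω, vs ω ∂μ) + (∫ ω, max (vb ω - Ms) 0 ∂μ)
          + (μ {ω | Ms ≤ vb ω}).toReal * (∫ ω, max (Ms - vs ω) 0 ∂μ) + Ms/2 := by
      linarith only [hO1]
    have A_O2 : (∫ ω, max (vs ω) (vb ω) ∂μ)
        ≤ (∫ ω, vs ω ∂μ) + (∫ ω, max (vb ω - Ms) 0 ∂μ)
          + (∫ ω, max (Ms - vs ω) 0 ∂μ)/2 + Mb/2 := by linarith only [hO2]
    have A_B4 : (∫ ω, max (vb ω - Ms) 0 ∂μ)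
          - 4*(∫ ω, vs ω ∂μ)*(μ {ω | Ms ≤ vb ω}).toReal
        ≤ ∫ ω, max (vb ω - (Ms + 4*(∫ ω, vs ω ∂μ))) 0 ∂μ := by linarith only [hB4]
    have A_h1 : (∫ ω, vs ω ∂μ) + (∫ ω, max (vb ω - Ms) 0 ∂μ)/2
          + (μ {ω | Ms ≤ vb ω}).toReal * (∫ ω, max (Ms - vs ω) 0 ∂μ)
        < 28/55 * ∫ ω, max (vs ω) (vb ω) ∂μ := by linarith only [h1]
    have A_h2 : (∫ ω, vs ω ∂μ)
          + (μ {ω | vs ω ≤ Mb}).toReal * (∫ ω, max (vb ω - Mb) 0 ∂μ)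
          + (∫ ω, max (Mb - vs ω) 0 ∂μ)/2
        < 28/55 * ∫ ω, max (vs ω) (vb ω) ∂μ := by linarith only [h2]
    exact arith_main (∫ ω, vs ω ∂μ) Ms (∫ ω, max (Ms - vs ω) 0 ∂μ)
      ((μ {ω | Ms ≤ vb ω}).toReal) (∫ ω, max (vb ω - Ms) 0 ∂μ) Mb
      ((μ {ω | vs ω ≤ Mb}).toReal) (∫ ω, max (vb ω - Mb) 0 ∂μ)
      (∫ ω, max (Mb - vs ω) 0 ∂μ) (∫ ω, max (vs ω) (vb ω) ∂μ)
      ((μ {ω | vs ω ≤ (∫ ω, max (vs ω) (vb ω) ∂μ)/8}).toReal)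
      (∫ ω, max (vb ω - (∫ ω, max (vs ω) (vb ω) ∂μ)/8) 0 ∂μ)
      (∫ ω, max (vb ω - (Ms + 4*(∫ ω, vs ω ∂μ))) 0 ∂μ)
      hu0 hum hma hMb0 hII.le hg0 hg2 hf0 hf2 A_fu
      A_bb1 A_bb2 A_sb1 hsb0 hsbu hbs0 ha0
      A_O1 A_O2 hO3 hOa
      hF30 hF31 hF3 hB30 hB3 hB40 A_B4
      h0 A_h1 A_h2 h3 h4
end

section
/- Suppose v_s has an exact median M_s, v_b has an exact median M_b, and M_b ≥ M_s. Then there exists a trade price p ∈ ℝ such that E[W_p] ≥ (7/13)·E[max(v_s, v_b)]; that is, some fixed-price mechanism achieves a 13/7-approximation to the optimal welfare in this case. -/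
open MeasureTheory ProbabilityTheory

set_option maxHeartbeats 2000000 in
/-- When the buyer's median is at least the seller's median, there is a trade price
whose fixed-price mechanism achieves a `13/7`-approximation to the optimal expected
welfare in bilateral trade. -/
theorem exists_price_thirteen_over_seven_approximation
    {Ω : Type*} [MeasurableSpace Ω] (μ : Measure Ω) [IsProbabilityMeasure μ]
    (vs vb : Ω → ℝ) (Ms Mb : ℝ)
    (hmeas_s : Measurable vs) (hmeas_b : Measurable vb)
    (hindep : IndepFun vs vb μ)
    (hs_nonneg : ∀ ω, 0 ≤ vs ω) (hb_nonneg : ∀ ω, 0 ≤ vb ω)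
    (hs_int : Integrable vs μ) (hb_int : Integrable vb μ)
    (hmeds_le : μ {ω | vs ω ≤ Ms} = 1 / 2)
    (hmeds_ge : μ {ω | Ms ≤ vs ω} = 1 / 2)
    (hmedb_le : μ {ω | vb ω ≤ Mb} = 1 / 2)
    (hmedb_ge : μ {ω | Mb ≤ vb ω} = 1 / 2)
    (hMbMs : Ms ≤ Mb) :
    ∃ p : ℝ,
      (7 / 13) * ∫ ω, max (vs ω) (vb ω) ∂μ
        ≤ ∫ ω, (if vs ω ≤ p ∧ p ≤ vb ω then vb ω else vs ω) ∂μ := by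
  classical
  set a := ∫ ω, vs ω ∂μ with ha_def
  set b := ∫ ω, vb ω ∂μ with hb_def
  set T := ∫ ω, max (vs ω) (vb ω) ∂μ with hT_def
  have ha0 : 0 ≤ a := integral_nonneg hs_nonneg
  have hmax_int : Integrable (fun ω => max (vs ω) (vb ω)) μ := hs_int.sup hb_int
  have msle : ∀ p : ℝ, MeasurableSet {ω | vs ω ≤ p} :=
    fun p => measurableSet_le hmeas_s measurable_const
  have mslt : ∀ p : ℝ, MeasurableSet {ω | p < vs ω} :=
    fun p => measurableSet_lt measurable_const hmeas_s
  have mbge : ∀ p : ℝ, MeasurableSet {ω | p ≤ vb ω} :=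
    fun p => measurableSet_le measurable_const hmeas_b
  have mblt : ∀ p : ℝ, MeasurableSet {ω | vb ω < p} :=
    fun p => measurableSet_lt hmeas_b measurable_const
  have ibeta : ∀ p : ℝ, Integrable (fun ω => max (vb ω - p) 0) μ :=
    fun p => (hb_int.sub (integrable_const p)).pos_part
  have isigma : ∀ p : ℝ, Integrable (fun ω => max (p - vs ω) 0) μ :=
    fun p => ((integrable_const p).sub hs_int).pos_part
  have hbeta0 : ∀ p : ℝ, 0 ≤ ∫ ω, max (vb ω - p) 0 ∂μ :=
    fun p => integral_nonneg fun ω => le_max_right _ _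
  have hsigma0 : ∀ p : ℝ, 0 ≤ ∫ ω, max (p - vs ω) 0 ∂μ :=
    fun p => integral_nonneg fun ω => le_max_right _ _
  have heq_s : ∀ p : ℝ, (fun ω => if vs ω ≤ p then (1:ℝ) else 0)
      = Set.indicator {ω | vs ω ≤ p} (fun _ => (1:ℝ)) := by
    intro p; ext ω; simp [Set.indicator_apply, Set.mem_setOf_eq]
  have heq_b : ∀ p : ℝ, (fun ω => if p ≤ vb ω then (1:ℝ) else 0)
      = Set.indicator {ω | p ≤ vb ω} (fun _ => (1:ℝ)) := by
    intro p; ext ω; simp [Set.indicator_apply, Set.mem_setOf_eq]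
  have hint_inds : ∀ p : ℝ, Integrable (fun ω => if vs ω ≤ p then (1:ℝ) else 0) μ := by
    intro p; rw [heq_s p]; exact (integrable_const 1).indicator (msle p)
  have hint_indb : ∀ p : ℝ, Integrable (fun ω => if p ≤ vb ω then (1:ℝ) else 0) μ := by
    intro p; rw [heq_b p]; exact (integrable_const 1).indicator (mbge p)
  have hind_s_int : ∀ p : ℝ,
      ∫ ω, (if vs ω ≤ p then (1:ℝ) else 0) ∂μ = (μ {ω | vs ω ≤ p}).toReal := by
    intro p; rw [heq_s p, integral_indicator_const _ (msle p)]; simp [Measure.real]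
  have hind_b_int : ∀ p : ℝ,
      ∫ ω, (if p ≤ vb ω then (1:ℝ) else 0) ∂μ = (μ {ω | p ≤ vb ω}).toReal := by
    intro p; rw [heq_b p, integral_indicator_const _ (mbge p)]; simp [Measure.real]
  have hφ : ∀ p : ℝ, Measurable (fun x : ℝ => if x ≤ p then (1:ℝ) else 0) :=
    fun p => Measurable.ite measurableSet_Iic measurable_const measurable_const
  have hχ : ∀ p : ℝ, Measurable (fun y : ℝ => if p ≤ y then (1:ℝ) else 0) :=
    fun p => Measurable.ite measurableSet_Ici measurable_const measurable_const
  have hψ : ∀ p : ℝ, Measurable (fun y : ℝ => max (y - p) 0) :=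
    fun p => (measurable_id.sub measurable_const).max measurable_const
  have hρ : ∀ p : ℝ, Measurable (fun x : ℝ => max (p - x) 0) :=
    fun p => (measurable_const.sub measurable_id).max measurable_const
  have hprod1 : ∀ p : ℝ,
      ∫ ω, (if vs ω ≤ p then (1:ℝ) else 0) * max (vb ω - p) 0 ∂μ
        = (μ {ω | vs ω ≤ p}).toReal * ∫ ω, max (vb ω - p) 0 ∂μ := by
    intro p
    have hind2 : IndepFun (fun ω => if vs ω ≤ p then (1:ℝ) else 0)
        (fun ω => max (vb ω - p) 0) μ := hindep.comp (hφ p) (hψ p)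
    have h : ∫ ω, (if vs ω ≤ p then (1:ℝ) else 0) * max (vb ω - p) 0 ∂μ
        = (∫ ω, (if vs ω ≤ p then (1:ℝ) else 0) ∂μ) * ∫ ω, max (vb ω - p) 0 ∂μ :=
      hind2.integral_fun_mul_eq_mul_integral (hint_inds p).aestronglyMeasurable (ibeta p).aestronglyMeasurable
    rw [h, hind_s_int p]
  have hprod2 : ∀ p : ℝ,
      ∫ ω, (if p ≤ vb ω then (1:ℝ) else 0) * max (p - vs ω) 0 ∂μ
        = (μ {ω | p ≤ vb ω}).toReal * ∫ ω, max (p - vs ω) 0 ∂μ := by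
    intro p
    have hind2 : IndepFun (fun ω => if p ≤ vb ω then (1:ℝ) else 0)
        (fun ω => max (p - vs ω) 0) μ := hindep.symm.comp (hχ p) (hρ p)
    have h : ∫ ω, (if p ≤ vb ω then (1:ℝ) else 0) * max (p - vs ω) 0 ∂μ
        = (∫ ω, (if p ≤ vb ω then (1:ℝ) else 0) ∂μ) * ∫ ω, max (p - vs ω) 0 ∂μ :=
      hind2.integral_fun_mul_eq_mul_integral (hint_indb p).aestronglyMeasurable (isigma p).aestronglyMeasurable
    rw [h, hind_b_int p]
  have hf1int : ∀ p : ℝ,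
      Integrable (fun ω => (if vs ω ≤ p then (1:ℝ) else 0) * max (vb ω - p) 0) μ := by
    intro p
    exact (ibeta p).bdd_mul ((hφ p).comp hmeas_s).aestronglyMeasurable
      (c := 1) (Filter.Eventually.of_forall fun ω => by by_cases h : vs ω ≤ p <;> simp [h])
  have hf2int : ∀ p : ℝ,
      Integrable (fun ω => (if p ≤ vb ω then (1:ℝ) else 0) * max (p - vs ω) 0) μ := by
    intro p
    exact (isigma p).bdd_mul ((hχ p).comp hmeas_b).aestronglyMeasurable
      (c := 1) (Filter.Eventually.of_forall fun ω => by by_cases h : p ≤ vb ω <;> simp [h])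
  -- KEY FORMULA
  have hkey : ∀ p : ℝ,
      ∫ ω, (if vs ω ≤ p ∧ p ≤ vb ω then vb ω else vs ω) ∂μ
        = a + (μ {ω | vs ω ≤ p}).toReal * (∫ ω, max (vb ω - p) 0 ∂μ)
            + (μ {ω | p ≤ vb ω}).toReal * (∫ ω, max (p - vs ω) 0 ∂μ) := by
    intro p
    have hpt : (fun ω => if vs ω ≤ p ∧ p ≤ vb ω then vb ω else vs ω)
        = fun ω => vs ω + (if vs ω ≤ p then (1:ℝ) else 0) * max (vb ω - p) 0
            + (if p ≤ vb ω then (1:ℝ) else 0) * max (p - vs ω) 0 := by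
      ext ω
      by_cases h1 : vs ω ≤ p <;> by_cases h2 : p ≤ vb ω
      · rw [if_pos ⟨h1, h2⟩, if_pos h1, if_pos h2,
          max_eq_left (by linarith : (0:ℝ) ≤ vb ω - p),
          max_eq_left (by linarith : (0:ℝ) ≤ p - vs ω)]
        ring
      · rw [if_neg (fun h => h2 h.2), if_pos h1, if_neg h2,
          max_eq_right (by linarith : vb ω - p ≤ (0:ℝ))]
        ring
      · rw [if_neg (fun h => h1 h.1), if_neg h1, if_pos h2,
          max_eq_right (by linarith : p - vs ω ≤ (0:ℝ))]
        ring
      · rw [if_neg (fun h => h1 h.1), if_neg h1, if_neg h2]; ring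
    rw [hpt]
    have h2 : ∫ ω, (vs ω + (if vs ω ≤ p then (1:ℝ) else 0) * max (vb ω - p) 0
          + (if p ≤ vb ω then (1:ℝ) else 0) * max (p - vs ω) 0) ∂μ
        = (∫ ω, (vs ω + (if vs ω ≤ p then (1:ℝ) else 0) * max (vb ω - p) 0) ∂μ)
          + ∫ ω, (if p ≤ vb ω then (1:ℝ) else 0) * max (p - vs ω) 0 ∂μ :=
      integral_add (hs_int.add (hf1int p)) (hf2int p)
    have h3 : ∫ ω, (vs ω + (if vs ω ≤ p then (1:ℝ) else 0) * max (vb ω - p) 0) ∂μ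
        = a + ∫ ω, (if vs ω ≤ p then (1:ℝ) else 0) * max (vb ω - p) 0 ∂μ :=
      integral_add hs_int (hf1int p)
    rw [h2, h3, hprod1 p, hprod2 p]
  -- Markov
  have hmarkov : ∀ t : ℝ, 0 < t → (μ {ω | t < vs ω}).toReal * t ≤ a := by
    intro t ht
    have hpt : ∀ ω, (Set.indicator {ω | t < vs ω} (fun _ => t)) ω ≤ vs ω := by
      intro ω
      rw [Set.indicator_apply]
      split_ifs with h
      · exact le_of_lt h
      · exact hs_nonneg ω
    have h : ∫ ω, (Set.indicator {ω | t < vs ω} (fun _ => t)) ω ∂μ ≤ ∫ ω, vs ω ∂μ :=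
      integral_mono ((integrable_const t).indicator (mslt t)) hs_int hpt
    rwa [integral_indicator_const _ (mslt t), smul_eq_mul] at h
  have hFs : ∀ t : ℝ,
      (μ {ω | vs ω ≤ t}).toReal + (μ {ω | t < vs ω}).toReal = 1 := by
    intro t
    have hc : {ω | vs ω ≤ t}ᶜ = {ω | t < vs ω} := by ext ω; simp [not_le]
    have h := measure_add_measure_compl (μ := μ) (msle t)
    rw [hc, measure_univ] at h
    have h2 := congrArg ENNReal.toReal h
    rwa [ENNReal.toReal_add (measure_ne_top μ _) (measure_ne_top μ _),
      ENNReal.toReal_one] at h2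
  have hhalf : ((1:ENNReal) / 2).toReal = (1/2 : ℝ) := by
    rw [ENNReal.toReal_div]; simp
  have hvbltMb : (μ {ω | vb ω < Mb}).toReal = 1/2 := by
    have hc : {ω | vb ω < Mb}ᶜ = {ω | Mb ≤ vb ω} := by ext ω; simp [not_lt]
    have h := measure_add_measure_compl (μ := μ) (mblt Mb)
    rw [hc, hmedb_ge, measure_univ] at h
    have h2 := congrArg ENNReal.toReal h
    rw [ENNReal.toReal_add (measure_ne_top μ _) (by simp), ENNReal.toReal_one, hhalf] at h2
    linarith
  have hGMb : (μ {ω | Mb ≤ vb ω}).toReal = 1/2 := by rw [hmedb_ge, hhalf]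
  have hMb0 : 0 ≤ Mb := by
    by_contra h
    push_neg at h
    have huniv : {ω | Mb ≤ vb ω} = Set.univ :=
      Set.eq_univ_of_forall fun ω => (le_of_lt h).trans (hb_nonneg ω)
    rw [huniv, measure_univ] at hmedb_ge
    have h2 := congrArg ENNReal.toReal hmedb_ge
    rw [ENNReal.toReal_one, hhalf] at h2
    norm_num at h2
  -- OPT split at any price
  have hsplit : ∀ p : ℝ,
      T ≤ a + (∫ ω, max (p - vs ω) 0 ∂μ) + ∫ ω, max (vb ω - p) 0 ∂μ := by
    intro p
    have hpt : ∀ ω, max (vs ω) (vb ω)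
        ≤ vs ω + max (p - vs ω) 0 + max (vb ω - p) 0 := by
      intro ω
      apply max_le
      · linarith [le_max_right (p - vs ω) (0:ℝ), le_max_right (vb ω - p) (0:ℝ)]
      · linarith [le_max_left (p - vs ω) (0:ℝ), le_max_left (vb ω - p) (0:ℝ)]
    have h1 : ∫ ω, max (vs ω) (vb ω) ∂μ
        ≤ ∫ ω, (vs ω + max (p - vs ω) 0 + max (vb ω - p) 0) ∂μ :=
      integral_mono hmax_int ((hs_int.add (isigma p)).add (ibeta p)) hpt
    have h2 : ∫ ω, (vs ω + max (p - vs ω) 0 + max (vb ω - p) 0) ∂μ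
        = (∫ ω, (vs ω + max (p - vs ω) 0) ∂μ) + ∫ ω, max (vb ω - p) 0 ∂μ :=
      integral_add (hs_int.add (isigma p)) (ibeta p)
    have h3 : ∫ ω, (vs ω + max (p - vs ω) 0) ∂μ = a + ∫ ω, max (p - vs ω) 0 ∂μ :=
      integral_add hs_int (isigma p)
    linarith
  have hT1 : T ≤ a + b := by
    have hpt : ∀ ω, max (vs ω) (vb ω) ≤ vs ω + vb ω := fun ω =>
      max_le (by linarith [hb_nonneg ω]) (by linarith [hs_nonneg ω])
    have h1 : ∫ ω, max (vs ω) (vb ω) ∂μ ≤ ∫ ω, (vs ω + vb ω) ∂μ :=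
      integral_mono hmax_int (hs_int.add hb_int) hpt
    have h2 : ∫ ω, (vs ω + vb ω) ∂μ = a + b := integral_add hs_int hb_int
    linarith
  have hsigma_le : ∫ ω, max (Mb - vs ω) 0 ∂μ ≤ Mb := by
    have h : ∫ ω, max (Mb - vs ω) 0 ∂μ ≤ ∫ _ω, Mb ∂μ :=
      integral_mono (isigma Mb) (integrable_const Mb)
        (fun ω => max_le (by linarith [hs_nonneg ω]) hMb0)
    rwa [integral_const, probReal_univ, one_smul] at h
  have hbeta_shift : ∀ t : ℝ, Mb ≤ t →
      ∫ ω, max (vb ω - Mb) 0 ∂μ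
        ≤ (∫ ω, max (vb ω - t) 0 ∂μ) + (t - Mb) * (μ {ω | Mb ≤ vb ω}).toReal := by
    intro t ht
    have hpt : ∀ ω, max (vb ω - Mb) 0
        ≤ max (vb ω - t) 0 + Set.indicator {ω | Mb ≤ vb ω} (fun _ => t - Mb) ω := by
      intro ω
      rw [Set.indicator_apply]
      split_ifs with hm
      · exact max_le (by linarith [le_max_left (vb ω - t) (0:ℝ)])
          (by linarith [le_max_right (vb ω - t) (0:ℝ)])
      · simp only [Set.mem_setOf_eq, not_le] at hm
        exact max_le (by linarith [le_max_right (vb ω - t) (0:ℝ)])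
          (by linarith [le_max_right (vb ω - t) (0:ℝ)])
    have h1 : ∫ ω, max (vb ω - Mb) 0 ∂μ
        ≤ ∫ ω, (max (vb ω - t) 0 + Set.indicator {ω | Mb ≤ vb ω} (fun _ => t - Mb) ω) ∂μ :=
      integral_mono (ibeta Mb)
        ((ibeta t).add ((integrable_const (t - Mb)).indicator (mbge Mb))) hpt
    have h2 : ∫ ω, (max (vb ω - t) 0 + Set.indicator {ω | Mb ≤ vb ω} (fun _ => t - Mb) ω) ∂μ
        = (∫ ω, max (vb ω - t) 0 ∂μ)
          + ∫ ω, Set.indicator {ω | Mb ≤ vb ω} (fun _ => t - Mb) ω ∂μ :=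
      integral_add (ibeta t) ((integrable_const (t - Mb)).indicator (mbge Mb))
    have h3 : ∫ ω, Set.indicator {ω | Mb ≤ vb ω} (fun _ => t - Mb) ω ∂μ
        = (μ {ω | Mb ≤ vb ω}).toReal * (t - Mb) := by
      rw [integral_indicator_const _ (mbge Mb), smul_eq_mul]; rfl
    rw [h2, h3] at h1
    linarith
  -- welfare ≥ buyer value on trade
  have htrade_lb : ∀ p : ℝ,
      (μ {ω | vs ω ≤ p}).toReal * (∫ ω, (if p ≤ vb ω then vb ω else 0) ∂μ)
        ≤ ∫ ω, (if vs ω ≤ p ∧ p ≤ vb ω then vb ω else vs ω) ∂μ := by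
    intro p
    have hψ2 : Measurable (fun y : ℝ => if p ≤ y then y else 0) :=
      Measurable.ite measurableSet_Ici measurable_id measurable_const
    have hint2 : Integrable (fun ω => if p ≤ vb ω then vb ω else 0) μ := by
      refine hb_int.mono (hψ2.comp hmeas_b).aestronglyMeasurable ?_
      filter_upwards with ω
      by_cases h : p ≤ vb ω <;> simp [h]
    have hWmeas : Measurable (fun ω => if vs ω ≤ p ∧ p ≤ vb ω then vb ω else vs ω) :=
      Measurable.ite ((msle p).inter (mbge p)) hmeas_b hmeas_s
    have hW_int : Integrable (fun ω => if vs ω ≤ p ∧ p ≤ vb ω then vb ω else vs ω) μ := by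
      refine (hs_int.add hb_int).mono hWmeas.aestronglyMeasurable ?_
      filter_upwards with ω
      simp only [Pi.add_apply, Real.norm_eq_abs]
      rw [abs_of_nonneg (by linarith [hs_nonneg ω, hb_nonneg ω] : (0:ℝ) ≤ vs ω + vb ω)]
      split_ifs with h
      · rw [abs_of_nonneg (hb_nonneg ω)]; linarith [hs_nonneg ω]
      · rw [abs_of_nonneg (hs_nonneg ω)]; linarith [hb_nonneg ω]
    have hprodint : Integrable
        (fun ω => (if vs ω ≤ p then (1:ℝ) else 0) * (if p ≤ vb ω then vb ω else 0)) μ :=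
      hint2.bdd_mul ((hφ p).comp hmeas_s).aestronglyMeasurable
        (c := 1) (Filter.Eventually.of_forall fun ω => by by_cases h : vs ω ≤ p <;> simp [h])
    have hpt : ∀ ω, (if vs ω ≤ p then (1:ℝ) else 0) * (if p ≤ vb ω then vb ω else 0)
        ≤ (if vs ω ≤ p ∧ p ≤ vb ω then vb ω else vs ω) := by
      intro ω
      by_cases h1 : vs ω ≤ p <;> by_cases h2 : p ≤ vb ω
      · rw [if_pos h1, if_pos h2, if_pos ⟨h1, h2⟩, one_mul]
      · rw [if_pos h1, if_neg h2, if_neg (fun h => h2 h.2), mul_zero]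
        exact hs_nonneg ω
      · rw [if_neg h1, if_pos h2, if_neg (fun h => h1 h.1), zero_mul]
        exact hs_nonneg ω
      · rw [if_neg h1, if_neg h2, if_neg (fun h => h1 h.1), zero_mul]
        exact hs_nonneg ω
    have hmono : ∫ ω, (if vs ω ≤ p then (1:ℝ) else 0) * (if p ≤ vb ω then vb ω else 0) ∂μ
        ≤ ∫ ω, (if vs ω ≤ p ∧ p ≤ vb ω then vb ω else vs ω) ∂μ :=
      integral_mono hprodint hW_int hpt
    have hind2 : IndepFun (fun ω => if vs ω ≤ p then (1:ℝ) else 0)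
        (fun ω => if p ≤ vb ω then vb ω else 0) μ := hindep.comp (hφ p) hψ2
    have hmul : ∫ ω, (if vs ω ≤ p then (1:ℝ) else 0) * (if p ≤ vb ω then vb ω else 0) ∂μ
        = (∫ ω, (if vs ω ≤ p then (1:ℝ) else 0) ∂μ)
          * ∫ ω, (if p ≤ vb ω then vb ω else 0) ∂μ :=
      hind2.integral_fun_mul_eq_mul_integral (hint_inds p).aestronglyMeasurable hint2.aestronglyMeasurable
    rw [hmul, hind_s_int p] at hmono
    exact hmono
  -- truncated buyer value lower bound
  have hBlb : ∀ p : ℝ, 0 ≤ p → p ≤ Mb →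
      b - p * (1/2) ≤ ∫ ω, (if p ≤ vb ω then vb ω else 0) ∂μ := by
    intro p hp0 hpMb
    have hψ2 : Measurable (fun y : ℝ => if p ≤ y then y else 0) :=
      Measurable.ite measurableSet_Ici measurable_id measurable_const
    have hint2 : Integrable (fun ω => if p ≤ vb ω then vb ω else 0) μ := by
      refine hb_int.mono (hψ2.comp hmeas_b).aestronglyMeasurable ?_
      filter_upwards with ω
      by_cases h : p ≤ vb ω <;> simp [h]
    have hpt : ∀ ω, vb ω - Set.indicator {ω | vb ω < Mb} (fun _ => p) ω
        ≤ (if p ≤ vb ω then vb ω else 0) := by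
      intro ω
      rw [Set.indicator_apply]
      split_ifs with hm h2 h3
      · linarith
      · simp only [Set.mem_setOf_eq] at hm
        push_neg at h2
        linarith
      · linarith
      · push_neg at h3
        simp only [Set.mem_setOf_eq, not_lt] at hm
        linarith
    have h1 : ∫ ω, (vb ω - Set.indicator {ω | vb ω < Mb} (fun _ => p) ω) ∂μ
        ≤ ∫ ω, (if p ≤ vb ω then vb ω else 0) ∂μ :=
      integral_mono (hb_int.sub ((integrable_const p).indicator (mblt Mb))) hint2 hpt
    have h2 : ∫ ω, (vb ω - Set.indicator {ω | vb ω < Mb} (fun _ => p) ω) ∂μ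
        = b - ∫ ω, Set.indicator {ω | vb ω < Mb} (fun _ => p) ω ∂μ :=
      integral_sub hb_int ((integrable_const p).indicator (mblt Mb))
    have h3 : ∫ ω, Set.indicator {ω | vb ω < Mb} (fun _ => p) ω ∂μ
        = (μ {ω | vb ω < Mb}).toReal * p := by
      rw [integral_indicator_const _ (mblt Mb), smul_eq_mul]; rfl
    rw [h2, h3, hvbltMb] at h1
    linarith
  -- ==================== case analysis ====================
  by_cases hcase1 : T ≤ 13 * a
  · refine ⟨Ms, ?_⟩
    rw [hkey Ms]
    have hFMs : (μ {ω | vs ω ≤ Ms}).toReal = 1/2 := by rw [hmeds_le, hhalf]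
    have hGMs : (1:ℝ)/2 ≤ (μ {ω | Ms ≤ vb ω}).toReal := by
      rw [← hGMb]
      exact ENNReal.toReal_mono (measure_ne_top μ _)
        (measure_mono fun ω (h : Mb ≤ vb ω) => le_trans hMbMs h)
    have hGσ : (1/2) * (∫ ω, max (Ms - vs ω) 0 ∂μ)
        ≤ (μ {ω | Ms ≤ vb ω}).toReal * ∫ ω, max (Ms - vs ω) 0 ∂μ :=
      mul_le_mul_of_nonneg_right hGMs (hsigma0 Ms)
    have hs := hsplit Ms
    rw [hFMs]
    linarith [hbeta0 Ms, hsigma0 Ms]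
  · push_neg at hcase1
    have hT0 : 0 < T := lt_of_le_of_lt (by linarith) hcase1
    have htpos : 0 < 4 * T / 13 := by linarith
    have hmk := hmarkov (4 * T / 13) htpos
    have hFc := hFs (4 * T / 13)
    have hm0 : 0 ≤ (μ {ω | 4 * T / 13 < vs ω}).toReal := ENNReal.toReal_nonneg
    have hm14 : (μ {ω | 4 * T / 13 < vs ω}).toReal ≤ 1/4 := by nlinarith
    have hF34 : (3:ℝ)/4 ≤ (μ {ω | vs ω ≤ 4 * T / 13}).toReal := by linarith
    by_cases hcase2 : 4 * T / 13 ≤ Mb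
    · -- case 2a
      refine ⟨4 * T / 13, ?_⟩
      have hB := hBlb (4 * T / 13) (le_of_lt htpos) hcase2
      have hBge : 10 * T / 13 ≤ ∫ ω, (if 4 * T / 13 ≤ vb ω then vb ω else 0) ∂μ := by
        linarith
      have hmul : (3/4) * (10 * T / 13)
          ≤ (μ {ω | vs ω ≤ 4 * T / 13}).toReal
            * ∫ ω, (if 4 * T / 13 ≤ vb ω then vb ω else 0) ∂μ :=
        mul_le_mul hF34 hBge (by linarith) (by linarith)
      linarith [htrade_lb (4 * T / 13)]
    · -- case 2b
      push_neg at hcase2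
      refine ⟨4 * T / 13, ?_⟩
      rw [hkey (4 * T / 13)]
      have hMbt : Mb ≤ 4 * T / 13 := le_of_lt hcase2
      have hshift := hbeta_shift (4 * T / 13) hMbt
      rw [hGMb] at hshift
      have hsp := hsplit Mb
      have hβlb : T - a - Mb/2 - 2*T/13 ≤ ∫ ω, max (vb ω - 4 * T / 13) 0 ∂μ := by
        linarith
      have hβ0 := hbeta0 (4 * T / 13)
      have hσ0 := hsigma0 (4 * T / 13)
      have hG0 : 0 ≤ (μ {ω | 4 * T / 13 ≤ vb ω}).toReal := ENNReal.toReal_nonneg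
      obtain ⟨F, hF_def⟩ : ∃ F, (μ {ω | vs ω ≤ 4 * T / 13}).toReal = F := ⟨_, rfl⟩
      obtain ⟨m, hm_def⟩ : ∃ m, (μ {ω | 4 * T / 13 < vs ω}).toReal = m := ⟨_, rfl⟩
      obtain ⟨β, hβ_def⟩ : ∃ β, (∫ ω, max (vb ω - 4 * T / 13) 0 ∂μ) = β := ⟨_, rfl⟩
      obtain ⟨G, hG_def⟩ : ∃ G, (μ {ω | 4 * T / 13 ≤ vb ω}).toReal = G := ⟨_, rfl⟩
      obtain ⟨σ, hσ_def⟩ : ∃ σ, (∫ ω, max (4 * T / 13 - vs ω) 0 ∂μ) = σ := ⟨_, rfl⟩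
      rw [hF_def, hβ_def, hG_def, hσ_def]
      rw [hF_def, hm_def] at hFc
      rw [hm_def] at hmk hm0 hm14
      rw [hF_def] at hF34
      rw [hβ_def] at hβlb hβ0
      rw [hσ_def] at hσ0
      rw [hG_def] at hG0
      have hF0 : (0:ℝ) ≤ F := by linarith
      have hFβ : F * (T - a - Mb/2 - 2*T/13) ≤ F * β :=
        mul_le_mul_of_nonneg_left hβlb hF0
      have hL0 : 0 ≤ T - a - Mb/2 - 2*T/13 := by linarith
      have hGσ : 0 ≤ G * σ := mul_nonneg hG0 hσ0
      have hm' : m * (4 * T) ≤ 13 * a := by nlinarith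
      have hkey_ineq : 7 / 13 * T ≤ a + F * (T - a - Mb/2 - 2*T/13) := by
        have hFm : F = 1 - m := by linarith
        rw [hFm]
        nlinarith [mul_nonneg (by linarith : (0:ℝ) ≤ 13 * a - m * (4 * T)) hL0,
          mul_nonneg (by linarith : (0:ℝ) ≤ T - 13 * a)
            (by linarith : (0:ℝ) ≤ 8 * T - 13 * a),
          mul_nonneg (by linarith : (0:ℝ) ≤ 4 * T - 13 * a)
            (by linarith : (0:ℝ) ≤ 4 * T / 13 - Mb)]
      linarith
end

section
/- Suppose v_s has an exact median M_s, v_b has an exact median M_b, and M_b ≥ M_s. Then the fixed-price mechanism with trade price M_s satisfies E[W_{M_s}] ≥ (1/2)·E[max(v_s, v_b)] + (1/2)·E[v_s]. -/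
open MeasureTheory ProbabilityTheory

/-- When the buyer's median is at least the seller's median, the fixed-price mechanism
with trade price equal to the seller's median `Ms` has expected welfare at least
`(1/2)·E[max(v_s, v_b)] + (1/2)·E[v_s]`. -/
theorem median_mechanism_welfare_with_seller_expectation
    {Ω : Type*} [MeasurableSpace Ω] (μ : Measure Ω) [IsProbabilityMeasure μ]
    (vs vb : Ω → ℝ) (Ms Mb : ℝ)
    (hmeas_s : Measurable vs) (hmeas_b : Measurable vb)
    (hindep : IndepFun vs vb μ)
    (hs_nonneg : ∀ ω, 0 ≤ vs ω) (hb_nonneg : ∀ ω, 0 ≤ vb ω)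
    (hs_int : Integrable vs μ) (hb_int : Integrable vb μ)
    (hmeds_le : μ {ω | vs ω ≤ Ms} = 1 / 2)
    (hmeds_ge : μ {ω | Ms ≤ vs ω} = 1 / 2)
    (hmedb_le : μ {ω | vb ω ≤ Mb} = 1 / 2)
    (hmedb_ge : μ {ω | Mb ≤ vb ω} = 1 / 2)
    (hMbMs : Ms ≤ Mb) :
    (1 / 2) * (∫ ω, max (vs ω) (vb ω) ∂μ) + (1 / 2) * (∫ ω, vs ω ∂μ)
      ≤ ∫ ω, (if vs ω ≤ Ms ∧ Ms ≤ vb ω then vb ω else vs ω) ∂μ := by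
  -- auxiliary real functions
  set u : ℝ → ℝ := fun x => if x ≤ Ms then 1 else 0 with hu_def
  set w : ℝ → ℝ := fun y => max (y - Ms) 0 with hw_def
  set u2 : ℝ → ℝ := fun x => max (Ms - x) 0 with hu2_def
  set w2 : ℝ → ℝ := fun y => if Ms ≤ y then 1 else 0 with hw2_def
  have hu_meas : Measurable u := Measurable.ite measurableSet_Iic measurable_const measurable_const
  have hw_meas : Measurable w := (measurable_id.sub measurable_const).max measurable_const
  have hu2_meas : Measurable u2 := (measurable_const.sub measurable_id).max measurable_const
  have hw2_meas : Measurable w2 :=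
    Measurable.ite (measurableSet_Ici) measurable_const measurable_const
  -- independence of composed functions
  have hind1 : IndepFun (u ∘ vs) (w ∘ vb) μ := hindep.comp hu_meas hw_meas
  have hind2 : IndepFun (u2 ∘ vs) (w2 ∘ vb) μ := hindep.comp hu2_meas hw2_meas
  -- integrability
  have hint_uvs : Integrable (u ∘ vs) μ := by
    refine (integrable_const (1:ℝ)).mono' ((hu_meas.comp hmeas_s).aestronglyMeasurable) ?_
    filter_upwards with ω
    simp only [Function.comp, hu_def]
    split <;> simp
  have hint_w2vb : Integrable (w2 ∘ vb) μ := by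
    refine (integrable_const (1:ℝ)).mono' ((hw2_meas.comp hmeas_b).aestronglyMeasurable) ?_
    filter_upwards with ω
    simp only [Function.comp, hw2_def]
    split <;> simp
  have hint_wvb : Integrable (w ∘ vb) μ := (hb_int.sub (integrable_const Ms)).pos_part
  have hint_u2vs : Integrable (u2 ∘ vs) μ := ((integrable_const Ms).sub hs_int).pos_part
  have hint_wvb' : Integrable (fun ω => w (vb ω)) μ := hint_wvb
  have hint_u2vs' : Integrable (fun ω => u2 (vs ω)) μ := hint_u2vs
  have hint_F1 : Integrable (fun ω => u (vs ω) * w (vb ω)) μ :=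
    hind1.integrable_mul hint_uvs hint_wvb
  have hint_F2 : Integrable (fun ω => u2 (vs ω) * w2 (vb ω)) μ :=
    hind2.integrable_mul hint_u2vs hint_w2vb
  have hint_P : Integrable (fun ω => max (vb ω - vs ω) 0) μ := (hb_int.sub hs_int).pos_part
  -- key pointwise identity for the welfare function
  have hW_eq : ∀ ω, (if vs ω ≤ Ms ∧ Ms ≤ vb ω then vb ω else vs ω)
      = vs ω + (u (vs ω) * w (vb ω) + u2 (vs ω) * w2 (vb ω)) := by
    intro ω
    simp only [hu_def, hw_def, hu2_def, hw2_def]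
    by_cases h1 : vs ω ≤ Ms <;> by_cases h2 : Ms ≤ vb ω
    · rw [if_pos ⟨h1, h2⟩, if_pos h1, if_pos h2, max_eq_left (by linarith),
        max_eq_left (by linarith)]
      ring
    · push_neg at h2
      rw [if_neg (fun h => absurd h.2 (not_le.2 h2)), if_pos h1, if_neg (not_le.2 h2),
        max_eq_right (show vb ω - Ms ≤ (0:ℝ) by linarith)]
      ring
    · push_neg at h1
      rw [if_neg (fun h => absurd h.1 (not_le.2 h1)), if_neg (not_le.2 h1), if_pos h2,
        max_eq_right (show Ms - vs ω ≤ (0:ℝ) by linarith)]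
      ring
    · push_neg at h1 h2
      rw [if_neg (fun h => absurd h.1 (not_le.2 h1)), if_neg (not_le.2 h1), if_neg (not_le.2 h2)]
      ring
  -- ∫ max(vs,vb) = ∫ vs + ∫ (vb - vs)⁺
  have hmax_eq : (∫ ω, max (vs ω) (vb ω) ∂μ)
      = (∫ ω, vs ω ∂μ) + ∫ ω, max (vb ω - vs ω) 0 ∂μ := by
    rw [← integral_add hs_int hint_P]
    congr 1; funext ω
    rcases le_total (vs ω) (vb ω) with h | h
    · rw [max_eq_right h, max_eq_left (by linarith)]; ring
    · rw [max_eq_left h, max_eq_right (by linarith)]; ring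
  -- rewrite the RHS integral
  have hRHS : (∫ ω, (if vs ω ≤ Ms ∧ Ms ≤ vb ω then vb ω else vs ω) ∂μ)
      = (∫ ω, vs ω ∂μ) + ((∫ ω, u (vs ω) * w (vb ω) ∂μ) + ∫ ω, u2 (vs ω) * w2 (vb ω) ∂μ) := by
    simp only [hW_eq]
    have h12 : Integrable (fun ω => u (vs ω) * w (vb ω) + u2 (vs ω) * w2 (vb ω)) μ :=
      hint_F1.add hint_F2
    rw [integral_add hs_int h12, integral_add hint_F1 hint_F2]
  -- compute the two product integrals via independence
  have hmul1 : (∫ ω, u (vs ω) * w (vb ω) ∂μ)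
      = (∫ ω, u (vs ω) ∂μ) * ∫ ω, w (vb ω) ∂μ := by
    have := hind1.integral_mul_eq_mul_integral ((hu_meas.comp hmeas_s).aestronglyMeasurable)
      ((hw_meas.comp hmeas_b).aestronglyMeasurable)
    simpa [Function.comp] using this
  have hmul2 : (∫ ω, u2 (vs ω) * w2 (vb ω) ∂μ)
      = (∫ ω, u2 (vs ω) ∂μ) * ∫ ω, w2 (vb ω) ∂μ := by
    have := hind2.integral_mul_eq_mul_integral ((hu2_meas.comp hmeas_s).aestronglyMeasurable)
      ((hw2_meas.comp hmeas_b).aestronglyMeasurable)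
    simpa [Function.comp] using this
  -- indicator integrals
  have hAmeas : MeasurableSet {ω | vs ω ≤ Ms} := hmeas_s measurableSet_Iic
  have hBmeas : MeasurableSet {ω | Ms ≤ vb ω} := hmeas_b measurableSet_Ici
  have hintu : (∫ ω, u (vs ω) ∂μ) = 1 / 2 := by
    have heq : (fun ω => u (vs ω)) = Set.indicator {ω | vs ω ≤ Ms} (fun _ => (1:ℝ)) := by
      funext ω
      simp only [hu_def, Set.indicator, Set.mem_setOf_eq]
    rw [heq, integral_indicator_const _ hAmeas, measureReal_def, hmeds_le]
    simp [ENNReal.toReal_div]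
  have hintw2 : (1:ℝ) / 2 ≤ ∫ ω, w2 (vb ω) ∂μ := by
    have heq : (fun ω => w2 (vb ω)) = Set.indicator {ω | Ms ≤ vb ω} (fun _ => (1:ℝ)) := by
      funext ω
      simp only [hw2_def, Set.indicator, Set.mem_setOf_eq]
    rw [heq, integral_indicator_const _ hBmeas]
    have hsub : {ω | Mb ≤ vb ω} ⊆ {ω | Ms ≤ vb ω} := fun ω h => le_trans hMbMs h
    have hle : (1 / 2 : ENNReal) ≤ μ {ω | Ms ≤ vb ω} := hmedb_ge ▸ measure_mono hsub
    have hne : μ {ω | Ms ≤ vb ω} ≠ ⊤ := measure_ne_top μ _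
    have := ENNReal.toReal_mono hne hle
    simp only [smul_eq_mul, mul_one]
    calc (1:ℝ)/2 = ((1 / 2 : ENNReal)).toReal := by simp [ENNReal.toReal_div]
    _ ≤ (μ {ω | Ms ≤ vb ω}).toReal := this
  -- nonnegativity of the relevant integrals
  have hq2_nonneg : 0 ≤ ∫ ω, u2 (vs ω) ∂μ := by
    apply integral_nonneg; intro ω; simp [hu2_def, le_max_right]
  have hq1_nonneg : 0 ≤ ∫ ω, w (vb ω) ∂μ := by
    apply integral_nonneg; intro ω; simp [hw_def, le_max_right]
  -- pointwise bound: (vb - vs)⁺ ≤ (vb - Ms)⁺ + (Ms - vs)⁺, integrated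
  have hP_le : (∫ ω, max (vb ω - vs ω) 0 ∂μ)
      ≤ (∫ ω, w (vb ω) ∂μ) + ∫ ω, u2 (vs ω) ∂μ := by
    rw [← integral_add hint_wvb' hint_u2vs']
    apply integral_mono hint_P (hint_wvb'.add hint_u2vs')
    intro ω
    simp only [Pi.add_apply, hw_def, hu2_def]
    rcases le_total (vb ω - vs ω) 0 with h | h
    · rw [max_eq_right h]; positivity
    · rw [max_eq_left h]
      have h1 : vb ω - Ms ≤ max (vb ω - Ms) 0 := le_max_left _ _
      have h2 : Ms - vs ω ≤ max (Ms - vs ω) 0 := le_max_left _ _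
      linarith
  -- final arithmetic
  rw [hRHS, hmax_eq, hmul1, hmul2, hintu]
  have h2 : (1:ℝ)/2 * (∫ ω, u2 (vs ω) ∂μ) ≤ (∫ ω, u2 (vs ω) ∂μ) * ∫ ω, w2 (vb ω) ∂μ := by
    calc (1:ℝ)/2 * (∫ ω, u2 (vs ω) ∂μ) = (∫ ω, u2 (vs ω) ∂μ) * (1/2) := by ring
    _ ≤ _ := mul_le_mul_of_nonneg_left hintw2 hq2_nonneg
  nlinarith [hP_le]
end

section
/- (t-threshold mechanism) Suppose the optimal welfare is normalized so that E[max(v_s, v_b)] = 1, let r = E[v_s] with r > 0, and let t > 1 satisfy t < (1−r)/(2r). Then the fixed-price mechanism with trade price t·r satisfies E[W_{t·r}] ≥ 1 + r − 1/t + r/t − t·r. -/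
open MeasureTheory ProbabilityTheory

/-- The `t`-threshold mechanism: if the optimal expected welfare is normalized to `1`,
`r = E[v_s] > 0` and `1 < t < (1 - r)/(2r)`, then the fixed-price mechanism with trade
price `t·r` has expected welfare at least `1 + r - 1/t + r/t - t·r`. -/
theorem t_threshold_mechanism_welfare
    {Ω : Type*} [MeasurableSpace Ω] (μ : Measure Ω) [IsProbabilityMeasure μ]
    (vs vb : Ω → ℝ)
    (hmeas_s : Measurable vs) (hmeas_b : Measurable vb)
    (hindep : IndepFun vs vb μ)
    (hs_nonneg : ∀ ω, 0 ≤ vs ω) (hb_nonneg : ∀ ω, 0 ≤ vb ω)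
    (hs_int : Integrable vs μ) (hb_int : Integrable vb μ)
    (hopt : ∫ ω, max (vs ω) (vb ω) ∂μ = 1)
    (r t : ℝ) (hr : r = ∫ ω, vs ω ∂μ) (hr_pos : 0 < r)
    (ht_one : 1 < t) (ht : t < (1 - r) / (2 * r)) :
    1 + r - 1 / t + r / t - t * r
      ≤ ∫ ω, (if vs ω ≤ t * r ∧ t * r ≤ vb ω then vb ω else vs ω) ∂μ := by
  set p : ℝ := t * r with hp
  have ht_pos : (0:ℝ) < t := lt_trans one_pos ht_one
  have hp_pos : 0 < p := mul_pos ht_pos hr_pos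
  -- the two composed functions
  set φ : ℝ → ℝ := fun x => if x ≤ p then 1 else 0 with hφ
  set ψ : ℝ → ℝ := fun y => if p ≤ y then y - p else 0 with hψ
  have hφm : Measurable φ := by
    apply Measurable.ite (measurableSet_Iic) measurable_const measurable_const
  have hψm : Measurable ψ := by
    apply Measurable.ite (measurableSet_Ici) (measurable_id.sub measurable_const)
      measurable_const
  -- integrability facts
  have hf1 : Integrable (fun ω => φ (vs ω)) μ := by
    apply Integrable.mono' (integrable_const (1:ℝ)) ((hφm.comp hmeas_s).aestronglyMeasurable)
    filter_upwards with ω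
    by_cases h : vs ω ≤ p <;> simp [hφ, h]
  have hf2 : Integrable (fun ω => ψ (vb ω)) μ := by
    apply Integrable.mono' hb_int ((hψm.comp hmeas_b).aestronglyMeasurable)
    filter_upwards with ω
    simp only [hψ, Function.comp_apply, Real.norm_eq_abs]
    by_cases h : p ≤ vb ω
    · rw [if_pos h, abs_of_nonneg (by linarith : (0:ℝ) ≤ vb ω - p)]
      linarith [hp_pos]
    · rw [if_neg h, abs_zero]; exact hb_nonneg ω
  have hg_int : Integrable (fun ω => φ (vs ω) * ψ (vb ω)) μ :=
    (hindep.comp hφm hψm).integrable_mul hf1 hf2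
  have hW_int : Integrable (fun ω => if vs ω ≤ p ∧ p ≤ vb ω then vb ω else vs ω) μ := by
    apply Integrable.mono' (hs_int.add hb_int)
    · apply Measurable.aestronglyMeasurable
      exact Measurable.ite ((measurableSet_le hmeas_s measurable_const).inter
        (measurableSet_le measurable_const hmeas_b)) hmeas_b hmeas_s
    · filter_upwards with ω
      simp only [Pi.add_apply, Real.norm_eq_abs]
      by_cases h : vs ω ≤ p ∧ p ≤ vb ω
      · rw [if_pos h, abs_of_nonneg (hb_nonneg ω)]; linarith [hs_nonneg ω]
      · rw [if_neg h, abs_of_nonneg (hs_nonneg ω)]; linarith [hb_nonneg ω]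
  -- pointwise bound: vs + φ(vs)·ψ(vb) ≤ W
  have hpt : ∀ ω, vs ω + φ (vs ω) * ψ (vb ω)
      ≤ (if vs ω ≤ p ∧ p ≤ vb ω then vb ω else vs ω) := by
    intro ω
    by_cases h1 : vs ω ≤ p <;> by_cases h2 : p ≤ vb ω <;>
      simp [hφ, hψ, h1, h2] <;> linarith
  -- E[vb] ≥ 1 - r
  have hmax_int : Integrable (fun ω => max (vs ω) (vb ω)) μ := hs_int.sup hb_int
  have hEb : 1 - r ≤ ∫ ω, vb ω ∂μ := by
    have h1 : ∫ ω, max (vs ω) (vb ω) ∂μ ≤ ∫ ω, (vs ω + vb ω) ∂μ := by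
      apply integral_mono hmax_int (hs_int.add hb_int)
      intro ω
      simp only [Pi.add_apply]
      exact max_le (by linarith [hb_nonneg ω]) (by linarith [hs_nonneg ω])
    rw [integral_add hs_int hb_int] at h1
    rw [hopt] at h1
    linarith [hr ▸ h1]
  -- ∫ φ(vs) ≥ 1 - 1/t  (Markov)
  have hmarkov : p * (μ {ω | p ≤ vs ω}).toReal ≤ r := by
    rw [hr]
    exact mul_meas_ge_le_integral_of_nonneg (ae_of_all _ hs_nonneg) hs_int p
  have hS : MeasurableSet {ω | vs ω ≤ p} := measurableSet_le hmeas_s measurable_const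
  have hIf1 : ∫ ω, φ (vs ω) ∂μ = (μ {ω | vs ω ≤ p}).toReal := by
    have : (fun ω => φ (vs ω)) = Set.indicator {ω | vs ω ≤ p} (fun _ => (1:ℝ)) := by
      ext ω; by_cases h : vs ω ≤ p <;> simp [hφ, h, Set.indicator_apply]
    rw [this, integral_indicator_const _ hS]; simp; rfl
  have hcompl : (μ {ω | vs ω ≤ p}ᶜ).toReal ≤ 1 / t := by
    have hsub : {ω | vs ω ≤ p}ᶜ ⊆ {ω | p ≤ vs ω} := by
      intro ω hω; simp only [Set.mem_compl_iff, Set.mem_setOf_eq, not_le] at hω ⊢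
      exact hω.le
    have h1 : (μ {ω | vs ω ≤ p}ᶜ).toReal ≤ (μ {ω | p ≤ vs ω}).toReal := by
      apply ENNReal.toReal_mono (measure_ne_top μ _) (measure_mono hsub)
    have h2 : (μ {ω | p ≤ vs ω}).toReal ≤ r / p := by
      rw [le_div_iff₀ hp_pos]; linarith [hmarkov]
    have : r / p = 1 / t := by
      rw [hp]; field_simp
    linarith
  have hf1_lb : 1 - 1 / t ≤ ∫ ω, φ (vs ω) ∂μ := by
    rw [hIf1]
    have := prob_compl_eq_one_sub (μ := μ) hS
    have htr : (μ {ω | vs ω ≤ p}ᶜ).toReal = 1 - (μ {ω | vs ω ≤ p}).toReal := by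
      rw [this, ENNReal.toReal_sub_of_le (prob_le_one) (by simp)]
      simp
    linarith [hcompl, htr ▸ hcompl]
  -- ∫ ψ(vb) ≥ 1 - r - p
  have hf2_lb : 1 - r - p ≤ ∫ ω, ψ (vb ω) ∂μ := by
    have h1 : ∫ ω, (vb ω - p) ∂μ ≤ ∫ ω, ψ (vb ω) ∂μ := by
      apply integral_mono (hb_int.sub (integrable_const p)) hf2
      intro ω
      by_cases h : p ≤ vb ω <;> simp [hψ, h] <;> linarith
    rw [integral_sub hb_int (integrable_const p), integral_const] at h1
    simp at h1
    linarith
  have hf2_nonneg : 0 ≤ ∫ ω, ψ (vb ω) ∂μ := by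
    apply integral_nonneg
    intro ω; simp only [hψ, Pi.zero_apply]
    by_cases h : p ≤ vb ω
    · rw [if_pos h]; linarith
    · rw [if_neg h]
  -- combine
  have hmul : (∫ ω, φ (vs ω) * ψ (vb ω) ∂μ)
      = (∫ ω, φ (vs ω) ∂μ) * (∫ ω, ψ (vb ω) ∂μ) :=
    (hindep.comp hφm hψm).integral_fun_mul_eq_mul_integral hf1.aestronglyMeasurable hf2.aestronglyMeasurable
  have hchain : r + (∫ ω, φ (vs ω) * ψ (vb ω) ∂μ)
      ≤ ∫ ω, (if vs ω ≤ p ∧ p ≤ vb ω then vb ω else vs ω) ∂μ := by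
    have := integral_mono
      (hs_int.add hg_int : Integrable (fun ω => vs ω + φ (vs ω) * ψ (vb ω)) μ) hW_int hpt
    simp only [Pi.add_apply] at this
    rw [integral_add hs_int hg_int] at this
    rw [hr]; exact this
  have ht_inv : 0 ≤ 1 - 1 / t := by
    rw [sub_nonneg, div_le_one ht_pos]; linarith
  have hB : (0:ℝ) < 1 - r - p := by
    have h2r : 0 < 2 * r := by linarith
    rw [lt_div_iff₀ h2r] at ht
    nlinarith
  have hprod : (1 - 1 / t) * (1 - r - p) ≤ (∫ ω, φ (vs ω) ∂μ) * (∫ ω, ψ (vb ω) ∂μ) := by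
    apply mul_le_mul hf1_lb hf2_lb hB.le (le_trans ht_inv hf1_lb)
  have hfinal : 1 + r - 1 / t + r / t - p = r + (1 - 1 / t) * (1 - r - p) := by
    rw [hp]; field_simp; ring
  rw [hfinal]
  calc r + (1 - 1 / t) * (1 - r - p) ≤ r + (∫ ω, φ (vs ω) * ψ (vb ω) ∂μ) := by
        rw [hmul]; exact add_le_add_right hprod r
    _ ≤ _ := hchain
end

section
/- (McAfee's gain-from-trade theorem) Suppose v_s has an exact median M_s, v_b has an exact median M_b, and M_b ≥ M_s. Then the expected gain from trade of the fixed-price mechanism with trade price M_s is at least half the optimal expected gain from trade: E[(v_b − v_s)·1{v_s ≤ M_s and v_b ≥ M_s}] ≥ (1/2)·E[max(v_b − v_s, 0)]. -/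
open MeasureTheory ProbabilityTheory

/-- McAfee's gain-from-trade theorem: if the buyer's median `Mb` is at least the
seller's median `Ms`, then setting the trade price `Ms` achieves in expectation at
least half of the optimal expected gain from trade `E[max(v_b - v_s, 0)]`. -/
theorem mcafee_gain_from_trade
    {Ω : Type*} [MeasurableSpace Ω] (μ : Measure Ω) [IsProbabilityMeasure μ]
    (vs vb : Ω → ℝ) (Ms Mb : ℝ)
    (hmeas_s : Measurable vs) (hmeas_b : Measurable vb)
    (hindep : IndepFun vs vb μ)
    (hs_nonneg : ∀ ω, 0 ≤ vs ω) (hb_nonneg : ∀ ω, 0 ≤ vb ω)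
    (hs_int : Integrable vs μ) (hb_int : Integrable vb μ)
    (hmeds_le : μ {ω | vs ω ≤ Ms} = 1 / 2)
    (hmeds_ge : μ {ω | Ms ≤ vs ω} = 1 / 2)
    (hmedb_le : μ {ω | vb ω ≤ Mb} = 1 / 2)
    (hmedb_ge : μ {ω | Mb ≤ vb ω} = 1 / 2)
    (hMbMs : Ms ≤ Mb) :
    (1 / 2) * ∫ ω, max (vb ω - vs ω) 0 ∂μ
      ≤ ∫ ω in {ω | vs ω ≤ Ms ∧ Ms ≤ vb ω}, (vb ω - vs ω) ∂μ := by
  classical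
  -- notation
  set A : Set Ω := {ω | vs ω ≤ Ms} with hAdef
  set B : Set Ω := {ω | Ms ≤ vb ω} with hBdef
  have hA : MeasurableSet A := measurableSet_le hmeas_s measurable_const
  have hB : MeasurableSet B := measurableSet_le measurable_const hmeas_b
  -- the four factor functions
  set gA : Ω → ℝ := fun ω => if vs ω ≤ Ms then (1 : ℝ) else 0 with hgA
  set gB : Ω → ℝ := fun ω => if Ms ≤ vb ω then (1 : ℝ) else 0 with hgB
  set fb : Ω → ℝ := fun ω => max (vb ω - Ms) 0 with hfb
  set fs : Ω → ℝ := fun ω => max (Ms - vs ω) 0 with hfs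
  -- measurability
  have hgA_meas : Measurable gA := by
    have : Measurable fun x : ℝ => if x ≤ Ms then (1 : ℝ) else 0 :=
      Measurable.ite measurableSet_Iic measurable_const measurable_const
    exact this.comp hmeas_s
  have hgB_meas : Measurable gB := by
    have : Measurable fun y : ℝ => if Ms ≤ y then (1 : ℝ) else 0 :=
      Measurable.ite measurableSet_Ici measurable_const measurable_const
    exact this.comp hmeas_b
  have hfb_meas : Measurable fb := (hmeas_b.sub measurable_const).max measurable_const
  have hfs_meas : Measurable fs := (measurable_const.sub hmeas_s).max measurable_const
  -- integrability
  have hfb_int : Integrable fb μ := by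
    simpa [hfb] using (hb_int.sub (integrable_const Ms)).pos_part
  have hfs_int : Integrable fs μ := by
    simpa [hfs] using ((integrable_const Ms).sub hs_int).pos_part
  have hmax_int : Integrable (fun ω => max (vb ω - vs ω) 0) μ := by
    simpa using (hb_int.sub hs_int).pos_part
  -- independence of composed pairs
  have hi1 : IndepFun gA fb μ := by
    have h1 : Measurable fun x : ℝ => if x ≤ Ms then (1 : ℝ) else 0 :=
      Measurable.ite measurableSet_Iic measurable_const measurable_const
    have h2 : Measurable fun y : ℝ => max (y - Ms) 0 :=
      (measurable_id.sub measurable_const).max measurable_const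
    exact hindep.comp h1 h2
  have hi2 : IndepFun fs gB μ := by
    have h1 : Measurable fun x : ℝ => max (Ms - x) 0 :=
      (measurable_const.sub measurable_id).max measurable_const
    have h2 : Measurable fun y : ℝ => if Ms ≤ y then (1 : ℝ) else 0 :=
      Measurable.ite measurableSet_Ici measurable_const measurable_const
    exact hindep.comp h1 h2
  -- integrals of indicators
  have hgA_int : ∫ ω, gA ω ∂μ = 1 / 2 := by
    have : gA = A.indicator (fun _ => (1 : ℝ)) := by
      funext ω
      by_cases h : vs ω ≤ Ms <;> simp [hgA, hAdef, h, Set.indicator]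
    rw [this, integral_indicator hA]
    simp [measureReal_def, hmeds_le, ENNReal.toReal_div]
  have hgB_int : 1 / 2 ≤ ∫ ω, gB ω ∂μ := by
    have heq : gB = B.indicator (fun _ => (1 : ℝ)) := by
      funext ω
      by_cases h : Ms ≤ vb ω <;> simp [hgB, hBdef, h, Set.indicator]
    have hsub : {ω | Mb ≤ vb ω} ⊆ B := fun ω hω => le_trans hMbMs hω
    have hle : (1 / 2 : ENNReal) ≤ μ B := hmedb_ge ▸ measure_mono hsub
    rw [heq, integral_indicator hB]
    simp only [integral_const, measureReal_def, Measure.restrict_apply_univ, smul_eq_mul, mul_one]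
    calc (1 / 2 : ℝ) = ((1 / 2 : ENNReal)).toReal := by norm_num [ENNReal.toReal_div]
    _ ≤ (μ B).toReal := ENNReal.toReal_mono (measure_ne_top μ B) hle
  -- nonnegativity of integrals
  have hfb_nonneg : 0 ≤ ∫ ω, fb ω ∂μ := integral_nonneg fun ω => le_max_right _ _
  have hfs_nonneg : 0 ≤ ∫ ω, fs ω ∂μ := integral_nonneg fun ω => le_max_right _ _
  -- product integrals via independence
  have hprod1 : ∫ ω, gA ω * fb ω ∂μ = (1 / 2) * ∫ ω, fb ω ∂μ := by
    have := hi1.integral_fun_mul_eq_mul_integral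
      hgA_meas.aestronglyMeasurable hfb_meas.aestronglyMeasurable
    simpa [hgA_int] using this
  have hprod2 : (1 / 2) * ∫ ω, fs ω ∂μ ≤ ∫ ω, fs ω * gB ω ∂μ := by
    have heq := hi2.integral_fun_mul_eq_mul_integral
      hfs_meas.aestronglyMeasurable hgB_meas.aestronglyMeasurable
    have : (1 / 2) * ∫ ω, fs ω ∂μ ≤ (∫ ω, fs ω ∂μ) * ∫ ω, gB ω ∂μ := by
      rw [mul_comm (1/2 : ℝ)]
      exact mul_le_mul_of_nonneg_left hgB_int hfs_nonneg
    calc (1 / 2) * ∫ ω, fs ω ∂μ ≤ (∫ ω, fs ω ∂μ) * ∫ ω, gB ω ∂μ := this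
    _ = ∫ ω, fs ω * gB ω ∂μ := heq.symm
  -- rewrite the set integral
  have hsetAB : {ω | vs ω ≤ Ms ∧ Ms ≤ vb ω} = A ∩ B := rfl
  have hkey : ∫ ω in {ω | vs ω ≤ Ms ∧ Ms ≤ vb ω}, (vb ω - vs ω) ∂μ
      = ∫ ω, gA ω * fb ω ∂μ + ∫ ω, fs ω * gB ω ∂μ := by
    rw [hsetAB, ← integral_indicator (hA.inter hB)]
    have hptw : (A ∩ B).indicator (fun ω => vb ω - vs ω)
        = fun ω => gA ω * fb ω + fs ω * gB ω := by
      funext ω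
      by_cases h1 : vs ω ≤ Ms <;> by_cases h2 : Ms ≤ vb ω
      · have hmem : ω ∈ A ∩ B := ⟨h1, h2⟩
        simp only [Set.indicator_of_mem hmem, hgA, hgB, hfb, hfs, if_pos h1, if_pos h2]
        rw [max_eq_left (by linarith), max_eq_left (by linarith)]
        ring
      · have hmem : ω ∉ A ∩ B := fun h => h2 h.2
        simp only [Set.indicator_of_notMem hmem, hgA, hgB, hfb, hfs, if_pos h1, if_neg h2]
        rw [max_eq_right (by linarith)]
        ring
      · have hmem : ω ∉ A ∩ B := fun h => h1 h.1
        simp only [Set.indicator_of_notMem hmem, hgA, hgB, hfb, hfs, if_neg h1, if_pos h2]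
        rw [max_eq_right (show Ms - vs ω ≤ 0 by linarith)]
        ring
      · have hmem : ω ∉ A ∩ B := fun h => h1 h.1
        simp only [Set.indicator_of_notMem hmem, hgA, hgB, hfb, hfs, if_neg h1, if_neg h2]
        ring
    rw [hptw]
    have hint1 : Integrable (fun ω => gA ω * fb ω) μ := by
      have : (fun ω => gA ω * fb ω) = A.indicator fb := by
        funext ω
        by_cases h : vs ω ≤ Ms <;> simp [hgA, hAdef, h, Set.indicator]
      rw [this]; exact hfb_int.indicator hA
    have hint2 : Integrable (fun ω => fs ω * gB ω) μ := by
      have : (fun ω => fs ω * gB ω) = B.indicator fs := by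
        funext ω
        by_cases h : Ms ≤ vb ω <;> simp [hgB, hBdef, h, Set.indicator]
      rw [this]; exact hfs_int.indicator hB
    exact integral_add hint1 hint2
  -- pointwise bound on the optimal gain
  have hptle : ∫ ω, max (vb ω - vs ω) 0 ∂μ ≤ (∫ ω, fb ω ∂μ) + ∫ ω, fs ω ∂μ := by
    rw [← integral_add hfb_int hfs_int]
    apply integral_mono hmax_int (hfb_int.add hfs_int)
    intro ω
    simp only [hfb, hfs, Pi.add_apply]
    rcases le_total (vb ω - vs ω) 0 with h | h
    · rw [max_eq_right h]
      exact add_nonneg (le_max_right _ _) (le_max_right _ _)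
    · rw [max_eq_left h]
      calc vb ω - vs ω = (vb ω - Ms) + (Ms - vs ω) := by ring
      _ ≤ max (vb ω - Ms) 0 + max (Ms - vs ω) 0 :=
        add_le_add (le_max_left _ _) (le_max_left _ _)
  rw [hkey]
  calc (1 / 2) * ∫ ω, max (vb ω - vs ω) 0 ∂μ
      ≤ (1 / 2) * ((∫ ω, fb ω ∂μ) + ∫ ω, fs ω ∂μ) := by
        apply mul_le_mul_of_nonneg_left hptle; norm_num
    _ = (1 / 2) * (∫ ω, fb ω ∂μ) + (1 / 2) * ∫ ω, fs ω ∂μ := by ring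
    _ ≤ ∫ ω, gA ω * fb ω ∂μ + ∫ ω, fs ω * gB ω ∂μ := by
        rw [hprod1]; exact add_le_add (le_refl _) hprod2
end

section
/- Let v_s be exponentially distributed with rate 1 and v_b exponentially distributed with rate 1/2, independent. Then E[max(v_s, v_b)] = 7/3, and for every trade price p ∈ ℝ, 1.12·E[W_p] ≤ E[max(v_s, v_b)]; hence no fixed-price mechanism achieves an approximation ratio better than 1.12 to the optimal welfare in this instance. -/
open scoped ENNReal NNReal
open MeasureTheory ProbabilityTheory Real Set Filter Topology


lemma tendsto_aux (c : ℝ) (hc : 0 < c) :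
    Tendsto (fun x : ℝ => -(x + 1/c) * exp (-(c*x))) atTop (𝓝 0) := by
  have h1 : Tendsto (fun t : ℝ => -(1/c) * (t * exp (-t)) + (-(1/c)) * exp (-t)) atTop (𝓝 0) := by
    have := (Real.tendsto_pow_mul_exp_neg_atTop_nhds_zero 1).const_mul (-(1/c))
    have h2 := (Real.tendsto_exp_neg_atTop_nhds_zero).const_mul (-(1/c))
    simpa using this.add h2
  have h3 : Tendsto (fun x : ℝ => c * x) atTop atTop :=
    Tendsto.const_mul_atTop hc tendsto_id
  have := h1.comp h3
  refine this.congr (fun x => ?_)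
  simp only [Function.comp]
  field_simp
  ring

lemma hasDerivAt_aux (c : ℝ) (hc : 0 < c) (x : ℝ) :
    HasDerivAt (fun x : ℝ => -(x + 1/c) * exp (-(c*x))) (x * (c * exp (-(c*x)))) x := by
  have h1 : HasDerivAt (fun x : ℝ => -(x + 1/c)) (-1) x := by
    exact ((hasDerivAt_id x).add_const (1/c)).neg
  have h2 : HasDerivAt (fun x : ℝ => exp (-(c*x))) (-c * exp (-(c*x))) x := by
    have : HasDerivAt (fun x : ℝ => -(c*x)) (-c) x := by
      exact (((hasDerivAt_id x).const_mul c).neg).congr_deriv (by ring)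
    simpa [mul_comm] using this.exp
  exact (h1.mul h2).congr_deriv (by linear_combination (exp (-(c*x))) * one_div_mul_cancel hc.ne')

lemma integral_exp_Ioi (c a : ℝ) (hc : 0 < c) :
    ∫ x in Ioi a, exp (-(c*x)) = exp (-(c*a)) / c := by
  have hd : ∀ x ∈ Ioi a, HasDerivAt (fun x : ℝ => -exp (-(c*x)) / c) (exp (-(c*x))) x := by
    intro x _
    have : HasDerivAt (fun x : ℝ => -(c*x)) (-c) x := by
      exact (((hasDerivAt_id x).const_mul c).neg).congr_deriv (by ring)
    have := (this.exp.neg).div_const c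
    simpa [mul_comm, mul_div_assoc, hc.ne'] using this
  have hint : IntegrableOn (fun x : ℝ => exp (-(c*x))) (Ioi a) := by
    simpa [neg_mul] using exp_neg_integrableOn_Ioi a hc
  have ht : Tendsto (fun x : ℝ => -exp (-(c*x)) / c) atTop (𝓝 0) := by
    have h3 : Tendsto (fun x : ℝ => c * x) atTop atTop :=
      Tendsto.const_mul_atTop hc tendsto_id
    have := ((Real.tendsto_exp_neg_atTop_nhds_zero).comp h3).neg.div_const c
    simpa [Function.comp] using this
  have := integral_Ioi_of_hasDerivAt_of_tendsto
    (f := fun x : ℝ => -exp (-(c*x)) / c)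
    (Continuous.continuousWithinAt (by continuity)) hd hint ht
  rw [this]; ring

lemma integrableOn_id_exp_Ioi (c a : ℝ) (hc : 0 < c) (ha : 0 ≤ a) :
    IntegrableOn (fun x : ℝ => x * (c * exp (-(c*x)))) (Ioi a) := by
  refine integrableOn_Ioi_deriv_of_nonneg (g := fun x : ℝ => -(x + 1/c) * exp (-(c*x)))
    (Continuous.continuousWithinAt (by continuity)) (fun x _ => hasDerivAt_aux c hc x)
    (fun x hx => by
      have : (0:ℝ) ≤ x := ha.trans hx.le
      positivity) (tendsto_aux c hc)

lemma integral_id_exp_Ioi (c a : ℝ) (hc : 0 < c) (ha : 0 ≤ a) :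
    ∫ x in Ioi a, x * (c * exp (-(c*x))) = (a + 1/c) * exp (-(c*a)) := by
  have := integral_Ioi_of_hasDerivAt_of_nonneg (g := fun x : ℝ => -(x + 1/c) * exp (-(c*x)))
    (Continuous.continuousWithinAt (by continuity)) (fun x _ => hasDerivAt_aux c hc x)
    (fun x hx => by
      have : (0:ℝ) ≤ x := ha.trans hx.le
      positivity) (tendsto_aux c hc)
  rw [this]; ring


lemma exponentialPDFReal_eq' (r x : ℝ) :
    exponentialPDFReal r x = if 0 ≤ x then r * exp (-(r * x)) else 0 := by
  rw [exponentialPDFReal, gammaPDFReal]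
  simp only [rpow_one, Real.Gamma_one, div_one, sub_self, rpow_zero, mul_one]

lemma integral_expMeasure {r : ℝ} (hr : 0 < r) (g : ℝ → ℝ) :
    ∫ x, g x ∂(expMeasure r) = ∫ x in Ioi 0, g x * (r * exp (-(r * x))) := by
  have hmeq : expMeasure r
      = volume.withDensity (fun x => ((exponentialPDFReal r x).toNNReal : ℝ≥0∞)) := rfl
  rw [hmeq, integral_withDensity_eq_integral_smul
    ((measurable_exponentialPDFReal r).real_toNNReal) g]
  rw [← integral_indicator measurableSet_Ioi]
  apply integral_congr_ae
  have h0 : ∀ᵐ x : ℝ, x ≠ 0 := by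
    rw [ae_iff]
    simpa using volume_singleton (a := (0:ℝ))
  filter_upwards [h0] with x hx
  rcases lt_or_gt_of_ne hx with h | h
  · simp [NNReal.smul_def, Real.coe_toNNReal', exponentialPDFReal_eq', not_le.mpr h,
      indicator, h.not_gt]
  · simp [NNReal.smul_def, Real.coe_toNNReal', exponentialPDFReal_eq', h.le, indicator, h,
      max_eq_left (mul_nonneg hr.le (exp_nonneg _)), mul_comm]

lemma expMeasure_Iic {r : ℝ} (hr : 0 < r) {t : ℝ} (ht : 0 ≤ t) :
    expMeasure r (Iic t) = ENNReal.ofReal (1 - exp (-(r * t))) := by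
  have hmeq : expMeasure r = volume.withDensity (exponentialPDF r) := rfl
  rw [hmeq, withDensity_apply _ measurableSet_Iic,
    lintegral_exponentialPDF_eq_antiDeriv hr t, if_pos ht]


lemma log94_lt : Real.log (9/4) < 0.812 := by
  rw [Real.log_lt_iff_lt_exp (by norm_num)]
  have h := Real.sum_le_exp_of_nonneg (x := 0.812) (by norm_num) 6
  have : ∑ i ∈ Finset.range 6, (0.812:ℝ) ^ i / i.factorial > 9/4 := by
    simp [Finset.sum_range_succ, Nat.factorial]
    norm_num
  linarith

lemma key_ineq (p : ℝ) (hp : 0 ≤ p) : p + 1 - exp (-p) ≤ 13/12 * exp (p/2) := by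
  rcases le_or_gt p (3/2) with hple | hpge
  · set L := Real.log 2 with hL
    have e1 : p/2 - L + 1 ≤ exp (p/2 - L) := Real.add_one_le_exp _
    have e2 : (-p + 2*L) + 1 ≤ exp (-p + 2*L) := Real.add_one_le_exp _
    have x1 : exp (p/2 - L) = exp (p/2) / 2 := by
      rw [Real.exp_sub, Real.exp_log two_pos]
    have x2 : exp (-p + 2*L) = exp (-p) * 4 := by
      rw [show -p + 2*L = -p + (L + L) by ring, Real.exp_add, Real.exp_add,
        Real.exp_log two_pos]
      ring
    rw [x1] at e1
    rw [x2] at e2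
    have := Real.log_two_lt_d9
    linarith
  · set c := Real.log (9/4) with hc
    have e1 : p/2 - c + 1 ≤ exp (p/2 - c) := Real.add_one_le_exp _
    have e2 : (-p + 2*c) + 1 ≤ exp (-p + 2*c) := Real.add_one_le_exp _
    have x1 : exp (p/2 - c) = exp (p/2) * (4/9) := by
      rw [Real.exp_sub, Real.exp_log (by norm_num : (0:ℝ) < 9/4)]
      ring
    have x2 : exp (-p + 2*c) = exp (-p) * (81/16) := by
      rw [show -p + 2*c = -p + (c + c) by ring, Real.exp_add, Real.exp_add,
        Real.exp_log (by norm_num : (0:ℝ) < 9/4)]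
      ring
    rw [x1] at e1
    rw [x2] at e2
    have := log94_lt
    linarith

lemma final_ineq (p : ℝ) (hp : 0 ≤ p) :
    (1.12:ℝ) * (1 + (1 - exp (-(1*p))) * ((p + 1/(1/2)) * exp (-(1/2*p)))
      - (1/1 - (p + 1/1) * exp (-(1*p))) * exp (-(1/2*p))) ≤ 7/3 := by
  have hS : exp (-(1/2*p)) * exp (p/2) = 1 := by
    rw [← Real.exp_add]; ring_nf; exact Real.exp_zero
  have h1 : exp (-(1/2*p)) * (p + 1 - exp (-p)) ≤ 13/12 * (exp (-(1/2*p)) * exp (p/2)) := by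
    have := mul_le_mul_of_nonneg_left (key_ineq p hp) (exp_nonneg (-(1/2*p)))
    linarith
  rw [hS] at h1
  have hE : exp (-(1*p)) = exp (-p) := by norm_num
  rw [hE]
  nlinarith [exp_nonneg (-(1/2*p)), exp_nonneg (-p)]

section marg

variable {c p : ℝ} (hc : 0 < c) (hp : 0 ≤ p)

include hc in
lemma integrableOn_cexp (a : ℝ) : IntegrableOn (fun x : ℝ => c * exp (-(c*x))) (Ioi a) := by
  have : IntegrableOn (fun x : ℝ => exp (-(c*x))) (Ioi a) := by
    simpa [neg_mul] using exp_neg_integrableOn_Ioi a hc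
  exact this.const_mul c

include hc in
lemma integral_cexp (a : ℝ) : ∫ x in Ioi a, c * exp (-(c*x)) = exp (-(c*a)) := by
  rw [MeasureTheory.integral_const_mul, integral_exp_Ioi c a hc]
  field_simp

include hp in
lemma hsplit (f : ℝ → ℝ) (hf : IntegrableOn f (Ioi 0)) :
    ∫ x in Ioi (0:ℝ), f x = (∫ x in Ioc 0 p, f x) + ∫ x in Ioi p, f x := by
  rw [← Ioc_union_Ioi_eq_Ioi hp]
  exact setIntegral_union (Ioc_disjoint_Ioi le_rfl) measurableSet_Ioi
    (hf.mono_set Ioc_subset_Ioi_self) (hf.mono_set (Ioi_subset_Ioi hp))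

include hc hp in
lemma marg_F : ∫ x in Ioi (0:ℝ), (if x ≤ p then (1:ℝ) else 0) * (c * exp (-(c*x)))
    = 1 - exp (-(c*p)) := by
  have hint : IntegrableOn (fun x : ℝ => (if x ≤ p then (1:ℝ) else 0) * (c * exp (-(c*x)))) (Ioi 0) := by
    refine (integrableOn_cexp hc 0).mono' ?_ ?_
    · exact ((Measurable.ite measurableSet_Iic measurable_const measurable_const).mul
        (by fun_prop)).aestronglyMeasurable
    · filter_upwards with x
      rw [norm_mul]
      have : ‖if x ≤ p then (1:ℝ) else 0‖ ≤ 1 := by split_ifs <;> simp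
      calc ‖if x ≤ p then (1:ℝ) else 0‖ * ‖c * exp (-(c*x))‖
          ≤ 1 * ‖c * exp (-(c*x))‖ := by gcongr
        _ = c * exp (-(c*x)) := by
            rw [one_mul, norm_mul, Real.norm_eq_abs, Real.norm_eq_abs,
              abs_of_nonneg hc.le, abs_of_nonneg (exp_nonneg _)]
  rw [hsplit hp _ hint]
  have h1 : ∫ x in Ioc (0:ℝ) p, (if x ≤ p then (1:ℝ) else 0) * (c * exp (-(c*x)))
      = ∫ x in Ioc (0:ℝ) p, c * exp (-(c*x)) :=
    setIntegral_congr_fun measurableSet_Ioc (fun x hx => by rw [if_pos hx.2, one_mul])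
  have h2 : ∫ x in Ioi p, (if x ≤ p then (1:ℝ) else 0) * (c * exp (-(c*x))) = 0 := by
    rw [setIntegral_congr_fun measurableSet_Ioi
      (fun x (hx : p < x) => by rw [if_neg (not_le.mpr hx), zero_mul]), integral_zero]
  have h3 := hsplit hp _ (integrableOn_cexp hc 0)
  rw [integral_cexp hc 0, integral_cexp hc p] at h3
  rw [h1, h2, add_zero]
  simp only [mul_zero, neg_zero, Real.exp_zero] at h3
  linarith

include hc hp in
lemma marg_H : ∫ x in Ioi (0:ℝ), (if x ≤ p then x else 0) * (c * exp (-(c*x)))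
    = 1/c - (p + 1/c) * exp (-(c*p)) := by
  have hint : IntegrableOn (fun x : ℝ => (if x ≤ p then x else 0) * (c * exp (-(c*x)))) (Ioi 0) := by
    refine (integrableOn_id_exp_Ioi c 0 hc le_rfl).mono' ?_ ?_
    · exact ((Measurable.ite measurableSet_Iic measurable_id measurable_const).mul
        (by fun_prop)).aestronglyMeasurable
    · rw [ae_restrict_iff' measurableSet_Ioi]
      filter_upwards with x hx
      have hx0 : (0:ℝ) ≤ x := le_of_lt hx
      rw [norm_mul, Real.norm_eq_abs, Real.norm_eq_abs,
        abs_of_nonneg (mul_nonneg hc.le (exp_nonneg _))]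
      have : |if x ≤ p then x else 0| ≤ x := by split_ifs <;> simp [abs_of_nonneg, hx0]
      exact mul_le_mul_of_nonneg_right this (mul_nonneg hc.le (exp_nonneg _))
  rw [hsplit hp _ hint]
  have h1 : ∫ x in Ioc (0:ℝ) p, (if x ≤ p then x else 0) * (c * exp (-(c*x)))
      = ∫ x in Ioc (0:ℝ) p, x * (c * exp (-(c*x))) :=
    setIntegral_congr_fun measurableSet_Ioc (fun x hx => by rw [if_pos hx.2])
  have h2 : ∫ x in Ioi p, (if x ≤ p then x else 0) * (c * exp (-(c*x))) = 0 := by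
    rw [setIntegral_congr_fun measurableSet_Ioi
      (fun x (hx : p < x) => by rw [if_neg (not_le.mpr hx), zero_mul]), integral_zero]
  have h3 := hsplit hp _ (integrableOn_id_exp_Ioi c 0 hc le_rfl)
  rw [integral_id_exp_Ioi c 0 hc le_rfl, integral_id_exp_Ioi c p hc hp] at h3
  rw [h1, h2, add_zero]
  simp only [mul_zero, neg_zero, Real.exp_zero, zero_add, mul_one] at h3
  linarith

include hc hp in
lemma marg_K : ∫ x in Ioi (0:ℝ), (if p ≤ x then (1:ℝ) else 0) * (c * exp (-(c*x)))
    = exp (-(c*p)) := by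
  have hae : ∀ᵐ x : ℝ ∂(volume.restrict (Ioi 0)), x ≠ p := by
    refine ae_restrict_of_ae ?_
    rw [ae_iff]
    simpa using volume_singleton (a := p)
  have h2 : ∫ x in Ioi (0:ℝ), (if p ≤ x then (1:ℝ) else 0) * (c * exp (-(c*x)))
      = ∫ x in Ioi (0:ℝ), (if x ≤ p then (0:ℝ) else 1) * (c * exp (-(c*x))) := by
    refine integral_congr_ae ?_
    filter_upwards [hae] with x hx
    rcases lt_or_gt_of_ne hx with h | h
    · simp [not_le.mpr h, h.le]
    · simp [not_le.mpr h, h.le]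
  rw [h2]
  have hint : IntegrableOn (fun x : ℝ => (if x ≤ p then (0:ℝ) else 1) * (c * exp (-(c*x)))) (Ioi 0) := by
    refine (integrableOn_cexp hc 0).mono' ?_ ?_
    · exact ((Measurable.ite measurableSet_Iic measurable_const measurable_const).mul
        (by fun_prop)).aestronglyMeasurable
    · filter_upwards with x
      rw [norm_mul]
      have : ‖if x ≤ p then (0:ℝ) else 1‖ ≤ 1 := by split_ifs <;> simp
      calc ‖if x ≤ p then (0:ℝ) else 1‖ * ‖c * exp (-(c*x))‖
          ≤ 1 * ‖c * exp (-(c*x))‖ := by gcongr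
        _ = c * exp (-(c*x)) := by
            rw [one_mul, norm_mul, Real.norm_eq_abs, Real.norm_eq_abs,
              abs_of_nonneg hc.le, abs_of_nonneg (exp_nonneg _)]
  rw [hsplit hp _ hint]
  have h1 : ∫ x in Ioc (0:ℝ) p, (if x ≤ p then (0:ℝ) else 1) * (c * exp (-(c*x))) = 0 := by
    rw [setIntegral_congr_fun measurableSet_Ioc
      (fun x hx => by rw [if_pos hx.2, zero_mul]), integral_zero]
  have h3 : ∫ x in Ioi p, (if x ≤ p then (0:ℝ) else 1) * (c * exp (-(c*x)))
      = ∫ x in Ioi p, c * exp (-(c*x)) :=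
    setIntegral_congr_fun measurableSet_Ioi
      (fun x (hx : p < x) => by rw [if_neg (not_le.mpr hx), one_mul])
  rw [h1, h3, zero_add, integral_cexp hc p]

include hc hp in
lemma marg_G : ∫ x in Ioi (0:ℝ), (if p ≤ x then x else 0) * (c * exp (-(c*x)))
    = (p + 1/c) * exp (-(c*p)) := by
  have hae : ∀ᵐ x : ℝ ∂(volume.restrict (Ioi 0)), x ≠ p := by
    refine ae_restrict_of_ae ?_
    rw [ae_iff]
    simpa using volume_singleton (a := p)
  have h2 : ∫ x in Ioi (0:ℝ), (if p ≤ x then x else 0) * (c * exp (-(c*x)))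
      = ∫ x in Ioi (0:ℝ), (if x ≤ p then (0:ℝ) else x) * (c * exp (-(c*x))) := by
    refine integral_congr_ae ?_
    filter_upwards [hae] with x hx
    rcases lt_or_gt_of_ne hx with h | h
    · simp [not_le.mpr h, h.le]
    · simp [not_le.mpr h, h.le]
  rw [h2]
  have hint : IntegrableOn (fun x : ℝ => (if x ≤ p then (0:ℝ) else x) * (c * exp (-(c*x)))) (Ioi 0) := by
    refine (integrableOn_id_exp_Ioi c 0 hc le_rfl).mono' ?_ ?_
    · exact ((Measurable.ite measurableSet_Iic measurable_const measurable_id).mul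
        (by fun_prop)).aestronglyMeasurable
    · rw [ae_restrict_iff' measurableSet_Ioi]
      filter_upwards with x hx
      have hx0 : (0:ℝ) ≤ x := le_of_lt hx
      rw [norm_mul, Real.norm_eq_abs, Real.norm_eq_abs,
        abs_of_nonneg (mul_nonneg hc.le (exp_nonneg _))]
      have : |if x ≤ p then (0:ℝ) else x| ≤ x := by split_ifs <;> simp [abs_of_nonneg, hx0]
      exact mul_le_mul_of_nonneg_right this (mul_nonneg hc.le (exp_nonneg _))
  rw [hsplit hp _ hint]
  have h1 : ∫ x in Ioc (0:ℝ) p, (if x ≤ p then (0:ℝ) else x) * (c * exp (-(c*x))) = 0 := by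
    rw [setIntegral_congr_fun measurableSet_Ioc
      (fun x hx => by rw [if_pos hx.2, zero_mul]), integral_zero]
  have h3 : ∫ x in Ioi p, (if x ≤ p then (0:ℝ) else x) * (c * exp (-(c*x)))
      = ∫ x in Ioi p, x * (c * exp (-(c*x))) :=
    setIntegral_congr_fun measurableSet_Ioi
      (fun x (hx : p < x) => by rw [if_neg (not_le.mpr hx)])
  rw [h1, h3, zero_add, integral_id_exp_Ioi c p hc hp]

end marg
/-- With the seller's value exponentially distributed with rate `1` and the buyer's
value exponentially distributed with rate `1/2` (independent), the optimal expected
welfare is `7/3` and no fixed-price mechanism achieves an approximation ratio better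
than `1.12`. -/
theorem exponential_instance_lower_bound
    {Ω : Type*} [MeasurableSpace Ω] (μ : Measure Ω) [IsProbabilityMeasure μ]
    (vs vb : Ω → ℝ)
    (hmeas_s : Measurable vs) (hmeas_b : Measurable vb)
    (hindep : IndepFun vs vb μ)
    (hs_nonneg : ∀ ω, 0 ≤ vs ω) (hb_nonneg : ∀ ω, 0 ≤ vb ω)
    (hs_int : Integrable vs μ) (hb_int : Integrable vb μ)
    (hs_dist : μ.map vs = expMeasure 1)
    (hb_dist : μ.map vb = expMeasure (1 / 2)) :
    (∫ ω, max (vs ω) (vb ω) ∂μ = 7 / 3) ∧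
      ∀ p : ℝ,
        (1.12 : ℝ) * ∫ ω, (if vs ω ≤ p ∧ p ≤ vb ω then vb ω else vs ω) ∂μ
          ≤ ∫ ω, max (vs ω) (vb ω) ∂μ := by
  have h2pos : (0:ℝ) < 1/2 := by norm_num
  -- transfer lemmas
  have hvs : ∀ g : ℝ → ℝ, Measurable g →
      ∫ ω, g (vs ω) ∂μ = ∫ x in Ioi (0:ℝ), g x * (1 * exp (-(1 * x))) := by
    intro g hg
    rw [← integral_map hmeas_s.aemeasurable hg.aestronglyMeasurable, hs_dist,
      integral_expMeasure one_pos]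
  have hvb : ∀ g : ℝ → ℝ, Measurable g →
      ∫ ω, g (vb ω) ∂μ = ∫ x in Ioi (0:ℝ), g x * (1/2 * exp (-(1/2 * x))) := by
    intro g hg
    rw [← integral_map hmeas_b.aemeasurable hg.aestronglyMeasurable, hb_dist,
      integral_expMeasure h2pos]
  -- mean of vs
  have Evs : ∫ ω, vs ω ∂μ = 1 := by
    have := hvs (fun x => x) measurable_id
    rw [this, integral_id_exp_Ioi 1 0 one_pos le_rfl]
    norm_num
  -- Part 1 : expected max
  have hmax_int : Integrable (fun ω => max (vs ω) (vb ω)) μ := by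
    refine (hs_int.add hb_int).mono' (hmeas_s.max hmeas_b).aestronglyMeasurable ?_
    filter_upwards with ω
    rw [Real.norm_eq_abs, abs_of_nonneg (le_max_of_le_left (hs_nonneg ω))]
    exact max_le (le_add_of_nonneg_right (hb_nonneg ω)) (le_add_of_nonneg_left (hs_nonneg ω))
  have hmax : ∫ ω, max (vs ω) (vb ω) ∂μ = 7/3 := by
    rw [hmax_int.integral_eq_integral_meas_lt
      (ae_of_all _ fun ω => le_max_of_le_left (hs_nonneg ω))]
    have hcong : ∀ t ∈ Ioi (0:ℝ), ENNReal.toReal (μ {a | t < max (vs a) (vb a)})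
        = exp (-(1*t)) + exp (-(1/2*t)) - exp (-(3/2*t)) := by
      intro t ht
      have ht0 : (0:ℝ) ≤ t := le_of_lt ht
      have hset : {a | t < max (vs a) (vb a)} = (vs ⁻¹' (Iic t) ∩ vb ⁻¹' (Iic t))ᶜ := by
        ext a
        simp only [mem_setOf_eq, lt_max_iff, mem_compl_iff, mem_inter_iff, mem_preimage,
          mem_Iic, not_and_or, not_le]
      rw [hset, measure_compl ((hmeas_s measurableSet_Iic).inter (hmeas_b measurableSet_Iic))
        (measure_ne_top μ _), measure_univ,
        hindep.measure_inter_preimage_eq_mul _ _ measurableSet_Iic measurableSet_Iic,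
        ← Measure.map_apply hmeas_s measurableSet_Iic,
        ← Measure.map_apply hmeas_b measurableSet_Iic, hs_dist, hb_dist,
        expMeasure_Iic one_pos ht0, expMeasure_Iic h2pos ht0]
      have hA : (0:ℝ) ≤ 1 - exp (-(1*t)) := by
        have : exp (-(1*t)) ≤ 1 := Real.exp_le_one_iff.mpr (by linarith)
        linarith
      have hB : (0:ℝ) ≤ 1 - exp (-(1/2*t)) := by
        have : exp (-(1/2*t)) ≤ 1 := Real.exp_le_one_iff.mpr (by linarith)
        linarith
      have hA1 : (1:ℝ) - exp (-(1*t)) ≤ 1 := by nlinarith [exp_nonneg (-(1*t))]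
      have hB1 : (1:ℝ) - exp (-(1/2*t)) ≤ 1 := by nlinarith [exp_nonneg (-(1/2*t))]
      rw [← ENNReal.ofReal_mul hA]
      have hle : ENNReal.ofReal ((1 - exp (-(1*t))) * (1 - exp (-(1/2*t)))) ≤ 1 :=
        ENNReal.ofReal_le_one.mpr (by nlinarith)
      rw [ENNReal.toReal_sub_of_le hle ENNReal.one_ne_top, ENNReal.toReal_one,
        ENNReal.toReal_ofReal (mul_nonneg hA hB)]
      have hprod : exp (-(1*t)) * exp (-(1/2*t)) = exp (-(3/2*t)) := by
        rw [← Real.exp_add]; congr 1; ring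
      rw [← hprod]; ring
    rw [setIntegral_congr_fun measurableSet_Ioi (fun t ht => (measureReal_def μ _).trans (hcong t ht))]
    have hI : ∀ c : ℝ, 0 < c → IntegrableOn (fun t : ℝ => exp (-(c*t))) (Ioi 0) := by
      intro c hc
      simpa [neg_mul] using exp_neg_integrableOn_Ioi (0:ℝ) hc
    have hadd : Integrable (fun t : ℝ => exp (-(1*t)) + exp (-(1/2*t)))
        (volume.restrict (Ioi 0)) := (hI 1 one_pos).add (hI (1/2) h2pos)
    have step1 : ∫ t in Ioi (0:ℝ), (exp (-(1*t)) + exp (-(1/2*t)) - exp (-(3/2*t)))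
        = (∫ t in Ioi (0:ℝ), (exp (-(1*t)) + exp (-(1/2*t))))
          - ∫ t in Ioi (0:ℝ), exp (-(3/2*t)) :=
      integral_sub hadd (hI (3/2) (by norm_num))
    have step2 : ∫ t in Ioi (0:ℝ), (exp (-(1*t)) + exp (-(1/2*t)))
        = (∫ t in Ioi (0:ℝ), exp (-(1*t))) + ∫ t in Ioi (0:ℝ), exp (-(1/2*t)) :=
      integral_add (hI 1 one_pos) (hI (1/2) h2pos)
    rw [step1, step2, integral_exp_Ioi 1 0 one_pos, integral_exp_Ioi (1/2) 0 h2pos,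
      integral_exp_Ioi (3/2) 0 (by norm_num)]
    norm_num
  refine ⟨hmax, fun p => ?_⟩
  rw [hmax]
  rcases le_or_gt 0 p with hp0 | hp0
  · -- p ≥ 0
    -- component functions
    have hmF : Measurable fun x : ℝ => if x ≤ p then (1:ℝ) else 0 :=
      Measurable.ite measurableSet_Iic measurable_const measurable_const
    have hmG : Measurable fun x : ℝ => if p ≤ x then x else 0 :=
      Measurable.ite measurableSet_Ici measurable_id measurable_const
    have hmH : Measurable fun x : ℝ => if x ≤ p then x else 0 :=
      Measurable.ite measurableSet_Iic measurable_id measurable_const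
    have hmK : Measurable fun x : ℝ => if p ≤ x then (1:ℝ) else 0 :=
      Measurable.ite measurableSet_Ici measurable_const measurable_const
    have intF : Integrable (fun ω => if vs ω ≤ p then (1:ℝ) else 0) μ := by
      refine (integrable_const (1:ℝ)).mono' (hmF.comp hmeas_s).aestronglyMeasurable ?_
      filter_upwards with ω
      split_ifs <;> simp
    have intK : Integrable (fun ω => if p ≤ vb ω then (1:ℝ) else 0) μ := by
      refine (integrable_const (1:ℝ)).mono' (hmK.comp hmeas_b).aestronglyMeasurable ?_
      filter_upwards with ω
      split_ifs <;> simp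
    have intG : Integrable (fun ω => if p ≤ vb ω then vb ω else 0) μ := by
      refine hb_int.abs.mono' (hmG.comp hmeas_b).aestronglyMeasurable ?_
      filter_upwards with ω
      rw [Real.norm_eq_abs]
      split_ifs <;> simp [abs_nonneg]
    have intH : Integrable (fun ω => if vs ω ≤ p then vs ω else 0) μ := by
      refine hs_int.abs.mono' (hmH.comp hmeas_s).aestronglyMeasurable ?_
      filter_upwards with ω
      rw [Real.norm_eq_abs]
      split_ifs <;> simp [abs_nonneg]
    have hiFG : IndepFun (fun ω => if vs ω ≤ p then (1:ℝ) else 0)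
        (fun ω => if p ≤ vb ω then vb ω else 0) μ := hindep.comp hmF hmG
    have hiHK : IndepFun (fun ω => if vs ω ≤ p then vs ω else 0)
        (fun ω => if p ≤ vb ω then (1:ℝ) else 0) μ := hindep.comp hmH hmK
    have intFG : Integrable (fun ω => (if vs ω ≤ p then (1:ℝ) else 0)
        * (if p ≤ vb ω then vb ω else 0)) μ := hiFG.integrable_mul intF intG
    have intHK : Integrable (fun ω => (if vs ω ≤ p then vs ω else 0)
        * (if p ≤ vb ω then (1:ℝ) else 0)) μ := hiHK.integrable_mul intH intK
    have hW : ∀ ω, (if vs ω ≤ p ∧ p ≤ vb ω then vb ω else vs ω)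
        = vs ω + (if vs ω ≤ p then (1:ℝ) else 0) * (if p ≤ vb ω then vb ω else 0)
          - (if vs ω ≤ p then vs ω else 0) * (if p ≤ vb ω then (1:ℝ) else 0) := by
      intro ω
      by_cases h1 : vs ω ≤ p <;> by_cases h2 : p ≤ vb ω <;> simp [h1, h2]
    have hWint : ∫ ω, (if vs ω ≤ p ∧ p ≤ vb ω then vb ω else vs ω) ∂μ
        = 1 + (1 - exp (-(1*p))) * ((p + 1/(1/2)) * exp (-(1/2*p)))
          - (1/1 - (p + 1/1) * exp (-(1*p))) * exp (-(1/2*p)) := by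
      have step1 : ∫ ω, (vs ω + (if vs ω ≤ p then (1:ℝ) else 0) * (if p ≤ vb ω then vb ω else 0)
            - (if vs ω ≤ p then vs ω else 0) * (if p ≤ vb ω then (1:ℝ) else 0)) ∂μ
          = (∫ ω, (vs ω + (if vs ω ≤ p then (1:ℝ) else 0)
              * (if p ≤ vb ω then vb ω else 0)) ∂μ)
            - ∫ ω, (if vs ω ≤ p then vs ω else 0) * (if p ≤ vb ω then (1:ℝ) else 0) ∂μ :=
        integral_sub (hs_int.add intFG) intHK
      have step2 : ∫ ω, (vs ω + (if vs ω ≤ p then (1:ℝ) else 0)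
            * (if p ≤ vb ω then vb ω else 0)) ∂μ
          = (∫ ω, vs ω ∂μ) + ∫ ω, (if vs ω ≤ p then (1:ℝ) else 0)
              * (if p ≤ vb ω then vb ω else 0) ∂μ :=
        integral_add hs_int intFG
      have hfg : ∫ ω, (if vs ω ≤ p then (1:ℝ) else 0) * (if p ≤ vb ω then vb ω else 0) ∂μ
          = (∫ ω, (if vs ω ≤ p then (1:ℝ) else 0) ∂μ)
            * ∫ ω, (if p ≤ vb ω then vb ω else 0) ∂μ :=
        hiFG.integral_mul_eq_mul_integral intF.1 intG.1
      have hhk : ∫ ω, (if vs ω ≤ p then vs ω else 0) * (if p ≤ vb ω then (1:ℝ) else 0) ∂μ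
          = (∫ ω, (if vs ω ≤ p then vs ω else 0) ∂μ)
            * ∫ ω, (if p ≤ vb ω then (1:ℝ) else 0) ∂μ :=
        hiHK.integral_mul_eq_mul_integral intH.1 intK.1
      rw [integral_congr_ae (ae_of_all _ hW), step1, step2, Evs, hfg, hhk]
      have e1 : ∫ ω, (if vs ω ≤ p then (1:ℝ) else 0) ∂μ = 1 - exp (-(1*p)) := by
        rw [hvs _ hmF, marg_F one_pos hp0]
      have e2 : ∫ ω, (if p ≤ vb ω then vb ω else 0) ∂μ
          = (p + 1/(1/2)) * exp (-(1/2*p)) := by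
        rw [hvb _ hmG, marg_G h2pos hp0]
      have e3 : ∫ ω, (if vs ω ≤ p then vs ω else 0) ∂μ
          = 1/1 - (p + 1/1) * exp (-(1*p)) := by
        rw [hvs _ hmH, marg_H one_pos hp0]
      have e4 : ∫ ω, (if p ≤ vb ω then (1:ℝ) else 0) ∂μ = exp (-(1/2*p)) := by
        rw [hvb _ hmK, marg_K h2pos hp0]
      rw [e1, e2, e3, e4]
    rw [hWint]
    exact final_ineq p hp0
  · -- p < 0 : no trade ever
    have hW : ∀ ω, (if vs ω ≤ p ∧ p ≤ vb ω then vb ω else vs ω) = vs ω := by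
      intro ω
      rw [if_neg]
      rintro ⟨h1, -⟩
      exact absurd (le_trans (hs_nonneg ω) h1) (not_le.mpr hp0)
    rw [integral_congr_ae (ae_of_all _ hW), Evs]
    norm_num
end

section
/- (Revenue of the global-reserve affine maximizer) Let A* be an allocation maximizing the adjusted welfare W_r over all allocations, and let n* = n_{A*} ≥ 1. For each bidder i with A*_i ≠ ∅ define the VCG payment p_i = max{ Σ_{j≠i} v_j(A'_j) − H_{n_{A'}}·r : A' an allocation with A'_i = ∅ } − ( Σ_{j≠i} v_j(A*_j) − H_{n*}·r ). Then p_i ≥ r / n* for every bidder i with A*_i ≠ ∅, and consequently the total revenue satisfies Σ_{i : A*_i ≠ ∅} p_i ≥ r. -/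
open Finset

/-- An allocation assigns pairwise disjoint bundles of items to the bidders. -/
def IsAlloc {ι α : Type*} (A : ι → Finset α) : Prop :=
  Pairwise fun i j => Disjoint (A i) (A j)

/-- `numNonempty A` is the number of bidders receiving a nonempty bundle in `A`. -/
def numNonempty {ι α : Type*} [Fintype ι] [DecidableEq α] (A : ι → Finset α) : ℕ :=
  (Finset.univ.filter fun i => A i ≠ ∅).card

/-- The `k`-th harmonic number `H_k = ∑_{j=1}^k 1/j`, as a real number. -/
noncomputable def harmonicR (k : ℕ) : ℝ :=
  ∑ j ∈ Finset.range k, (1 : ℝ) / (j + 1)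

/-- The welfare of an allocation `A`, adjusted by the global reserve `r`:
`W_r(A) = ∑ᵢ vᵢ(Aᵢ) - H_{n_A}·r`. -/
noncomputable def adjWelfare {ι α : Type*} [Fintype ι] [DecidableEq α]
    (v : ι → Finset α → ℝ) (r : ℝ) (A : ι → Finset α) : ℝ :=
  (∑ i, v i (A i)) - harmonicR (numNonempty A) * r

/-- Revenue of the global-reserve affine maximizer: if `Astar` maximizes the adjusted
welfare `W_r` over all allocations and allocates a nonempty bundle to at least one
bidder, then the VCG payment of every bidder receiving a nonempty bundle is at least
`r / n*` (where `n* = n_{Astar}`), and hence the total revenue is at least `r`. -/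
theorem global_reserve_revenue
    {ι α : Type*} [Fintype ι] [DecidableEq ι] [Fintype α] [DecidableEq α]
    (v : ι → Finset α → ℝ)
    (hv0 : ∀ i, v i ∅ = 0)
    (hmono : ∀ i, ∀ S T : Finset α, S ⊆ T → v i S ≤ v i T)
    (r : ℝ) (hr : 0 ≤ r)
    (Astar : ι → Finset α) (hAstar : IsAlloc Astar)
    (hopt : ∀ A : ι → Finset α, IsAlloc A → adjWelfare v r A ≤ adjWelfare v r Astar)
    (hnonempty : 1 ≤ numNonempty Astar)
    (p : ι → ℝ)
    (hp : ∀ i, Astar i ≠ ∅ →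
      IsGreatest
        {w : ℝ | ∃ A : ι → Finset α, IsAlloc A ∧ A i = ∅ ∧
          w = (∑ j ∈ Finset.univ.erase i, v j (A j)) - harmonicR (numNonempty A) * r}
        (p i + ((∑ j ∈ Finset.univ.erase i, v j (Astar j))
          - harmonicR (numNonempty Astar) * r))) :
    (∀ i, Astar i ≠ ∅ → r / (numNonempty Astar : ℝ) ≤ p i) ∧
      r ≤ ∑ i ∈ Finset.univ.filter (fun i => Astar i ≠ ∅), p i := by

  have key : ∀ i, Astar i ≠ ∅ → r / (numNonempty Astar : ℝ) ≤ p i := by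
    intro i hi
    set A' : ι → Finset α := fun j => if j = i then ∅ else Astar j with hA'
    have hAlloc : IsAlloc A' := by
      intro a b hab
      simp only [hA']
      split_ifs with h1 h2
      · simp
      · simp
      · simp
      · exact hAstar hab
    have hmem : ((∑ j ∈ Finset.univ.erase i, v j (A' j))
        - harmonicR (numNonempty A') * r) ∈
        {w : ℝ | ∃ A : ι → Finset α, IsAlloc A ∧ A i = ∅ ∧
          w = (∑ j ∈ Finset.univ.erase i, v j (A j)) - harmonicR (numNonempty A) * r} := by
      exact ⟨A', hAlloc, by simp [hA'], rfl⟩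
    have hub := (hp i hi).2 hmem
    have hsum : (∑ j ∈ Finset.univ.erase i, v j (A' j))
        = ∑ j ∈ Finset.univ.erase i, v j (Astar j) := by
      apply Finset.sum_congr rfl
      intro j hj
      have : j ≠ i := (Finset.mem_erase.mp hj).1
      simp [hA', this]
    have hi' : i ∈ Finset.univ.filter (fun j => Astar j ≠ ∅) := by
      simp [hi]
    have hcard : numNonempty A' = numNonempty Astar - 1 := by
      unfold numNonempty
      have hfilter : (Finset.univ.filter fun j => A' j ≠ ∅)
          = (Finset.univ.filter fun j => Astar j ≠ ∅).erase i := by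
        ext j
        simp only [Finset.mem_filter, Finset.mem_erase, Finset.mem_univ, true_and, hA']
        by_cases h : j = i <;> simp [h, hi]
      rw [hfilter, Finset.card_erase_of_mem hi']
    have hstep : harmonicR (numNonempty Astar)
        = harmonicR (numNonempty Astar - 1) + 1 / (numNonempty Astar : ℝ) := by
      have hk : numNonempty Astar = (numNonempty Astar - 1) + 1 := by omega
      rw [hk]
      unfold harmonicR
      rw [Finset.sum_range_succ]
      push_cast
      rfl
    rw [hsum, hcard] at hub
    have : (1 / (numNonempty Astar : ℝ)) * r ≤ p i := by nlinarith [hub, hstep]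
    calc r / (numNonempty Astar : ℝ) = (1 / (numNonempty Astar : ℝ)) * r := by ring
      _ ≤ p i := this
  refine ⟨key, ?_⟩
  have hn0 : (0 : ℝ) < (numNonempty Astar : ℝ) := by
    exact_mod_cast Nat.lt_of_lt_of_le Nat.zero_lt_one hnonempty
  calc r = (numNonempty Astar : ℝ) * (r / (numNonempty Astar : ℝ)) := by
        field_simp
    _ = ∑ i ∈ Finset.univ.filter (fun i => Astar i ≠ ∅), r / (numNonempty Astar : ℝ) := by
        rw [Finset.sum_const, nsmul_eq_mul]; rfl
    _ ≤ ∑ i ∈ Finset.univ.filter (fun i => Astar i ≠ ∅), p i := by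
        apply Finset.sum_le_sum
        intro i hi
        exact key i (Finset.mem_filter.mp hi).2
end
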